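/- arXiv:2301.10805 — 2 statements merged into one kernel-verified Lean document; each statement's English description precedes it below -/
import Mathlib

section
/- A connected chordal graph G is a k-tree if and only if every maximal clique of G has cardinality k+1 and every minimal vertex separator of G has cardinality k. -/
open Finset

noncomputable section

namespace Paper

variable {V W : Type}

/-- `Q` is a maximal clique of `G`. -/
def IsMaxClique (G : SimpleGraph V) (Q : Finset V) : Prop :=
  G.IsClique (Q : Set V) ∧ ∀ R : Finset V, G.IsClique (R : Set V) → Q ⊆ R → Q = R

/-- `G` is chordal: every cycle of length at least 4 has a chord, i.e. an edge of `G`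
joining two vertices of the cycle which is not an edge of the cycle. -/
def IsChordal (G : SimpleGraph V) : Prop :=
  ∀ (v : V) (w : G.Walk v v), w.IsCycle → 4 ≤ w.length →
    ∃ a b, a ∈ w.support ∧ b ∈ w.support ∧ G.Adj a b ∧ s(a, b) ∉ w.edges

/-- `S` is a `uv`-separator: `u, v` are distinct non-adjacent vertices outside `S`, and every
walk from `u` to `v` meets `S`. -/
def IsUVSeparator (G : SimpleGraph V) (u v : V) (S : Finset V) : Prop :=
  u ≠ v ∧ ¬ G.Adj u v ∧ u ∉ S ∧ v ∉ S ∧ ∀ p : G.Walk u v, ∃ x ∈ p.support, x ∈ S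

/-- `S` is a minimal vertex separator of `G`: a minimal `uv`-separator for some pair `u,v`. -/
def IsMinSep (G : SimpleGraph V) (S : Finset V) : Prop :=
  ∃ u v, IsUVSeparator G u v S ∧ ∀ T ⊆ S, IsUVSeparator G u v T → T = S

variable [DecidableEq V]

/-- Distinct maximal cliques `Q, Q'` form a separating pair: `Q ∩ Q' ≠ ∅` and every path from
`Q \ Q'` to `Q' \ Q` meets `Q ∩ Q'`. -/
def SeparatingPair (G : SimpleGraph V) (Q Q' : Finset V) : Prop :=
  IsMaxClique G Q ∧ IsMaxClique G Q' ∧ Q ≠ Q' ∧ (Q ∩ Q').Nonempty ∧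
    ∀ u ∈ Q \ Q', ∀ v ∈ Q' \ Q, ∀ p : G.Walk u v, ∃ x ∈ p.support, x ∈ Q ∩ Q'

/-- The reduced clique graph: vertices are maximal cliques, adjacent iff they form a
separating pair. -/
def reducedCliqueGraph (G : SimpleGraph V) :
    SimpleGraph {Q : Finset V // IsMaxClique G Q} :=
  SimpleGraph.fromRel (fun Q Q' => SeparatingPair G Q.1 Q'.1)

/-- The clique-intersection graph: vertices are maximal cliques, adjacent iff they intersect. -/
def cliqueIntersectionGraph (G : SimpleGraph V) :
    SimpleGraph {Q : Finset V // IsMaxClique G Q} :=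
  SimpleGraph.fromRel (fun Q Q' => (Q.1 ∩ Q'.1).Nonempty)

/-- The `j`-line graph of `G`: vertices are the `j`-cliques of `G`, two adjacent iff they share
`j - 1` vertices. -/
def kLineGraph (j : ℕ) (G : SimpleGraph V) :
    SimpleGraph {s : Finset V // G.IsNClique j s} :=
  SimpleGraph.fromRel (fun s t => (s.1 ∩ t.1).card = j - 1)

/-- `G` is a `k`-tree: there is a construction ordering of all the vertices in which the first
`k+1` vertices form a clique and every later vertex is adjacent (among earlier vertices)
exactly to the vertices of a `k`-clique. -/
def IsKTree [Fintype V] (k : ℕ) (G : SimpleGraph V) : Prop :=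
  ∃ (n : ℕ) (σ : Fin n ≃ V), k + 1 ≤ n ∧
    (∀ i j : Fin n, (i : ℕ) < j → (j : ℕ) < k + 1 → G.Adj (σ i) (σ j)) ∧
    (∀ j : Fin n, k + 1 ≤ (j : ℕ) →
      ∃ s : Finset V, G.IsNClique k s ∧
        ∀ v : V, v ∈ s ↔ ∃ i : Fin n, (i : ℕ) < j ∧ v = σ i ∧ G.Adj (σ j) v)

/-- `T` is a spanning tree of `H`. -/
def IsSpanningTree (H T : SimpleGraph W) : Prop := T ≤ H ∧ T.IsTree

/-- The number of spanning trees of `H`. -/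
def numSpanningTrees (H : SimpleGraph W) : ℕ :=
  Nat.card {T : SimpleGraph W // T ≤ H ∧ T.IsTree}

/-- The intersection of the two endpoints of an edge of a graph on maximal cliques. -/
def interFinset (G : SimpleGraph V) (e : Sym2 {Q : Finset V // IsMaxClique G Q}) : Finset V :=
  Sym2.lift ⟨fun Q Q' => Q.1 ∩ Q'.1, fun _ _ => Finset.inter_comm _ _⟩ e

/-- The weight of a tree on the maximal cliques of `G`: the sum over its edges of the
cardinalities of the intersections of the endpoints. -/
def treeWeight (G : SimpleGraph V) (T : SimpleGraph {Q : Finset V // IsMaxClique G Q}) : ℕ :=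
  ∑ᶠ e ∈ T.edgeSet, (interFinset G e).card

/-- `T` is a clique tree of `G`: a maximum-weight spanning tree of the clique-intersection
graph of `G`. -/
def IsCliqueTree (G : SimpleGraph V) (T : SimpleGraph {Q : Finset V // IsMaxClique G Q}) : Prop :=
  T ≤ cliqueIntersectionGraph G ∧ T.IsTree ∧
    ∀ T', T' ≤ cliqueIntersectionGraph G → T'.IsTree → treeWeight G T' ≤ treeWeight G T

/-- The multiplicity of `S` relative to a clique tree `T`: the number of edges of `T` whose
endpoint cliques intersect exactly in `S`. -/
def mult (G : SimpleGraph V) (T : SimpleGraph {Q : Finset V // IsMaxClique G Q})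
    (S : Finset V) : ℕ :=
  Nat.card {e : Sym2 {Q : Finset V // IsMaxClique G Q} // e ∈ T.edgeSet ∧ interFinset G e = S}

/-- `B` is a block of `G`: a maximal set of vertices inducing a connected subgraph with no
cut vertex. -/
def IsBlock (G : SimpleGraph V) (B : Set V) : Prop :=
  (G.induce B).Connected ∧ (∀ v ∈ B, B ≠ {v} → (G.induce (B \ {v})).Connected) ∧
    ∀ C : Set V, B ⊆ C → (G.induce C).Connected →
      (∀ v ∈ C, C ≠ {v} → (G.induce (C \ {v})).Connected) → B = C

/-- `G` is a block graph: every block of `G` is a clique. -/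
def IsBlockGraph (G : SimpleGraph V) : Prop :=
  ∀ B : Set V, IsBlock G B → G.IsClique B

/-- `G` has no induced `K_{1,r}`. -/
def K1rFree (r : ℕ) (G : SimpleGraph V) : Prop :=
  ¬ ∃ (c : V) (s : Finset V), s.card = r ∧ c ∉ s ∧ (∀ v ∈ s, G.Adj c v) ∧
      ∀ v ∈ s, ∀ w ∈ s, v ≠ w → ¬ G.Adj v w

/-- The `k`-star with `n + k` vertices: a clique on the first `k` vertices, with each of the
other `n` vertices adjacent exactly to the vertices of that clique. -/
def kStar (k n : ℕ) : SimpleGraph (Fin (n + k)) :=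
  SimpleGraph.fromRel (fun a _ => (a : ℕ) < k)

end Paper

namespace KTreeProof

open Paper SimpleGraph Walk Finset

set_option linter.unusedSectionVars false

variable {V : Type} [DecidableEq V] {G : SimpleGraph V}

/-- The walk stays inside the vertex set `A`. -/
def WIn (A : Finset V) {u v : V} (p : G.Walk u v) : Prop := ∀ x ∈ p.support, x ∈ A

/-- `v` is reachable from `u` by a walk inside `A`. -/
def RIn (G : SimpleGraph V) (A : Finset V) (u v : V) : Prop :=
  ∃ p : G.Walk u v, WIn A p

lemma WIn.mono {A B : Finset V} (h : A ⊆ B) {u v : V} {p : G.Walk u v} (hp : WIn A p) :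
    WIn B p := fun x hx => h (hp x hx)

lemma WIn.start_mem {A : Finset V} {u v : V} {p : G.Walk u v} (hp : WIn A p) : u ∈ A :=
  hp u p.start_mem_support

lemma WIn.end_mem {A : Finset V} {u v : V} {p : G.Walk u v} (hp : WIn A p) : v ∈ A :=
  hp v p.end_mem_support

lemma WIn.reverse {A : Finset V} {u v : V} {p : G.Walk u v} (hp : WIn A p) :
    WIn A p.reverse := fun x hx => hp x (by rwa [support_reverse, List.mem_reverse] at hx)

lemma WIn.append {A : Finset V} {u v w : V} {p : G.Walk u v} {q : G.Walk v w}
    (hp : WIn A p) (hq : WIn A q) : WIn A (p.append q) := by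
  intro x hx
  rw [mem_support_append_iff] at hx
  rcases hx with hx | hx
  · exact hp x hx
  · exact hq x hx

lemma RIn.refl {A : Finset V} {u : V} (hu : u ∈ A) : RIn G A u u :=
  ⟨Walk.nil, by intro x hx; simp at hx; subst hx; exact hu⟩

lemma RIn.symm {A : Finset V} {u v : V} (h : RIn G A u v) : RIn G A v u := by
  obtain ⟨p, hp⟩ := h
  exact ⟨p.reverse, hp.reverse⟩

lemma RIn.trans {A : Finset V} {u v w : V} (h : RIn G A u v) (h' : RIn G A v w) :
    RIn G A u w := by
  obtain ⟨p, hp⟩ := h; obtain ⟨q, hq⟩ := h'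
  exact ⟨p.append q, hp.append hq⟩

lemma RIn.mono {A B : Finset V} (h : A ⊆ B) {u v : V} (hr : RIn G A u v) : RIn G B u v := by
  obtain ⟨p, hp⟩ := hr; exact ⟨p, hp.mono h⟩

lemma RIn.adj {A : Finset V} {u v w : V} (h : RIn G A u v) (hadj : G.Adj v w) (hw : w ∈ A) :
    RIn G A u w := by
  obtain ⟨p, hp⟩ := h
  refine ⟨p.append (Walk.cons hadj Walk.nil), hp.append ?_⟩
  intro x hx
  simp only [support_cons, support_nil, List.mem_cons, List.mem_singleton] at hx
  rcases hx with rfl | rfl | h; exacts [hp.end_mem, hw, absurd h (by simp)]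

open scoped Classical in
/-- The component of `u` in `A \ S` (all vertices reachable from `u` by walks inside `A`
avoiding `S`). -/
noncomputable def cmp (G : SimpleGraph V) (A S : Finset V) (u : V) : Finset V :=
  A.filter (fun w => RIn G (A \ S) u w)

lemma mem_cmp {A S : Finset V} {u w : V} :
    w ∈ cmp G A S u ↔ w ∈ A ∧ RIn G (A \ S) u w := by
  classical
  simp [cmp]

lemma cmp_subset {A S : Finset V} {u : V} : cmp G A S u ⊆ A := fun _ h => (mem_cmp.1 h).1

lemma cmp_not_mem_S {A S : Finset V} {u w : V} (h : w ∈ cmp G A S u) : w ∉ S := by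
  obtain ⟨-, p, hp⟩ := mem_cmp.1 h
  have := hp.end_mem
  simp only [Finset.mem_sdiff] at this
  exact this.2

lemma mem_cmp_self {A S : Finset V} {u : V} (hu : u ∈ A) (hus : u ∉ S) : u ∈ cmp G A S u :=
  mem_cmp.2 ⟨hu, RIn.refl (by simp [Finset.mem_sdiff, hu, hus])⟩

lemma cmp_adj {A S : Finset V} {u w z : V} (hw : w ∈ cmp G A S u) (hadj : G.Adj w z)
    (hz : z ∈ A) (hzs : z ∉ S) : z ∈ cmp G A S u := by
  obtain ⟨hwA, hr⟩ := mem_cmp.1 hw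
  exact mem_cmp.2 ⟨hz, hr.adj hadj (by simp [Finset.mem_sdiff, hz, hzs])⟩

lemma walk_sub_cmp {A S : Finset V} {u w : V} {p : G.Walk u w} (hp : WIn (A \ S) p) :
    ∀ x ∈ p.support, x ∈ cmp G A S u := by
  intro x hx
  have hxA : x ∈ A := by have := hp x hx; simp only [Finset.mem_sdiff] at this; exact this.1
  refine mem_cmp.2 ⟨hxA, ⟨p.takeUntil x hx, ?_⟩⟩
  intro y hy
  exact hp y (p.support_takeUntil_subset hx hy)

lemma cmp_conn {A S : Finset V} {u : V} {c c' : V} (hc : c ∈ cmp G A S u)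
    (hc' : c' ∈ cmp G A S u) : RIn G (cmp G A S u) c c' := by
  obtain ⟨-, p, hp⟩ := mem_cmp.1 hc
  obtain ⟨-, q, hq⟩ := mem_cmp.1 hc'
  refine ⟨p.reverse.append q, ?_⟩
  intro x hx
  rw [mem_support_append_iff] at hx
  rcases hx with hx | hx
  · rw [support_reverse, List.mem_reverse] at hx
    exact walk_sub_cmp hp x hx
  · exact walk_sub_cmp hq x hx

/-- `S` separates `u` from `v` inside the vertex set `A`. -/
def SepIn (G : SimpleGraph V) (A : Finset V) (u v : V) (S : Finset V) : Prop :=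
  u ∈ A ∧ v ∈ A ∧ u ≠ v ∧ ¬ G.Adj u v ∧ u ∉ S ∧ v ∉ S ∧
    ∀ p : G.Walk u v, WIn A p → ∃ x ∈ p.support, x ∈ S

lemma SepIn.symm {A : Finset V} {u v : V} {S : Finset V} (h : SepIn G A u v S) :
    SepIn G A v u S := by
  obtain ⟨h1, h2, h3, h4, h5, h6, h7⟩ := h
  refine ⟨h2, h1, h3.symm, fun ha => h4 ha.symm, h6, h5, ?_⟩
  intro p hp
  obtain ⟨x, hx, hxS⟩ := h7 p.reverse hp.reverse
  rw [support_reverse, List.mem_reverse] at hx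
  exact ⟨x, hx, hxS⟩

lemma sep_not_mem_cmp_other {A S : Finset V} {u v : V} (hsep : SepIn G A u v S) :
    v ∉ cmp G A S u := by
  intro hv
  obtain ⟨-, p, hp⟩ := mem_cmp.1 hv
  obtain ⟨x, hx, hxS⟩ := hsep.2.2.2.2.2.2 p (hp.mono (Finset.sdiff_subset))
  have := hp x hx
  simp only [Finset.mem_sdiff] at this
  exact this.2 hxS

lemma sep_no_cross {A S : Finset V} {u v : V} (hsep : SepIn G A u v S) :
    ∀ c ∈ cmp G A S u, ∀ d ∈ cmp G A S v, c ≠ d ∧ ¬ G.Adj c d := by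
  intro c hc d hd
  obtain ⟨-, p, hp⟩ := mem_cmp.1 hc
  obtain ⟨-, q, hq⟩ := mem_cmp.1 hd
  constructor
  · rintro rfl
    have : RIn G (A \ S) u v := (RIn.trans ⟨p, hp⟩ (RIn.symm ⟨q, hq⟩))
    obtain ⟨r, hr⟩ := this
    obtain ⟨x, hx, hxS⟩ := hsep.2.2.2.2.2.2 r (hr.mono Finset.sdiff_subset)
    have := hr x hx
    simp only [Finset.mem_sdiff] at this
    exact this.2 hxS
  · intro hadj
    have hdA : d ∈ A \ S := by
      have h1 := cmp_subset hd
      have h2 := cmp_not_mem_S hd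
      simp [Finset.mem_sdiff, h1, h2]
    have : RIn G (A \ S) u v := (RIn.adj ⟨p, hp⟩ hadj hdA).trans (RIn.symm ⟨q, hq⟩)
    obtain ⟨r, hr⟩ := this
    obtain ⟨x, hx, hxS⟩ := hsep.2.2.2.2.2.2 r (hr.mono Finset.sdiff_subset)
    have := hr x hx
    simp only [Finset.mem_sdiff] at this
    exact this.2 hxS

lemma second_vertex {u v : V} (p : G.Walk u v) (hne : u ≠ v) (hadj : ¬ G.Adj u v) :
    ∃ x ∈ p.support, x ≠ u ∧ x ≠ v := by
  cases p with
  | nil => exact absurd rfl hne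
  | cons h r =>
    rename_i m
    refine ⟨m, by simp [support_cons], h.ne', ?_⟩
    rintro rfl
    exact hadj h

/-- Existence of a (cardinality-)minimal separator inside `A` for a nonadjacent pair. -/
lemma exists_minsep {A : Finset V} {u v : V} (hu : u ∈ A) (hv : v ∈ A) (hne : u ≠ v)
    (hadj : ¬ G.Adj u v) :
    ∃ S : Finset V, S ⊆ A ∧ SepIn G A u v S ∧
      (∀ T ⊆ S, SepIn G A u v T → T = S) ∧
      (∀ T ⊆ A, SepIn G A u v T → S.card ≤ T.card) := by
  classical
  set coll := (A.powerset).filter (fun T => SepIn G A u v T) with hcoll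
  have hmem : ∀ T, T ∈ coll ↔ T ⊆ A ∧ SepIn G A u v T := by
    intro T; simp [hcoll, Finset.mem_filter, Finset.mem_powerset]
  have hne' : coll.Nonempty := by
    refine ⟨A \ {u, v}, (hmem _).2 ⟨Finset.sdiff_subset, hu, hv, hne, hadj, by simp, by simp, ?_⟩⟩
    intro p hp
    obtain ⟨x, hx, hxu, hxv⟩ := second_vertex p hne hadj
    exact ⟨x, hx, by simp [Finset.mem_sdiff, hp x hx, hxu, hxv]⟩
  obtain ⟨S, hS, hSmin⟩ := Finset.exists_min_image coll Finset.card hne'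
  rw [hmem] at hS
  refine ⟨S, hS.1, hS.2, ?_, ?_⟩
  · intro T hTS hT
    have : S.card ≤ T.card := hSmin T ((hmem _).2 ⟨hTS.trans hS.1, hT⟩)
    exact Finset.eq_of_subset_of_card_le hTS this
  · intro T hTA hT
    exact hSmin T ((hmem _).2 ⟨hTA, hT⟩)

end KTreeProof
namespace KTreeProof

open Paper SimpleGraph Walk Finset

variable {V : Type} [DecidableEq V] {G : SimpleGraph V}

lemma adj_of_length_one {u v : V} {p : G.Walk u v} (h : p.length = 1) : G.Adj u v := by
  cases p with
  | nil => simp at h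
  | cons hadj r =>
    simp only [length_cons] at h
    have h0 : r.length = 0 := by omega
    have : _ = v := eq_of_length_eq_zero h0
    subst this
    exact hadj

lemma edge_head_of_length_one {u v : V} {p : G.Walk u v} (h : p.length = 1) :
    s(u, v) ∈ p.edges := by
  cases p with
  | nil => simp at h
  | cons hadj r =>
    simp only [length_cons] at h
    have h0 : r.length = 0 := by omega
    have : _ = v := eq_of_length_eq_zero h0
    subst this
    simp

/-- Shortcut lemma: a path containing two adjacent vertices whose edge is not on the path
can be shortened. -/
lemma shortcut {a b : V} (p : G.Walk a b) (hp : p.IsPath) :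
    ∀ {x y : V}, x ∈ p.support → y ∈ p.support → G.Adj x y → s(x, y) ∉ p.edges →
    ∃ q : G.Walk a b, q.length < p.length ∧ ∀ z ∈ q.support, z ∈ p.support := by
  induction p with
  | nil =>
    intro x y hx hy hxy _
    simp only [support_nil, List.mem_singleton] at hx hy
    subst hx; subst hy
    exact absurd hxy (G.irrefl)
  | cons h r ih =>
    rename_i c d e
    -- h : G.Adj c d, r : G.Walk d e
    intro x y hx hy hxy hne
    simp only [support_cons, List.mem_cons] at hx hy
    by_cases hxc : x = c
    · subst hxc
      have hyr : y ∈ r.support := by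
        rcases hy with rfl | hy
        · exact absurd hxy (G.irrefl)
        · exact hy
      -- y ≠ d, else edge is the first edge of the walk
      have hyd : y ≠ d := by
        rintro rfl
        exact hne (by simp)
      refine ⟨Walk.cons hxy (r.dropUntil y hyr), ?_, ?_⟩
      · simp only [length_cons, Nat.add_lt_add_iff_right]
        have hspec := congrArg Walk.length (r.take_spec hyr)
        rw [length_append] at hspec
        have htl : 1 ≤ (r.takeUntil y hyr).length := by
          rcases Nat.eq_zero_or_pos (r.takeUntil y hyr).length with h0 | h1
          · exact absurd (eq_of_length_eq_zero h0) (fun hh => hyd hh.symm)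
          · exact h1
        omega
      · intro z hz
        simp only [support_cons, List.mem_cons] at hz ⊢
        rcases hz with rfl | hz
        · exact Or.inl rfl
        · exact Or.inr (r.support_dropUntil_subset hyr hz)
    · by_cases hyc : y = c
      · subst hyc
        have hxr : x ∈ r.support := by
          rcases hx with rfl | hx
          · exact absurd rfl hxc
          · exact hx
        have hxd : x ≠ d := by
          rintro rfl
          exact hne (by simp [Sym2.eq_swap])
        refine ⟨Walk.cons hxy.symm (r.dropUntil x hxr), ?_, ?_⟩
        · simp only [length_cons, Nat.add_lt_add_iff_right]
          have hspec := congrArg Walk.length (r.take_spec hxr)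
          rw [length_append] at hspec
          have htl : 1 ≤ (r.takeUntil x hxr).length := by
            rcases Nat.eq_zero_or_pos (r.takeUntil x hxr).length with h0 | h1
            · exact absurd (eq_of_length_eq_zero h0) (fun hh => hxd hh.symm)
            · exact h1
          omega
        · intro z hz
          simp only [support_cons, List.mem_cons] at hz ⊢
          rcases hz with rfl | hz
          · exact Or.inl rfl
          · exact Or.inr (r.support_dropUntil_subset hxr hz)
      · have hxr : x ∈ r.support := by rcases hx with rfl | hx; exacts [absurd rfl hxc, hx]
        have hyr : y ∈ r.support := by rcases hy with rfl | hy; exacts [absurd rfl hyc, hy]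
        have hner : s(x, y) ∉ r.edges := fun hmem => hne (by simp [hmem])
        obtain ⟨q, hql, hqs⟩ := ih hp.of_cons hxr hyr hxy hner
        refine ⟨Walk.cons h q, by simpa using hql, ?_⟩
        intro z hz
        simp only [support_cons, List.mem_cons] at hz ⊢
        rcases hz with rfl | hz
        · exact Or.inl rfl
        · exact Or.inr (hqs z hz)

/-- Choose a minimal-length path within a vertex set. -/
lemma exists_min_path {F : Finset V} {a b : V} (h : ∃ w : G.Walk a b, WIn F w) :
    ∃ p : G.Walk a b, p.IsPath ∧ WIn F p ∧
      ∀ q : G.Walk a b, WIn F q → p.length ≤ q.length := by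
  classical
  have hP : ∃ n, ∃ w : G.Walk a b, WIn F w ∧ w.length = n := by
    obtain ⟨w, hw⟩ := h; exact ⟨w.length, w, hw, rfl⟩
  obtain ⟨w, hw, hwl⟩ := Nat.find_spec hP
  have hmin : ∀ q : G.Walk a b, WIn F q → Nat.find hP ≤ q.length := by
    intro q hq
    exact Nat.find_le ⟨q, hq, rfl⟩
  refine ⟨w.bypass, w.bypass_isPath, ?_, ?_⟩
  · intro x hx; exact hw x (w.support_bypass_subset hx)
  · intro q hq
    calc w.bypass.length ≤ w.length := w.length_bypass_le
    _ = Nat.find hP := hwl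
    _ ≤ q.length := hmin q hq

lemma isPath_append {a b c : V} {p : G.Walk a b} {q : G.Walk b c} (hp : p.IsPath)
    (hq : q.IsPath) (hint : ∀ x ∈ p.support, x ∈ q.support → x = b) :
    (p.append q).IsPath := by
  rw [isPath_def, support_append]
  apply List.Nodup.append (isPath_def _ |>.1 hp)
  · have := (isPath_def _).1 hq
    rw [q.support_eq_cons] at this
    exact (List.nodup_cons.1 this).2
  · intro x hxp hxq
    have hxq' : x ∈ q.support := by
      rw [q.support_eq_cons]; exact List.mem_cons_of_mem _ hxq
    have hxb : x = b := hint x hxp hxq'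
    subst hxb
    have := (isPath_def _).1 hq
    rw [q.support_eq_cons] at this
    exact (List.nodup_cons.1 this).1 hxq

/-- From a walk entering `S` only at its endpoint `z`, starting in a component closed under
non-`S` steps, extract a neighbour of `z` in that component. -/
lemma nbr_aux {A S : Finset V} {u : V} :
    ∀ (n : ℕ) {w z : V} (t : G.Walk w z), t.length ≤ n → z ∈ S → w ∈ cmp G A S u → WIn A t →
      (∀ x ∈ t.support, x ∈ S → x = z) → ∃ c ∈ cmp G A S u, G.Adj c z := by
  intro n
  induction n with
  | zero =>
    intro w z t hlen hz hw _ _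
    have : w = z := eq_of_length_eq_zero (Nat.le_zero.1 hlen)
    subst this
    exact absurd hz (cmp_not_mem_S hw)
  | succ n ih =>
    intro w z t hlen hz hw hWIn hS
    cases t with
    | nil => exact absurd hz (cmp_not_mem_S hw)
    | cons h r =>
      rename_i m
      by_cases hmS : m ∈ S
      · have : m = z := hS m (by simp [support_cons]) hmS
        subst this
        exact ⟨w, hw, h⟩
      · have hmA : m ∈ A := hWIn m (by simp [support_cons])
        have hm : m ∈ cmp G A S u := cmp_adj hw h hmA hmS
        refine ih r ?_ hz hm (fun x hx => hWIn x (by simp [support_cons, hx]))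
          (fun x hx hxS => hS x (by simp [support_cons, hx]) hxS)
        simp only [length_cons] at hlen
        omega

/-- Every vertex of an inclusion-minimal separator has a neighbour in the component of `u`. -/
lemma sep_nbrs {A S : Finset V} {u v : V} (hsep : SepIn G A u v S)
    (hmin : ∀ T ⊆ S, SepIn G A u v T → T = S) :
    ∀ z ∈ S, ∃ c ∈ cmp G A S u, G.Adj c z := by
  intro z hzS
  obtain ⟨huA, hvA, hne, hadj, huS, hvS, hsepw⟩ := hsep
  -- S.erase z is not a separator
  have herase : ¬ SepIn G A u v (S.erase z) := by
    intro hcon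
    have heq := hmin (S.erase z) (Finset.erase_subset _ _) hcon
    rw [← heq] at hzS
    exact (Finset.notMem_erase z S) hzS
  have hex : ∃ p : G.Walk u v, WIn A p ∧ ∀ x ∈ p.support, x ∉ S.erase z := by
    by_contra hcon
    push_neg at hcon
    refine herase ⟨huA, hvA, hne, hadj, by simp [huS], by simp [hvS], ?_⟩
    intro p hp
    obtain ⟨x, hx1, hx2⟩ := hcon p hp
    exact ⟨x, hx1, hx2⟩
  obtain ⟨p, hpA, hpS⟩ := hex
  obtain ⟨x, hx, hxS⟩ := hsepw p hpA
  have hxz : x = z := by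
    by_contra hne'
    exact hpS x hx (Finset.mem_erase.2 ⟨hne', hxS⟩)
  subst hxz
  -- take the prefix up to x
  have ht : ∀ y ∈ (p.takeUntil x hx).support, y ∈ S → y = x := by
    intro y hy hyS
    by_contra hne'
    exact hpS y (p.support_takeUntil_subset hx hy) (Finset.mem_erase.2 ⟨hne', hyS⟩)
  exact nbr_aux (p.takeUntil x hx).length (p.takeUntil x hx) le_rfl hxS
    (mem_cmp_self huA huS)
    (fun y hy => hpA y (p.support_takeUntil_subset hx hy)) ht

end KTreeProof
namespace KTreeProof

open Paper SimpleGraph Walk Finset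

set_option linter.unusedSectionVars false

variable {V : Type} [DecidableEq V] {G : SimpleGraph V}

/-- In a chordal graph, every inclusion-minimal separator is a clique. -/
lemma sep_clique (hch : IsChordal G) {A : Finset V} {u v : V} {S : Finset V}
    (hsep : SepIn G A u v S) (hmin : ∀ T ⊆ S, SepIn G A u v T → T = S) :
    ∀ a ∈ S, ∀ b ∈ S, a ≠ b → G.Adj a b := by
  intro a haS b hbS hab
  by_contra hnadj
  have hsepv := hsep.symm
  have hminv : ∀ T ⊆ S, SepIn G A v u T → T = S := fun T hT h => hmin T hT h.symm
  obtain ⟨ca, hca, hcaa⟩ := sep_nbrs hsep hmin a haS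
  obtain ⟨cb, hcb, hcbb⟩ := sep_nbrs hsep hmin b hbS
  obtain ⟨da, hda, hdaa⟩ := sep_nbrs hsepv hminv a haS
  obtain ⟨db, hdb, hdbb⟩ := sep_nbrs hsepv hminv b hbS
  set Cu := cmp G A S u with hCu
  set Cv := cmp G A S v with hCv
  set F1 := Cu ∪ {a, b} with hF1
  set F2 := Cv ∪ {a, b} with hF2
  have hcross := sep_no_cross hsep
  have hCuS : ∀ x ∈ Cu, x ∉ S := fun x hx => cmp_not_mem_S hx
  have hCvS : ∀ x ∈ Cv, x ∉ S := fun x hx => cmp_not_mem_S hx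
  -- existence of walks through each component
  have hexist1 : ∃ w : G.Walk a b, WIn F1 w := by
    obtain ⟨w0, hw0⟩ := cmp_conn hca hcb
    refine ⟨(Walk.cons hcaa.symm w0).append (Walk.cons hcbb Walk.nil), ?_⟩
    intro x hx
    rw [mem_support_append_iff] at hx
    rcases hx with hx | hx
    · simp only [support_cons, List.mem_cons] at hx
      rcases hx with rfl | hx
      · simp [hF1]
      · exact Finset.mem_union_left _ (hw0 x hx)
    · simp only [support_cons, support_nil, List.mem_cons, List.mem_singleton] at hx
      rcases hx with rfl | rfl | h
      · exact Finset.mem_union_left _ hcb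
      · simp [hF1]
      · simp at h
  have hexist2 : ∃ w : G.Walk a b, WIn F2 w := by
    obtain ⟨w0, hw0⟩ := cmp_conn hda hdb
    refine ⟨(Walk.cons hdaa.symm w0).append (Walk.cons hdbb Walk.nil), ?_⟩
    intro x hx
    rw [mem_support_append_iff] at hx
    rcases hx with hx | hx
    · simp only [support_cons, List.mem_cons] at hx
      rcases hx with rfl | hx
      · simp [hF2]
      · exact Finset.mem_union_left _ (hw0 x hx)
    · simp only [support_cons, support_nil, List.mem_cons, List.mem_singleton] at hx
      rcases hx with rfl | rfl | h
      · exact Finset.mem_union_left _ hdb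
      · simp [hF2]
      · simp at h
  obtain ⟨q1, hq1p, hq1W, hq1min⟩ := exists_min_path hexist1
  obtain ⟨q2, hq2p, hq2W, hq2min⟩ := exists_min_path hexist2
  -- decompose q1
  obtain ⟨m1, h1, r1, hq1eq⟩ := Walk.exists_eq_cons_of_ne hab q1
  have hr1p : r1.IsPath := by rw [hq1eq] at hq1p; exact hq1p.of_cons
  have har1 : a ∉ r1.support := by
    rw [hq1eq, isPath_def, support_cons] at hq1p
    exact (List.nodup_cons.1 hq1p).1
  have hm1 : m1 ∈ Cu := by
    have : m1 ∈ F1 := hq1W m1 (by rw [hq1eq]; simp [support_cons])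
    rw [hF1, Finset.mem_union] at this
    rcases this with h | h
    · exact h
    · simp only [Finset.mem_insert, Finset.mem_singleton] at h
      rcases h with rfl | rfl
      · exact absurd rfl h1.ne
      · exact absurd h1 hnadj
  -- the cycle
  set P : G.Walk m1 a := r1.append q2.reverse with hP
  have haq2 : a ∈ q2.support := q2.start_mem_support
  have hbq2 : b ∈ q2.support := q2.end_mem_support
  have haq1 : a ∈ q1.support := q1.start_mem_support
  have hbq1 : b ∈ q1.support := q1.end_mem_support
  have hPpath : P.IsPath := by
    apply isPath_append hr1p hq2p.reverse
    intro x hxr hxq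
    rw [support_reverse, List.mem_reverse] at hxq
    have hxF2 : x ∈ F2 := hq2W x hxq
    have hxF1 : x ∈ F1 := hq1W x (by rw [hq1eq]; simp [support_cons, hxr])
    have hxa : x ≠ a := fun h => har1 (h ▸ hxr)
    rw [hF1, Finset.mem_union] at hxF1
    rcases hxF1 with h | h
    · rw [hF2, Finset.mem_union] at hxF2
      rcases hxF2 with h' | h'
      · exact absurd rfl ((hcross x h x h').1)
      · simp only [Finset.mem_insert, Finset.mem_singleton] at h'
        rcases h' with rfl | rfl
        · exact absurd haS (hCuS _ h)
        · exact absurd hbS (hCuS _ h)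
    · simp only [Finset.mem_insert, Finset.mem_singleton] at h
      rcases h with rfl | rfl
      · exact absurd rfl hxa
      · rfl
  have hm1a : m1 ≠ a := h1.ne'
  have hm1Cv : m1 ∉ Cv := fun h => (hcross m1 hm1 m1 h).1 rfl
  have hm1b : m1 ≠ b := fun h => (hCuS m1 hm1) (h ▸ hbS)
  have hedge : s(a, m1) ∉ P.edges := by
    rw [hP, edges_append, List.mem_append]
    rintro (h | h)
    · exact har1 (r1.fst_mem_support_of_mem_edges h)
    · rw [edges_reverse, List.mem_reverse] at h
      have : m1 ∈ q2.support := q2.snd_mem_support_of_mem_edges h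
      have hm1F2 : m1 ∈ F2 := hq2W m1 this
      rw [hF2, Finset.mem_union] at hm1F2
      rcases hm1F2 with h' | h'
      · exact hm1Cv h'
      · simp only [Finset.mem_insert, Finset.mem_singleton] at h'
        rcases h' with h' | h'
        · exact hm1a h'
        · exact hm1b h'
  set W : G.Walk a a := Walk.cons h1 P with hW
  have hWcyc : W.IsCycle := by
    rw [hW, Walk.cons_isCycle_iff]
    exact ⟨hPpath, hedge⟩
  have hq1len : 2 ≤ q1.length := by
    rcases Nat.lt_or_ge q1.length 2 with h | h
    · interval_cases hq : q1.length
      · exact absurd (eq_of_length_eq_zero hq) hab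
      · exact absurd (adj_of_length_one hq) hnadj
    · exact h
  have hq2len : 2 ≤ q2.length := by
    rcases Nat.lt_or_ge q2.length 2 with h | h
    · interval_cases hq : q2.length
      · exact absurd (eq_of_length_eq_zero hq) hab
      · exact absurd (adj_of_length_one hq) hnadj
    · exact h
  have hWlen : 4 ≤ W.length := by
    have : W.length = q1.length + q2.length := by
      rw [hW, hP, hq1eq]
      simp [length_append, length_reverse, length_cons]
      omega
    omega
  -- supports and edges
  have hsupp : ∀ t ∈ W.support, t ∈ q1.support ∨ t ∈ q2.support := by
    intro t ht
    rw [hW, support_cons, List.mem_cons] at ht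
    rcases ht with rfl | ht
    · exact Or.inl haq1
    · rw [hP, mem_support_append_iff] at ht
      rcases ht with ht | ht
      · exact Or.inl (by rw [hq1eq]; simp [support_cons, ht])
      · rw [support_reverse, List.mem_reverse] at ht
        exact Or.inr ht
  have hq1edges : q1.edges ⊆ W.edges := by
    rw [hW, hP, hq1eq]
    simp only [edges_cons, edges_append]
    intro e he
    simp only [List.mem_cons, List.mem_append] at he ⊢
    tauto
  have hq2edges : q2.edges ⊆ W.edges := by
    rw [hW, hP]
    intro e he
    simp only [edges_cons, edges_append, List.mem_cons, List.mem_append, edges_reverse,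
      List.mem_reverse]
    tauto
  obtain ⟨x, y, hx, hy, hxy, hne⟩ := hch a W hWcyc hWlen
  -- helper : both in q1 impossible
  have hcase1 : x ∈ q1.support → y ∈ q1.support → False := by
    intro hx1 hy1
    have hne1 : s(x, y) ∉ q1.edges := fun h => hne (hq1edges h)
    obtain ⟨q, hql, hqs⟩ := shortcut q1 hq1p hx1 hy1 hxy hne1
    have : q1.length ≤ q.length := hq1min q (fun z hz => hq1W z (hqs z hz))
    omega
  have hcase2 : x ∈ q2.support → y ∈ q2.support → False := by
    intro hx2 hy2
    have hne2 : s(x, y) ∉ q2.edges := fun h => hne (hq2edges h)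
    obtain ⟨q, hql, hqs⟩ := shortcut q2 hq2p hx2 hy2 hxy hne2
    have : q2.length ≤ q.length := hq2min q (fun z hz => hq2W z (hqs z hz))
    omega
  rcases hsupp x hx with hx' | hx' <;> rcases hsupp y hy with hy' | hy'
  · exact hcase1 hx' hy'
  · -- x in q1, y in q2
    have hxF1 : x ∈ F1 := hq1W x hx'
    rw [hF1, Finset.mem_union] at hxF1
    rcases hxF1 with hxc | hxab
    · have hyF2 : y ∈ F2 := hq2W y hy'
      rw [hF2, Finset.mem_union] at hyF2
      rcases hyF2 with hyc | hyab
      · exact (hcross x hxc y hyc).2 hxy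
      · simp only [Finset.mem_insert, Finset.mem_singleton] at hyab
        rcases hyab with rfl | rfl
        · exact hcase1 hx' haq1
        · exact hcase1 hx' hbq1
    · simp only [Finset.mem_insert, Finset.mem_singleton] at hxab
      rcases hxab with rfl | rfl
      · exact hcase2 haq2 hy'
      · exact hcase2 hbq2 hy'
  · -- x in q2, y in q1 : symmetric
    have hxF2 : x ∈ F2 := hq2W x hx'
    rw [hF2, Finset.mem_union] at hxF2
    rcases hxF2 with hxc | hxab
    · have hyF1 : y ∈ F1 := hq1W y hy'
      rw [hF1, Finset.mem_union] at hyF1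
      rcases hyF1 with hyc | hyab
      · exact (hcross y hyc x hxc).2 hxy.symm
      · simp only [Finset.mem_insert, Finset.mem_singleton] at hyab
        rcases hyab with rfl | rfl
        · exact hcase2 hx' haq2
        · exact hcase2 hx' hbq2
    · simp only [Finset.mem_insert, Finset.mem_singleton] at hxab
      rcases hxab with rfl | rfl
      · exact hcase1 haq1 hy'
      · exact hcase1 hbq1 hy'
  · exact hcase2 hx' hy'

end KTreeProof
namespace KTreeProof

open Paper SimpleGraph Walk Finset

set_option linter.unusedSectionVars false

variable {V : Type} [DecidableEq V] {G : SimpleGraph V}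

/-- `x` is simplicial within the vertex set `A`. -/
def SimplIn (G : SimpleGraph V) (A : Finset V) (x : V) : Prop :=
  x ∈ A ∧ ∀ a ∈ A, ∀ b ∈ A, G.Adj x a → G.Adj x b → a ≠ b → G.Adj a b

/-- Walks inside `A` between vertices distinct from a simplicial vertex `x` can avoid `x`,
without leaving the support of the original walk. -/
lemma surgery {A : Finset V} {x : V} (hx : SimplIn G A x) :
    ∀ (n : ℕ) {u v : V} (p : G.Walk u v), p.length ≤ n → u ≠ x → v ≠ x → WIn A p →
      ∃ q : G.Walk u v, WIn (A.erase x) q ∧ ∀ z ∈ q.support, z ∈ p.support := by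
  intro n
  induction n with
  | zero =>
    intro u v p hlen hu hv hp
    have : u = v := eq_of_length_eq_zero (Nat.le_zero.1 hlen)
    subst this
    refine ⟨Walk.nil, ?_, ?_⟩
    · intro z hz
      simp only [support_nil, List.mem_singleton] at hz
      subst hz
      exact Finset.mem_erase.2 ⟨hu, hp.start_mem⟩
    · intro z hz
      simp only [support_nil, List.mem_singleton] at hz
      simp [hz]
  | succ n ih =>
    intro u v p hlen hu hv hp
    cases p with
    | nil =>
      refine ⟨Walk.nil, ?_, ?_⟩
      · intro z hz
        simp only [support_nil, List.mem_singleton] at hz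
        subst hz
        exact Finset.mem_erase.2 ⟨hu, hp.start_mem⟩
      · intro z hz
        simp only [support_nil, List.mem_singleton] at hz
        simp [hz]
    | cons h r =>
      rename_i m
      simp only [length_cons] at hlen
      by_cases hmx : m = x
      · subst hmx
        -- r : G.Walk m v with m = x
        cases r with
        | nil => exact absurd rfl hv
        | cons h2 r2 =>
          rename_i m2
          simp only [length_cons] at hlen
          have hr2W : WIn A r2 := fun z hz => hp z (by simp [support_cons, hz])
          by_cases hm2u : m2 = u
          · subst hm2u
            obtain ⟨q, hqW, hqs⟩ := ih r2 (by omega) hu hv hr2W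
            exact ⟨q, hqW, fun z hz => by simp [support_cons]; right; right; exact hqs z hz⟩
          · have hadj : G.Adj u m2 := by
              refine hx.2 u (hp u (by simp [support_cons])) m2
                (hp m2 (by simp [support_cons])) h.symm h2 ?_
              exact fun hh => hm2u hh.symm
            have hWin2 : WIn A (Walk.cons hadj r2) := by
              intro z hz
              simp only [support_cons, List.mem_cons] at hz
              rcases hz with rfl | hz
              · exact hp z (by simp [support_cons])
              · exact hr2W z hz
            obtain ⟨q, hqW, hqs⟩ := ih (Walk.cons hadj r2) (by simp [length_cons]; omega)
              hu hv hWin2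
            refine ⟨q, hqW, fun z hz => ?_⟩
            have := hqs z hz
            simp only [support_cons, List.mem_cons] at this ⊢
            tauto
      · obtain ⟨q, hqW, hqs⟩ := ih r (by omega) hmx hv
          (fun z hz => hp z (by simp [support_cons, hz]))
        refine ⟨Walk.cons h q, ?_, ?_⟩
        · intro z hz
          simp only [support_cons, List.mem_cons] at hz
          rcases hz with rfl | hz
          · exact Finset.mem_erase.2 ⟨hu, hp z (by simp [support_cons])⟩
          · exact hqW z hz
        · intro z hz
          simp only [support_cons, List.mem_cons] at hz ⊢
          rcases hz with rfl | hz
          · exact Or.inl rfl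
          · exact Or.inr (hqs z hz)

/-- Dirac's theorem, relativized: any nonempty vertex set of a chordal graph is complete or
contains two nonadjacent vertices that are simplicial in it. -/
lemma dirac (hch : IsChordal G) :
    ∀ (n : ℕ) (A : Finset V), A.card ≤ n → A.Nonempty →
      (∀ a ∈ A, ∀ b ∈ A, a ≠ b → G.Adj a b) ∨
      ∃ x ∈ A, ∃ y ∈ A, x ≠ y ∧ ¬ G.Adj x y ∧ SimplIn G A x ∧ SimplIn G A y := by
  intro n
  induction n with
  | zero =>
    intro A hA hAne
    exact absurd (Finset.card_eq_zero.1 (Nat.le_zero.1 hA)) (Finset.nonempty_iff_ne_empty.1 hAne)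
  | succ n ih =>
    intro A hA hAne
    by_cases hcomp : ∀ a ∈ A, ∀ b ∈ A, a ≠ b → G.Adj a b
    · exact Or.inl hcomp
    · push_neg at hcomp
      obtain ⟨u, huA, v, hvA, hne, hnadj⟩ := hcomp
      obtain ⟨S, hSA, hsep, hmin, hcardmin⟩ := exists_minsep huA hvA hne hnadj
      have hScl : ∀ a ∈ S, ∀ b ∈ S, a ≠ b → G.Adj a b := sep_clique hch hsep hmin
      -- one simplicial vertex in each component
      have main : ∀ (w w' : V), SepIn G A w w' S →
          (∀ T ⊆ S, SepIn G A w w' T → T = S) →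
          ∃ c ∈ cmp G A S w, SimplIn G A c := by
        intro w w' hsep' hmin'
        set C := cmp G A S w with hC
        have hwC : w ∈ C := mem_cmp_self hsep'.1 hsep'.2.2.2.2.1
        set A' := C ∪ S with hA'
        have hA'A : A' ⊆ A := Finset.union_subset cmp_subset hSA
        have hw'A' : w' ∉ A' := by
          rw [hA', Finset.mem_union]
          rintro (h | h)
          · exact sep_not_mem_cmp_other hsep' h
          · exact hsep'.2.2.2.2.2.1 h
        have hcard : A'.card ≤ n := by
          have h1 : A'.card < A.card := Finset.card_lt_card ⟨hA'A, fun hsub => hw'A' (hsub hsep'.2.1)⟩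
          omega
        -- closure: neighbours in A of C-vertices lie in A'
        have hclose : ∀ c ∈ C, ∀ z ∈ A, G.Adj c z → z ∈ A' := by
          intro c hc z hz hadj
          by_cases hzS : z ∈ S
          · exact Finset.mem_union_right _ hzS
          · exact Finset.mem_union_left _ (cmp_adj hc hadj hz hzS)
        have hsimp_lift : ∀ c ∈ C, SimplIn G A' c → SimplIn G A c := by
          intro c hc hsimp
          refine ⟨cmp_subset hc, ?_⟩
          intro a haA b hbA hca hcb hab
          exact hsimp.2 a (hclose c hc a haA hca) b (hclose c hc b hbA hcb) hca hcb hab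
        rcases ih A' hcard ⟨w, Finset.mem_union_left _ hwC⟩ with hcomp' | hsimp'
        · refine ⟨w, hwC, hsimp_lift w hwC ⟨Finset.mem_union_left _ hwC, ?_⟩⟩
          intro a haA' b hbA' _ _ hab
          exact hcomp' a haA' b hbA' hab
        · obtain ⟨x, hxA', y, hyA', hxy, hnxy, hsx, hsy⟩ := hsimp'
          have : x ∈ C ∨ y ∈ C := by
            by_contra hcon
            push_neg at hcon
            have hxS : x ∈ S := by
              rcases Finset.mem_union.1 hxA' with h | h
              · exact absurd h hcon.1
              · exact h
            have hyS : y ∈ S := by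
              rcases Finset.mem_union.1 hyA' with h | h
              · exact absurd h hcon.2
              · exact h
            exact hnxy (hScl x hxS y hyS hxy)
          rcases this with h | h
          · exact ⟨x, h, hsimp_lift x h hsx⟩
          · exact ⟨y, h, hsimp_lift y h hsy⟩
      obtain ⟨cu, hcu, hcusimp⟩ := main u v hsep hmin
      obtain ⟨cv, hcv, hcvsimp⟩ := main v u hsep.symm (fun T hT h => hmin T hT h.symm)
      obtain ⟨hcucv, hncadj⟩ := sep_no_cross hsep cu hcu cv hcv
      exact Or.inr ⟨cu, cmp_subset hcu, cv, cmp_subset hcv, hcucv, hncadj, hcusimp, hcvsimp⟩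

end KTreeProof
namespace KTreeProof

open Paper SimpleGraph Walk Finset

set_option linter.unusedSectionVars false

variable {V : Type} [DecidableEq V] {G : SimpleGraph V}

/-- In a chordal graph, if a clique `S` is disjoint from a connected set `C` and every vertex
of `S` has a neighbour in `C`, then some vertex of `C` is adjacent to all of `S`. -/
lemma lemD (hch : IsChordal G) :
    ∀ (n : ℕ) (C : Finset V), C.card ≤ n → C.Nonempty →
      (∀ c ∈ C, ∀ c' ∈ C, RIn G C c c') →
      ∀ (S : Finset V), (∀ a ∈ S, ∀ b ∈ S, a ≠ b → G.Adj a b) →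
      (∀ s ∈ S, s ∉ C) → (∀ s ∈ S, ∃ c ∈ C, G.Adj s c) →
      ∃ c ∈ C, ∀ s ∈ S, G.Adj c s := by
  classical
  intro n
  induction n with
  | zero =>
    intro C hC hCne
    exact absurd (Finset.card_eq_zero.1 (Nat.le_zero.1 hC)) (Finset.nonempty_iff_ne_empty.1 hCne)
  | succ n ih =>
    intro C hC hCne hconn S hScl hdisj hnbr
    by_cases hS0 : S = ∅
    · obtain ⟨c, hc⟩ := hCne
      exact ⟨c, hc, by simp [hS0]⟩
    -- a simplicial vertex of C
    have hsimpl : ∃ c0 ∈ C, SimplIn G C c0 := by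
      rcases dirac hch C.card C le_rfl hCne with hcomp | ⟨x, hx, -, -, -, -, hsx, -⟩
      · obtain ⟨c, hc⟩ := hCne
        exact ⟨c, hc, hc, fun a ha b hb _ _ hab => hcomp a ha b hb hab⟩
      · exact ⟨x, hx, hsx⟩
    obtain ⟨c0, hc0C, hc0s⟩ := hsimpl
    by_cases hall : ∀ s ∈ S, ∃ c ∈ C.erase c0, G.Adj s c
    · -- recurse on C.erase c0
      obtain ⟨s0, hs0⟩ := Finset.nonempty_iff_ne_empty.2 hS0
      obtain ⟨c1, hc1, -⟩ := hall s0 hs0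
      have herne : (C.erase c0).Nonempty := ⟨c1, hc1⟩
      have hconn' : ∀ c ∈ C.erase c0, ∀ c' ∈ C.erase c0, RIn G (C.erase c0) c c' := by
        intro c hc c' hc'
        obtain ⟨p, hp⟩ := hconn c (Finset.mem_of_mem_erase hc) c' (Finset.mem_of_mem_erase hc')
        obtain ⟨q, hq, -⟩ := surgery hc0s p.length p le_rfl
          (Finset.ne_of_mem_erase hc) (Finset.ne_of_mem_erase hc') hp
        exact ⟨q, hq⟩
      have hcard' : (C.erase c0).card ≤ n := by
        have := Finset.card_erase_of_mem hc0C
        omega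
      obtain ⟨c, hc, hcall⟩ := ih (C.erase c0) hcard' herne hconn' S hScl
        (fun s hs hmem => hdisj s hs (Finset.mem_of_mem_erase hmem)) hall
      exact ⟨c, Finset.mem_of_mem_erase hc, hcall⟩
    · -- some s* sees C only in c0
      push_neg at hall
      obtain ⟨sstar, hsstarS, hsstar⟩ := hall
      have hsc0 : G.Adj sstar c0 := by
        obtain ⟨c, hc, hadj⟩ := hnbr sstar hsstarS
        by_cases hcc0 : c = c0
        · exact hcc0 ▸ hadj
        · exact absurd hadj (hsstar c (Finset.mem_erase.2 ⟨hcc0, hc⟩))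
      refine ⟨c0, hc0C, ?_⟩
      intro s' hs'S
      by_cases hs'star : s' = sstar
      · exact hs'star ▸ hsc0.symm
      by_contra hncon
      -- choose a minimal path from a neighbour of s' to c0 inside C
      have hPex : ∃ L, ∃ d, G.Adj s' d ∧ ∃ w : G.Walk d c0, w.IsPath ∧ WIn C w ∧
          w.length = L := by
        obtain ⟨d0, hd0C, hd0adj⟩ := hnbr s' hs'S
        obtain ⟨p0, hp0⟩ := hconn d0 hd0C c0 hc0C
        exact ⟨p0.bypass.length, d0, hd0adj, p0.bypass, p0.bypass_isPath,
          fun z hz => hp0 z (p0.support_bypass_subset hz), rfl⟩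
      obtain ⟨d, hs'd, w, hwp, hwW, hwL⟩ := Nat.find_spec hPex
      have hfindmin : ∀ d' , G.Adj s' d' → ∀ w' : G.Walk d' c0, w'.IsPath → WIn C w' →
          Nat.find hPex ≤ w'.length := by
        intro d' h1 w' h2 h3
        exact Nat.find_le ⟨d', h1, w', h2, h3, rfl⟩
      have hdc0 : d ≠ c0 := by
        rintro rfl
        exact hncon hs'd.symm
      have hwlen1 : 1 ≤ w.length := by
        rcases Nat.eq_zero_or_pos w.length with h0 | h1
        · exact absurd (eq_of_length_eq_zero h0) hdc0
        · exact h1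
      have hs'C : s' ∉ C := hdisj s' hs'S
      have hsstarC : sstar ∉ C := hdisj sstar hsstarS
      have hss' : G.Adj sstar s' := hScl sstar hsstarS s' hs'S (fun h => hs'star h.symm)
      have hc0sstar : G.Adj c0 sstar := hsc0.symm
      set tail : G.Walk c0 s' := Walk.cons hc0sstar (Walk.cons hss' Walk.nil) with htail
      have htailsupp : tail.support = [c0, sstar, s'] := by
        simp [htail, support_cons]
      have htailp : tail.IsPath := by
        rw [isPath_def, htailsupp]
        have h1 : c0 ≠ sstar := fun h => hsstarC (h ▸ hc0C)
        have h2 : c0 ≠ s' := fun h => hs'C (h ▸ hc0C)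
        have h3 : sstar ≠ s' := fun h => hs'star h.symm
        simp [h1, h2, h3]
      set P0 : G.Walk d s' := w.append tail with hP0
      have hP0p : P0.IsPath := by
        apply isPath_append hwp htailp
        intro x hxw hxt
        rw [htailsupp] at hxt
        simp only [List.mem_cons, List.not_mem_nil, or_false] at hxt
        have hxC : x ∈ C := hwW x hxw
        rcases hxt with rfl | rfl | rfl
        · rfl
        · exact absurd hxC hsstarC
        · exact absurd hxC hs'C
      have htailedges : tail.edges = [s(c0, sstar), s(sstar, s')] := by
        simp [htail]
      have hP0edge : s(s', d) ∉ P0.edges := by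
        rw [hP0, edges_append, List.mem_append, htailedges]
        rintro (h | h)
        · exact hs'C (hwW _ (w.fst_mem_support_of_mem_edges h))
        · simp only [List.mem_cons, List.not_mem_nil, or_false] at h
          rcases h with h | h
          · rw [Sym2.eq_iff] at h
            rcases h with ⟨h1, -⟩ | ⟨h1, -⟩
            · exact hs'C (by rw [h1]; exact hc0C)
            · exact hs'star h1
          · rw [Sym2.eq_iff] at h
            rcases h with ⟨h1, -⟩ | ⟨-, h2⟩
            · exact hs'star h1
            · exact hsstarC (by rw [← h2]; exact hwW d w.start_mem_support)
      set X : G.Walk s' s' := Walk.cons hs'd P0 with hX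
      have hXcyc : X.IsCycle := by
        rw [hX, Walk.cons_isCycle_iff]
        exact ⟨hP0p, hP0edge⟩
      have hXlen : 4 ≤ X.length := by
        have : X.length = w.length + 3 := by
          simp [hX, hP0, htail, length_append, length_cons]
        omega
      obtain ⟨x, y, hx, hy, hxy, hne⟩ := hch s' X hXcyc hXlen
      -- membership analysis
      have hsupp : ∀ t ∈ X.support, t ∈ w.support ∨ t = sstar ∨ t = s' := by
        intro t ht
        rw [hX, support_cons, List.mem_cons] at ht
        rcases ht with rfl | ht
        · exact Or.inr (Or.inr rfl)
        · rw [hP0, mem_support_append_iff] at ht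
          rcases ht with ht | ht
          · exact Or.inl ht
          · rw [htailsupp] at ht
            simp only [List.mem_cons, List.not_mem_nil, or_false] at ht
            rcases ht with rfl | rfl | rfl
            · exact Or.inl w.end_mem_support
            · exact Or.inr (Or.inl rfl)
            · exact Or.inr (Or.inr rfl)
      have hwedges : w.edges ⊆ X.edges := by
        rw [hX, hP0]
        intro e he
        simp [edges_cons, edges_append, he]
      have hc0staredge : s(c0, sstar) ∈ X.edges := by
        rw [hX, hP0]
        simp [edges_cons, edges_append, htailedges]
      have hstars'edge : s(sstar, s') ∈ X.edges := by
        rw [hX, hP0]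
        simp [edges_cons, edges_append, htailedges]
      have hs'dedge : s(s', d) ∈ X.edges := by
        rw [hX]
        simp [edges_cons]
      -- helper: both chord ends on w impossible
      have hW2 : ∀ x' y', x' ∈ w.support → y' ∈ w.support → G.Adj x' y' →
          s(x', y') ∉ X.edges → False := by
        intro x' y' hx' hy' hadj hnedge
        have : s(x', y') ∉ w.edges := fun h => hnedge (hwedges h)
        obtain ⟨q, hql, hqs⟩ := shortcut w hwp hx' hy' hadj this
        have hq' : Nat.find hPex ≤ q.bypass.length :=
          hfindmin d hs'd q.bypass q.bypass_isPath
            (fun z hz => hwW z (hqs z (q.support_bypass_subset hz)))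
        have := q.length_bypass_le
        omega
      -- helper: chord from s' to w vertex impossible
      have hS' : ∀ t, t ∈ w.support → G.Adj s' t → s(s', t) ∉ X.edges → False := by
        intro t ht hadj hnedge
        by_cases htd : t = d
        · subst htd
          exact hnedge hs'dedge
        · have hdrop := hwp.dropUntil ht
          have hlendrop : (w.dropUntil t ht).length < w.length := by
            have hspec := congrArg Walk.length (w.take_spec ht)
            rw [length_append] at hspec
            have h1 : 1 ≤ (w.takeUntil t ht).length := by
              rcases Nat.eq_zero_or_pos (w.takeUntil t ht).length with h0 | h1
              · exact absurd (eq_of_length_eq_zero h0).symm htd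
              · exact h1
            omega
          have := hfindmin t hadj (w.dropUntil t ht) hdrop
            (fun z hz => hwW z (w.support_dropUntil_subset ht hz))
          omega
      -- helper: chord from sstar to w vertex impossible
      have hSstar : ∀ t, t ∈ w.support → G.Adj sstar t → s(sstar, t) ∉ X.edges → False := by
        intro t ht hadj hnedge
        have htC : t ∈ C := hwW t ht
        by_cases htc0 : t = c0
        · subst htc0
          exact hnedge (by rw [Sym2.eq_swap]; exact hc0staredge)
        · exact hsstar t (Finset.mem_erase.2 ⟨htc0, htC⟩) hadj
      rcases hsupp x hx with hx' | rfl | rfl <;> rcases hsupp y hy with hy' | rfl | rfl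
      · exact hW2 x y hx' hy' hxy hne
      · exact hSstar x hx' hxy.symm (by rw [Sym2.eq_swap]; exact hne)
      · exact hS' x hx' hxy.symm (by rw [Sym2.eq_swap]; exact hne)
      · exact hSstar y hy' hxy hne
      · exact absurd hxy (G.irrefl)
      · exact hne hstars'edge
      · exact hS' y hy' hxy hne
      · exact hne (by rw [Sym2.eq_swap]; exact hstars'edge)
      · exact absurd hxy (G.irrefl)

end KTreeProof
namespace KTreeProof

open Paper SimpleGraph Walk Finset

set_option linter.unusedSectionVars false

variable {V : Type} [DecidableEq V] {G : SimpleGraph V}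

section Dir1

variable [Fintype V] {k n : ℕ} {σ : Fin n ≃ V}

/-- The base clique of a k-tree construction order. -/
private def baseK (σ : Fin n ≃ V) (k : ℕ) : Finset V :=
  (Finset.univ.filter (fun i : Fin n => (i : ℕ) < k + 1)).image σ

lemma mem_baseK {w : V} : w ∈ baseK σ k ↔ (σ.symm w : ℕ) < k + 1 := by
  simp only [baseK, Finset.mem_image, Finset.mem_filter, Finset.mem_univ, true_and]
  constructor
  · rintro ⟨i, hi, rfl⟩
    simpa using hi
  · intro h
    exact ⟨σ.symm w, h, by simp⟩

lemma card_baseK (hn : k + 1 ≤ n) : (baseK σ k).card = k + 1 := by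
  rw [baseK, Finset.card_image_of_injective _ σ.injective]
  have : (Finset.univ.filter (fun i : Fin n => (i : ℕ) < k + 1)) =
      (Finset.univ : Finset (Fin (k + 1))).image (Fin.castLE hn) := by
    ext i
    simp only [Finset.mem_filter, Finset.mem_univ, true_and, Finset.mem_image]
    constructor
    · intro hi
      exact ⟨⟨i, hi⟩, by simp [Fin.castLE, Fin.ext_iff]⟩
    · rintro ⟨j, rfl⟩
      simpa using j.2
  rw [this, Finset.card_image_of_injective _ (Fin.castLE_injective hn)]
  simp

lemma baseK_clique (hbase : ∀ i j : Fin n, (i : ℕ) < j → (j : ℕ) < k + 1 → G.Adj (σ i) (σ j)) :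
    ∀ a ∈ baseK σ k, ∀ b ∈ baseK σ k, a ≠ b → G.Adj a b := by
  intro a ha b hb hab
  rw [mem_baseK] at ha hb
  rcases lt_trichotomy ((σ.symm a : ℕ)) ((σ.symm b : ℕ)) with h | h | h
  · have := hbase (σ.symm a) (σ.symm b) h hb
    simpa using this
  · exact absurd (σ.symm.injective (Fin.ext h)) hab
  · have := hbase (σ.symm b) (σ.symm a) h ha
    simpa using this.symm

/-- Every clique of a k-tree extends to a clique with `k+1` vertices. -/
lemma clique_ext (hn : k + 1 ≤ n)
    (hbase : ∀ i j : Fin n, (i : ℕ) < j → (j : ℕ) < k + 1 → G.Adj (σ i) (σ j))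
    (hstep : ∀ j : Fin n, k + 1 ≤ (j : ℕ) →
      ∃ s : Finset V, G.IsNClique k s ∧
        ∀ v : V, v ∈ s ↔ ∃ i : Fin n, (i : ℕ) < j ∧ v = σ i ∧ G.Adj (σ j) v)
    (Q : Finset V) (hQ : G.IsClique (Q : Set V)) :
    ∃ R : Finset V, Q ⊆ R ∧ G.IsClique (R : Set V) ∧ R.card = k + 1 := by
  have hKcl : G.IsClique ((baseK σ k : Finset V) : Set V) := by
    intro a ha b hb hab
    exact baseK_clique hbase a (by exact_mod_cast ha) b (by exact_mod_cast hb) hab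
  rcases Q.eq_empty_or_nonempty with rfl | hQne
  · exact ⟨baseK σ k, by simp, hKcl, card_baseK hn⟩
  · obtain ⟨x, hxQ, hxmax⟩ := Finset.exists_max_image Q (fun w => (σ.symm w : ℕ)) hQne
    by_cases hxK : (σ.symm x : ℕ) < k + 1
    · refine ⟨baseK σ k, ?_, hKcl, card_baseK hn⟩
      intro y hy
      rw [mem_baseK]
      exact lt_of_le_of_lt (hxmax y hy) hxK
    · push_neg at hxK
      obtain ⟨s, hs, hsiff⟩ := hstep (σ.symm x) (by simpa using hxK)
      have hσx : σ (σ.symm x) = x := σ.apply_symm_apply x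
      have hxs : x ∉ s := by
        intro hmem
        obtain ⟨i, hi, hxi, -⟩ := (hsiff x).1 hmem
        rw [hxi] at hi
        simp at hi
      refine ⟨insert x s, ?_, ?_, ?_⟩
      · intro y hy
        by_cases hyx : y = x
        · simp [hyx]
        · have hadj : G.Adj x y := hQ (by exact_mod_cast hxQ) (by exact_mod_cast hy)
            (fun h => hyx h.symm)
          have hylt : (σ.symm y : ℕ) < (σ.symm x : ℕ) := by
            have hle := hxmax y hy
            have hne : σ.symm y ≠ σ.symm x := fun h => hyx (σ.symm.injective h)
            exact lt_of_le_of_ne hle (fun h => hne (Fin.ext h))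
          refine Finset.mem_insert_of_mem ((hsiff y).2 ⟨σ.symm y, hylt, by simp, ?_⟩)
          rw [hσx]
          exact hadj
      · intro a ha b hb hab
        simp only [Finset.coe_insert, Set.mem_insert_iff, Finset.mem_coe] at ha hb
        have hadjs : ∀ c ∈ s, G.Adj x c := by
          intro c hc
          obtain ⟨i, -, -, hadj⟩ := (hsiff c).1 hc
          rw [hσx] at hadj
          exact hadj
        rcases ha with rfl | ha <;> rcases hb with rfl | hb
        · exact absurd rfl hab
        · exact hadjs b hb
        · exact (hadjs a ha).symm
        · exact hs.1 (by exact_mod_cast ha) (by exact_mod_cast hb) hab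
      · rw [Finset.card_insert_of_notMem hxs, hs.2]

lemma dir1 {k : ℕ} (hch : IsChordal G) (hk : IsKTree k G) :
    (∀ Q : Finset V, IsMaxClique G Q → Q.card = k + 1) ∧
      (∀ S : Finset V, IsMinSep G S → S.card = k) := by
  classical
  obtain ⟨n, σ, hn, hbase, hstep⟩ := hk
  have hext := clique_ext (σ := σ) (G := G) hn hbase hstep
  have hmaxcard : ∀ Q : Finset V, IsMaxClique G Q → Q.card = k + 1 := by
    intro Q hQ
    obtain ⟨R, hQR, hRcl, hRcard⟩ := hext Q hQ.1
    rw [hQ.2 R hRcl hQR]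
    exact hRcard
  have hbound : ∀ Q : Finset V, G.IsClique (Q : Set V) → Q.card ≤ k + 1 := by
    intro Q hQ
    obtain ⟨R, hQR, -, hRcard⟩ := hext Q hQ
    calc Q.card ≤ R.card := Finset.card_le_card hQR
    _ = k + 1 := hRcard
  refine ⟨hmaxcard, ?_⟩
  intro S hS
  obtain ⟨u, v, husep, hmin⟩ := hS
  obtain ⟨hne, hnadj, huS, hvS, hsepw⟩ := husep
  have hsepIn : SepIn G Finset.univ u v S :=
    ⟨Finset.mem_univ u, Finset.mem_univ v, hne, hnadj, huS, hvS, fun p _ => hsepw p⟩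
  have hminIn : ∀ T ⊆ S, SepIn G Finset.univ u v T → T = S := by
    intro T hT hsep'
    exact hmin T hT ⟨hsep'.2.2.1, hsep'.2.2.2.1, hsep'.2.2.2.2.1, hsep'.2.2.2.2.2.1,
      fun p => hsep'.2.2.2.2.2.2 p (fun x _ => Finset.mem_univ x)⟩
  have hScl := sep_clique hch hsepIn hminIn
  -- upper bound via lemD
  have hupper : S.card ≤ k := by
    set C := cmp G Finset.univ S u with hC
    have huC : u ∈ C := mem_cmp_self (Finset.mem_univ u) huS
    have hconnC : ∀ c ∈ C, ∀ c' ∈ C, RIn G C c c' := fun c hc c' hc' => cmp_conn hc hc'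
    have hdisjC : ∀ s ∈ S, s ∉ C := fun s hs hmem => (cmp_not_mem_S hmem) hs
    have hnbrC : ∀ s ∈ S, ∃ c ∈ C, G.Adj s c := by
      intro s hs
      obtain ⟨c, hc, hadj⟩ := sep_nbrs hsepIn hminIn s hs
      exact ⟨c, hc, hadj.symm⟩
    obtain ⟨c, hcC, hcall⟩ := lemD hch C.card C le_rfl ⟨u, huC⟩ hconnC S hScl hdisjC hnbrC
    have hcS : c ∉ S := cmp_not_mem_S hcC
    have hclique : G.IsClique ((insert c S : Finset V) : Set V) := by
      intro a ha b hb hab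
      simp only [Finset.coe_insert, Set.mem_insert_iff, Finset.mem_coe] at ha hb
      rcases ha with rfl | ha <;> rcases hb with rfl | hb
      · exact absurd rfl hab
      · exact hcall b hb
      · exact (hcall a ha).symm
      · exact hScl a ha b hb hab
    have := hbound _ hclique
    rw [Finset.card_insert_of_notMem hcS] at this
    omega
  -- lower bound
  have hlower : ∀ (a b : V), SepIn G Finset.univ a b S →
      (∀ w ∈ cmp G Finset.univ S b, w ∉ baseK σ k) → k ≤ S.card := by
    intro a b hsep' hK
    set C' := cmp G Finset.univ S b with hC'
    have hbC : b ∈ C' := mem_cmp_self (Finset.mem_univ b) hsep'.2.2.2.2.2.1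
    obtain ⟨x, hxC, hxmin⟩ := Finset.exists_min_image C' (fun w => (σ.symm w : ℕ)) ⟨b, hbC⟩
    have hxK : ¬ ((σ.symm x : ℕ) < k + 1) := fun h => hK x hxC (mem_baseK.2 h)
    push_neg at hxK
    obtain ⟨s, hs, hsiff⟩ := hstep (σ.symm x) (by simpa using hxK)
    have hσx : σ (σ.symm x) = x := σ.apply_symm_apply x
    have hsub : s ⊆ S := by
      intro m hm
      obtain ⟨i, hi, hmi, hadj⟩ := (hsiff m).1 hm
      rw [hσx] at hadj
      by_contra hmS
      have hmC : m ∈ C' := cmp_adj hxC hadj (Finset.mem_univ m) hmS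
      have := hxmin m hmC
      rw [hmi] at this
      simp only [Equiv.symm_apply_apply] at this
      omega
    calc k = s.card := hs.2.symm
    _ ≤ S.card := Finset.card_le_card hsub
  have hcross := sep_no_cross hsepIn
  have hdich : (∀ w ∈ cmp G Finset.univ S v, w ∉ baseK σ k) ∨
      (∀ w ∈ cmp G Finset.univ S u, w ∉ baseK σ k) := by
    by_contra hcon
    push_neg at hcon
    obtain ⟨⟨a, haC, haK⟩, ⟨b, hbC, hbK⟩⟩ := hcon
    obtain ⟨hab, hnadj'⟩ := hcross b hbC a haC
    exact hnadj' (baseK_clique hbase b hbK a haK hab)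
  have hlow : k ≤ S.card := by
    rcases hdich with h | h
    · exact hlower u v hsepIn h
    · exact hlower v u hsepIn.symm h
  omega

end Dir1

end KTreeProof
namespace KTreeProof

open Paper SimpleGraph Walk Finset

set_option linter.unusedSectionVars false
set_option maxHeartbeats 1000000

variable {V : Type} [DecidableEq V] {G : SimpleGraph V}

/-- `Q` is a maximal clique within the vertex set `A`. -/
def MaxCliqueIn (G : SimpleGraph V) (A Q : Finset V) : Prop :=
  Q ⊆ A ∧ G.IsClique (Q : Set V) ∧
    ∀ R : Finset V, R ⊆ A → G.IsClique (R : Set V) → Q ⊆ R → Q = R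

lemma ext_cliqueIn {A Q : Finset V} (hQA : Q ⊆ A) (hQ : G.IsClique (Q : Set V)) :
    ∃ R, Q ⊆ R ∧ MaxCliqueIn G A R := by
  classical
  set coll := A.powerset.filter (fun R : Finset V => G.IsClique (R : Set V) ∧ Q ⊆ R) with hcoll
  have hmem : ∀ R, R ∈ coll ↔ R ⊆ A ∧ G.IsClique (R : Set V) ∧ Q ⊆ R := by
    intro R; simp [hcoll, Finset.mem_filter, Finset.mem_powerset]
  have hne : coll.Nonempty := ⟨Q, (hmem Q).2 ⟨hQA, hQ, Finset.Subset.refl Q⟩⟩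
  obtain ⟨R, hR, hRmax⟩ := Finset.exists_max_image coll Finset.card hne
  rw [hmem] at hR
  refine ⟨R, hR.2.2, hR.1, hR.2.1, ?_⟩
  intro R' hR'A hR'cl hRR'
  have : R'.card ≤ R.card := hRmax R' ((hmem R').2 ⟨hR'A, hR'cl, hR.2.2.trans hRR'⟩)
  exact Finset.eq_of_subset_of_card_le hRR' this

/-- The main construction: build the k-tree ordering as a list. -/
lemma buildList {k : ℕ} (hch : IsChordal G) :
    ∀ (N : ℕ) (A : Finset V), A.card ≤ N → A.Nonempty →
      (∀ a ∈ A, ∀ b ∈ A, RIn G A a b) →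
      (∀ Q : Finset V, MaxCliqueIn G A Q → Q.card = k + 1) →
      (∀ u v T, SepIn G A u v T → (∀ T' ⊆ T, SepIn G A u v T' → T' = T) → T.card = k) →
      ∃ l : List V, l.Nodup ∧ l.toFinset = A ∧ k + 1 ≤ l.length ∧
        (∀ (i j : ℕ) (hil : i < l.length) (hjl : j < l.length), i < j → j < k + 1 →
          G.Adj (l.get ⟨i, hil⟩) (l.get ⟨j, hjl⟩)) ∧
        (∀ (j : ℕ) (hjl : j < l.length), k + 1 ≤ j →
          ∃ s : Finset V, G.IsNClique k s ∧
            ∀ w : V, w ∈ s ↔ ∃ (i : ℕ) (hil : i < l.length), i < j ∧ w = l.get ⟨i, hil⟩ ∧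
              G.Adj (l.get ⟨j, hjl⟩) w) := by
  classical
  intro N
  induction N with
  | zero =>
    intro A hA hAne
    exact absurd (Finset.card_eq_zero.1 (Nat.le_zero.1 hA)) (Finset.nonempty_iff_ne_empty.1 hAne)
  | succ N ih =>
    intro A hA hAne hconn hclq hsep
    -- A has at least k+1 vertices
    obtain ⟨R0, -, hR0⟩ := ext_cliqueIn (G := G) (A := A) (Finset.empty_subset A)
      (by simp [SimpleGraph.IsClique])
    have hR0card : R0.card = k + 1 := hclq R0 hR0
    have hAk : k + 1 ≤ A.card := hR0card ▸ Finset.card_le_card hR0.1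
    by_cases hAcard : A.card = k + 1
    · -- base case : A is a clique
      have hAeq : R0 = A := Finset.eq_of_subset_of_card_le hR0.1 (by omega)
      have hAcl : G.IsClique (A : Set V) := hAeq ▸ hR0.2.1
      refine ⟨A.toList, A.nodup_toList, A.toList_toFinset, ?_, ?_, ?_⟩
      · rw [Finset.length_toList]; omega
      · intro i j hil hjl hij hj
        have hmemi : A.toList.get ⟨i, hil⟩ ∈ A := by
          rw [← Finset.mem_toList]; exact List.get_mem _ _
        have hmemj : A.toList.get ⟨j, hjl⟩ ∈ A := by
          rw [← Finset.mem_toList]; exact List.get_mem _ _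
        have hne' : A.toList.get ⟨i, hil⟩ ≠ A.toList.get ⟨j, hjl⟩ := by
          intro h
          have := (List.Nodup.get_inj_iff A.nodup_toList).1 h
          simp only [Fin.mk.injEq] at this
          omega
        exact hAcl (by exact_mod_cast hmemi) (by exact_mod_cast hmemj) hne'
      · intro j hjl hj
        rw [Finset.length_toList] at hjl
        omega
    · -- inductive step
      have hAgt : k + 1 < A.card := by omega
      -- A is not complete
      have hnotcomp : ¬ ∀ a ∈ A, ∀ b ∈ A, a ≠ b → G.Adj a b := by
        intro hcomp
        have hAcl : G.IsClique (A : Set V) := by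
          intro a ha b hb hab
          exact hcomp a (by exact_mod_cast ha) b (by exact_mod_cast hb) hab
        have : A.card = k + 1 := hclq A ⟨Finset.Subset.refl A, hAcl,
          fun R hRA _ hAR => Finset.Subset.antisymm hAR hRA⟩
        omega
      rcases dirac hch A.card A le_rfl hAne with hcomp | ⟨x, hxA, y, hyA, hxy, hnxy, hsx, hsy⟩
      · exact absurd hcomp hnotcomp
      -- the neighbourhood of x in A
      set Nx := A.filter (fun w => G.Adj x w) with hNx
      have hmemNx : ∀ w, w ∈ Nx ↔ w ∈ A ∧ G.Adj x w := by
        intro w; simp [hNx]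
      have hxNx : x ∉ Nx := fun h => G.irrefl ((hmemNx x).1 h).2
      have hyNx : y ∉ Nx := fun h => hnxy ((hmemNx y).1 h).2
      have hNxA : Nx ⊆ A := Finset.filter_subset _ _
      have hNxcl : ∀ a ∈ Nx, ∀ b ∈ Nx, a ≠ b → G.Adj a b := by
        intro a ha b hb hab
        rw [hmemNx] at ha hb
        exact hsx.2 a ha.1 b hb.1 ha.2 hb.2 hab
      -- N[x] is a maximal clique in A, so Nx has k vertices
      have hNxinscl : G.IsClique ((insert x Nx : Finset V) : Set V) := by
        intro a ha b hb hab
        simp only [Finset.coe_insert, Set.mem_insert_iff, Finset.mem_coe] at ha hb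
        rcases ha with rfl | ha <;> rcases hb with rfl | hb
        · exact absurd rfl hab
        · exact ((hmemNx b).1 hb).2
        · exact (((hmemNx a).1 ha).2).symm
        · exact hNxcl a ha b hb hab
      have hmaxx : ∀ R : Finset V, MaxCliqueIn G A R → x ∈ R → R = insert x Nx := by
        intro R hR hxR
        have hsub : R ⊆ insert x Nx := by
          intro r hr
          by_cases hrx : r = x
          · simp [hrx]
          · refine Finset.mem_insert_of_mem ((hmemNx r).2 ⟨hR.1 hr, ?_⟩)
            exact hR.2.1 (by exact_mod_cast hxR) (by exact_mod_cast hr) (fun h => hrx h.symm)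
        exact hR.2.2 (insert x Nx) (Finset.insert_subset hxA hNxA) hNxinscl hsub
      have hNxcard : Nx.card = k := by
        obtain ⟨R, hinsR, hRmax⟩ := ext_cliqueIn (Finset.insert_subset hxA hNxA) hNxinscl
        have hReq : R = insert x Nx := hmaxx R hRmax (hinsR (Finset.mem_insert_self x Nx))
        have := hclq R hRmax
        rw [hReq, Finset.card_insert_of_notMem hxNx] at this
        omega
      -- Nx separates x from y in A
      have hsepNx : SepIn G A x y Nx := by
        refine ⟨hxA, hyA, hxy, hnxy, hxNx, hyNx, ?_⟩
        intro p hp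
        obtain ⟨m, hadj, r, rfl⟩ := Walk.exists_eq_cons_of_ne hxy p
        refine ⟨m, by simp [support_cons], (hmemNx m).2 ⟨hp m (by simp [support_cons]), hadj⟩⟩
      -- minimality of Nx as a separator, via the separator cardinality hypothesis
      have hminNx : ∀ T ⊆ Nx, SepIn G A x y T → T = Nx := by
        intro T hTNx hT
        -- take a minimum-cardinality sub-separator of T
        set coll := T.powerset.filter (fun T' => SepIn G A x y T') with hcoll
        have hmem' : ∀ T', T' ∈ coll ↔ T' ⊆ T ∧ SepIn G A x y T' := by
          intro T'; simp [hcoll, Finset.mem_filter, Finset.mem_powerset]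
        obtain ⟨T', hT', hT'min⟩ := Finset.exists_min_image coll Finset.card
          ⟨T, (hmem' T).2 ⟨Finset.Subset.refl T, hT⟩⟩
        rw [hmem'] at hT'
        have hT'card : T'.card = k := by
          refine hsep x y T' hT'.2 ?_
          intro T'' hT'' hsepT''
          exact Finset.eq_of_subset_of_card_le hT''
            (hT'min T'' ((hmem' T'').2 ⟨hT''.trans hT'.1, hsepT''⟩))
        have : T' = Nx := Finset.eq_of_subset_of_card_le (hT'.1.trans hTNx) (by omega)
        exact Finset.Subset.antisymm hTNx (by rw [← this]; exact hT'.1.trans (Finset.Subset.refl T))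
      -- a vertex w in the component of y adjacent to all of Nx
      have hsepNx' := hsepNx.symm
      have hminNx' : ∀ T ⊆ Nx, SepIn G A y x T → T = Nx := fun T hT h => hminNx T hT h.symm
      set C := cmp G A Nx y with hC
      have hyC : y ∈ C := mem_cmp_self hyA hyNx
      obtain ⟨w, hwC, hwall⟩ := lemD hch C.card C le_rfl ⟨y, hyC⟩
        (fun c hc c' hc' => cmp_conn hc hc') Nx hNxcl
        (fun s hs hmem => (cmp_not_mem_S hmem) hs)
        (fun s hs => by
          obtain ⟨c, hc, hadj⟩ := sep_nbrs hsepNx' hminNx' s hs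
          exact ⟨c, hc, hadj.symm⟩)
      have hwx : w ≠ x := by
        rintro rfl
        exact sep_not_mem_cmp_other hsepNx' hwC
      have hwA : w ∈ A := cmp_subset hwC
      have hwNx : w ∉ Nx := cmp_not_mem_S hwC
      -- recurse on A.erase x
      set A' := A.erase x with hA'
      have hyA' : y ∈ A' := Finset.mem_erase.2 ⟨fun h => hxy h.symm, hyA⟩
      have hA'card : A'.card ≤ N := by
        have hce : A'.card = A.card - 1 := by rw [hA']; exact Finset.card_erase_of_mem hxA
        omega
      have hconn' : ∀ a ∈ A', ∀ b ∈ A', RIn G A' a b := by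
        intro a ha b hb
        obtain ⟨p, hp⟩ := hconn a (Finset.mem_of_mem_erase ha) b (Finset.mem_of_mem_erase hb)
        obtain ⟨q, hq, -⟩ := surgery hsx p.length p le_rfl
          (Finset.ne_of_mem_erase ha) (Finset.ne_of_mem_erase hb) hp
        exact ⟨q, hq⟩
      have hclq' : ∀ Q : Finset V, MaxCliqueIn G A' Q → Q.card = k + 1 := by
        intro Q hQ
        obtain ⟨R, hQR, hRmax⟩ := ext_cliqueIn (hQ.1.trans (Finset.erase_subset x A)) hQ.2.1
        by_cases hxR : x ∈ R
        · -- impossible : then Q ⊆ Nx and insert w Q is a bigger clique in A'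
          exfalso
          have hReq : R = insert x Nx := hmaxx R hRmax hxR
          have hQNx : Q ⊆ Nx := by
            intro q hq
            have := hQR hq
            rw [hReq, Finset.mem_insert] at this
            rcases this with rfl | h
            · exact absurd (hQ.1 hq) (Finset.notMem_erase q A)
            · exact h
          have hwQ : w ∉ Q := fun h => hwNx (hQNx h)
          have hinscl : G.IsClique ((insert w Q : Finset V) : Set V) := by
            intro a ha b hb hab
            simp only [Finset.coe_insert, Set.mem_insert_iff, Finset.mem_coe] at ha hb
            rcases ha with rfl | ha <;> rcases hb with rfl | hb
            · exact absurd rfl hab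
            · exact hwall b (hQNx hb)
            · exact (hwall a (hQNx ha)).symm
            · exact hQ.2.1 (by exact_mod_cast ha) (by exact_mod_cast hb) hab
          have hinsA' : insert w Q ⊆ A' := Finset.insert_subset
            (Finset.mem_erase.2 ⟨hwx, hwA⟩) hQ.1
          have := hQ.2.2 (insert w Q) hinsA' hinscl (Finset.subset_insert w Q)
          exact hwQ (this ▸ Finset.mem_insert_self w Q)
        · have hRA' : R ⊆ A' := by
            intro r hr
            refine Finset.mem_erase.2 ⟨fun h => hxR (h ▸ hr), hRmax.1 hr⟩
          have := hQ.2.2 R hRA' hRmax.2.1 hQR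
          rw [this]
          exact hclq R hRmax
      have hsep' : ∀ u v T, SepIn G A' u v T →
          (∀ T' ⊆ T, SepIn G A' u v T' → T' = T) → T.card = k := by
        intro u v T hT hTmin
        obtain ⟨huA', hvA', huv, hnuv, huT, hvT, hTsep⟩ := hT
        have hsepA : SepIn G A u v T := by
          refine ⟨Finset.mem_of_mem_erase huA', Finset.mem_of_mem_erase hvA', huv, hnuv,
            huT, hvT, ?_⟩
          intro p hp
          obtain ⟨q, hq, hqsupp⟩ := surgery hsx p.length p le_rfl
            (Finset.ne_of_mem_erase huA') (Finset.ne_of_mem_erase hvA') hp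
          obtain ⟨z, hz, hzT⟩ := hTsep q hq
          exact ⟨z, hqsupp z hz, hzT⟩
        refine hsep u v T hsepA ?_
        intro T' hT'T hT'
        refine hTmin T' hT'T ?_
        refine ⟨huA', hvA', huv, hnuv, fun h => huT (hT'T h), fun h => hvT (hT'T h), ?_⟩
        intro p hp
        exact hT'.2.2.2.2.2.2 p (hp.mono (Finset.erase_subset x A))
      obtain ⟨l', hnd', htf', hlen', hbase', hstep'⟩ := ih A' hA'card ⟨y, hyA'⟩ hconn'
        hclq' hsep'
      have hxl' : x ∉ l' := by
        intro h
        have : x ∈ A' := htf' ▸ List.mem_toFinset.2 h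
        exact Finset.notMem_erase x A this
      refine ⟨l' ++ [x], ?_, ?_, ?_, ?_, ?_⟩
      · refine List.Nodup.append hnd' (List.nodup_singleton x) ?_
        intro a ha hb
        simp only [List.mem_singleton] at hb
        subst hb
        exact hxl' ha
      · rw [List.toFinset_append, htf']
        simp only [List.toFinset_cons, List.toFinset_nil, insert_empty_eq]
        rw [Finset.union_comm, hA', ← Finset.insert_eq]
        exact Finset.insert_erase hxA
      · simp only [List.length_append, List.length_singleton]
        omega
      · intro i j hil hjl hij hj
        have hjl' : j < l'.length := by omega
        have hil' : i < l'.length := by omega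
        have hgeti : (l' ++ [x]).get ⟨i, hil⟩ = l'.get ⟨i, hil'⟩ := by
          simp [List.getElem_append_left hil']
        have hgetj : (l' ++ [x]).get ⟨j, hjl⟩ = l'.get ⟨j, hjl'⟩ := by
          simp [List.getElem_append_left hjl']
        rw [hgeti, hgetj]
        exact hbase' i j hil' hjl' hij hj
      · intro j hjl hj
        have hjl2 : j < l'.length + 1 := by simpa using hjl
        by_cases hjlt : j < l'.length
        · obtain ⟨s, hs, hsiff⟩ := hstep' j hjlt hj
          refine ⟨s, hs, ?_⟩
          intro v'
          have hgetj : (l' ++ [x]).get ⟨j, by simp; omega⟩ = l'.get ⟨j, hjlt⟩ := by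
            simp [List.getElem_append_left hjlt]
          rw [hsiff v']
          constructor
          · rintro ⟨i, hil', hij, rfl, hadj⟩
            refine ⟨i, by simp; omega, hij, ?_, ?_⟩
            · simp [List.getElem_append_left hil']
            · rw [hgetj]
              exact hadj
          · rintro ⟨i, hil, hij, rfl, hadj⟩
            have hil' : i < l'.length := by omega
            refine ⟨i, hil', hij, ?_, ?_⟩
            · simp [List.getElem_append_left hil']
            · rw [← hgetj]
              exact hadj
        · -- j = l'.length : the vertex is x, its earlier neighbourhood is Nx
          have hjeq : j = l'.length := by omega
          have hgetx : (l' ++ [x]).get ⟨j, hjl⟩ = x := by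
            subst hjeq
            simp
          refine ⟨Nx, ⟨fun a ha b hb hab =>
            hNxcl a (by exact_mod_cast ha) b (by exact_mod_cast hb) hab, hNxcard⟩, ?_⟩
          intro v'
          rw [hmemNx]
          constructor
          · rintro ⟨hv'A, hadj⟩
            have hv'x : v' ≠ x := fun h => G.irrefl (h ▸ hadj)
            have hv'l' : v' ∈ l' := by
              rw [← List.mem_toFinset, htf']
              exact Finset.mem_erase.2 ⟨hv'x, hv'A⟩
            obtain ⟨i, hget⟩ := List.mem_iff_get.1 hv'l'
            have hi2 := i.isLt
            refine ⟨i, by simp only [List.length_append, List.length_singleton]; omega,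
              by omega, ?_, ?_⟩
            · simp only [List.get_eq_getElem, List.getElem_append_left i.2] at hget ⊢
              exact hget.symm
            · rw [hgetx]; exact hadj
          · rintro ⟨i, hil, hij, rfl, hadj⟩
            have hil' : i < l'.length := by omega
            have hmem : (l' ++ [x]).get ⟨i, hil⟩ ∈ l' := by
              have : (l' ++ [x]).get ⟨i, hil⟩ = l'.get ⟨i, hil'⟩ := by
                simp [List.getElem_append_left hil']
              rw [this]
              exact List.get_mem _ _
            have : (l' ++ [x]).get ⟨i, hil⟩ ∈ A' := htf' ▸ List.mem_toFinset.2 hmem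
            rw [hgetx] at hadj
            exact ⟨Finset.mem_of_mem_erase this, hadj⟩

end KTreeProof
namespace KTreeProof

open Paper SimpleGraph Walk Finset

set_option linter.unusedSectionVars false

variable {V : Type} [DecidableEq V] {G : SimpleGraph V}

lemma dir2 {k : ℕ} [Fintype V] (hconn : G.Connected) (hch : IsChordal G)
    (hQ : ∀ Q : Finset V, IsMaxClique G Q → Q.card = k + 1)
    (hS : ∀ S : Finset V, IsMinSep G S → S.card = k) : IsKTree k G := by
  classical
  have hne : Nonempty V := hconn.nonempty
  have hAne : (Finset.univ : Finset V).Nonempty := Finset.univ_nonempty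
  have hconn' : ∀ a ∈ (Finset.univ : Finset V), ∀ b ∈ (Finset.univ : Finset V),
      RIn G Finset.univ a b := by
    intro a _ b _
    obtain ⟨p⟩ := hconn.preconnected a b
    exact ⟨p, fun x _ => Finset.mem_univ x⟩
  have hclq : ∀ Q : Finset V, MaxCliqueIn G Finset.univ Q → Q.card = k + 1 := by
    intro Q hQ'
    exact hQ Q ⟨hQ'.2.1, fun R hR hQR => hQ'.2.2 R (Finset.subset_univ R) hR hQR⟩
  have hsep : ∀ u v T, SepIn G Finset.univ u v T →
      (∀ T' ⊆ T, SepIn G Finset.univ u v T' → T' = T) → T.card = k := by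
    intro u v T hT hTmin
    refine hS T ⟨u, v, ⟨hT.2.2.1, hT.2.2.2.1, hT.2.2.2.2.1, hT.2.2.2.2.2.1,
      fun p => hT.2.2.2.2.2.2 p (fun x _ => Finset.mem_univ x)⟩, ?_⟩
    intro T' hT'T hT'
    exact hTmin T' hT'T ⟨Finset.mem_univ u, Finset.mem_univ v, hT'.1, hT'.2.1, hT'.2.2.1,
      hT'.2.2.2.1, fun p _ => hT'.2.2.2.2 p⟩
  obtain ⟨l, hnd, htf, hlen, hbase, hstep⟩ := buildList hch (Finset.univ : Finset V).card
    Finset.univ le_rfl hAne hconn' hclq hsep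
  have hmemall : ∀ x : V, x ∈ l := fun x => by
    rw [← List.mem_toFinset, htf]; exact Finset.mem_univ x
  set σ := List.Nodup.getEquivOfForallMemList l hnd hmemall with hσ
  have hσap : ∀ i : Fin l.length, σ i = l.get i := by
    intro i
    simp [hσ, List.Nodup.getEquivOfForallMemList]
  refine ⟨l.length, σ, hlen, ?_, ?_⟩
  · intro i j hij hj
    have := hbase i j i.isLt j.isLt hij hj
    rw [hσap i, hσap j]
    simpa using this
  · intro j hj
    obtain ⟨s, hs, hsiff⟩ := hstep j j.isLt hj
    refine ⟨s, hs, ?_⟩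
    intro v
    rw [hsiff v]
    constructor
    · rintro ⟨i, hil, hij, rfl, hadj⟩
      refine ⟨⟨i, hil⟩, hij, ?_, ?_⟩
      · rw [hσap ⟨i, hil⟩]
      · rw [hσap j]
        simpa using hadj
    · rintro ⟨i, hij, rfl, hadj⟩
      refine ⟨i, i.isLt, hij, ?_, ?_⟩
      · rw [hσap i]
      · rw [hσap j] at hadj
        simpa using hadj

end KTreeProof
open Paper in
theorem stmt1 {V : Type} [Fintype V] [DecidableEq V] (k : ℕ) (G : SimpleGraph V)
    (hconn : G.Connected) (hch : IsChordal G) :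
    IsKTree k G ↔
      (∀ Q : Finset V, IsMaxClique G Q → Q.card = k + 1) ∧
        (∀ S : Finset V, IsMinSep G S → S.card = k) := by
  constructor
  · intro hk
    exact KTreeProof.dir1 hch hk
  · rintro ⟨hQ, hS⟩
    exact KTreeProof.dir2 hconn hch hQ hS
end
end

section
/- A connected chordal graph G is a k-tree if and only if its reduced clique graph C_r(G) is equal (as a graph) to its (k+1)-line graph ℓ_{k+1}(G). -/
set_option linter.unusedSectionVars false
set_option linter.unusedVariables false
set_option maxHeartbeats 800000


open Finset

noncomputable section

open Finset

namespace KTAux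

open SimpleGraph

variable {V : Type} [DecidableEq V] {G : SimpleGraph V}

/-- avoid-reachability: there is a walk from `u` to `v` avoiding the finset `T`. -/
def RA (G : SimpleGraph V) (T : Finset V) (u v : V) : Prop :=
  ∃ p : G.Walk u v, ∀ x ∈ p.support, x ∉ T

lemma RA.refl {T : Finset V} {u : V} (hu : u ∉ T) : RA G T u u :=
  ⟨Walk.nil, by simp [hu]⟩

lemma RA.notMem_left {T : Finset V} {u v : V} (h : RA G T u v) : u ∉ T := by
  obtain ⟨p, hp⟩ := h; exact hp u p.start_mem_support

lemma RA.notMem_right {T : Finset V} {u v : V} (h : RA G T u v) : v ∉ T := by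
  obtain ⟨p, hp⟩ := h; exact hp v p.end_mem_support

lemma RA.symm {T : Finset V} {u v : V} (h : RA G T u v) : RA G T v u := by
  obtain ⟨p, hp⟩ := h
  exact ⟨p.reverse, by intro x hx; rw [Walk.support_reverse] at hx; exact hp x (List.mem_reverse.1 hx)⟩

lemma RA.trans {T : Finset V} {u v w : V} (h : RA G T u v) (h' : RA G T v w) : RA G T u w := by
  obtain ⟨p, hp⟩ := h; obtain ⟨q, hq⟩ := h'
  refine ⟨p.append q, ?_⟩
  intro x hx
  rcases (Walk.mem_support_append_iff p q).1 hx with h | h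
  · exact hp x h
  · exact hq x h

lemma RA.adj_right {T : Finset V} {u v w : V} (h : RA G T u v) (hadj : G.Adj v w) (hw : w ∉ T) :
    RA G T u w := by
  obtain ⟨p, hp⟩ := h
  refine ⟨p.append (Walk.cons hadj Walk.nil), ?_⟩
  intro x hx
  rcases (Walk.mem_support_append_iff _ _).1 hx with h | h
  · exact hp x h
  · simp only [Walk.support_cons, Walk.support_nil, List.mem_cons, List.mem_singleton] at h
    rcases h with rfl | rfl | h
    · exact hp x p.end_mem_support
    · exact hw
    · cases h

/-- every vertex on a `T`-avoiding walk starting in the RA-component of `a` is itself in it. -/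
lemma RA.support_mem {T : Finset V} {a : V} :
    ∀ {u v : V} (p : G.Walk u v), RA G T a u →
      (∀ x ∈ p.support, x ∉ T) → ∀ x ∈ p.support, RA G T a x := by
  intro u v p
  induction p with
  | nil => intro h _ x hx; simp at hx; subst hx; exact h
  | @cons c d e hadj q ih =>
    intro h hp x hx
    have hd : d ∉ T := by
      apply hp; simp [Walk.support_cons]
    have hRAd : RA G T a d := h.adj_right hadj hd
    simp only [Walk.support_cons, List.mem_cons] at hx
    rcases hx with rfl | hx
    · exact h
    · exact ih hRAd (fun y hy => hp y (by simp [Walk.support_cons, hy])) x hx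

/-- first-hit lemma. -/
lemma firstHit {T : Finset V} {t : V} :
    ∀ {a y : V} (q : G.Walk a y), a ∉ T → (∀ v ∈ q.support, v ∉ T.erase t) →
      t ∈ q.support → t ≠ a → ∃ c, G.Adj c t ∧ RA G T a c := by
  intro a y q
  induction q with
  | nil =>
    intro ha _ ht hta
    simp only [Walk.support_nil, List.mem_singleton] at ht
    exact absurd ht hta
  | @cons c d e hadj q ih =>
    intro ha havoid ht hta
    by_cases hd : d = t
    · subst hd
      exact ⟨c, hadj, RA.refl ha⟩
    · have hdT : d ∉ T := by
        intro hdT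
        exact (havoid d (by simp [Walk.support_cons])) (Finset.mem_erase.2 ⟨hd, hdT⟩)
      have ht' : t ∈ q.support := by
        simp only [Walk.support_cons, List.mem_cons] at ht
        rcases ht with rfl | ht
        · exact absurd rfl hta
        · exact ht
      obtain ⟨c', hc1, hc2⟩ := ih hdT (fun v hv => havoid v (by simp [Walk.support_cons, hv]))
        ht' (fun h => hd h.symm)
      exact ⟨c', hc1, (RA.adj_right (RA.refl ha) hadj hdT).trans hc2⟩

/-- shortcut a walk around a vertex `z` whose neighbourhood (restricted to the walk) is a
clique. -/
lemma shortcut {z : V} :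
    ∀ (L : ℕ) {u v : V} (p : G.Walk u v), p.length ≤ L →
      (∀ a b, a ∈ p.support → b ∈ p.support → G.Adj z a → G.Adj z b → a ≠ b → G.Adj a b) →
      u ≠ z → v ≠ z →
      ∃ q : G.Walk u v, z ∉ q.support ∧ ∀ x ∈ q.support, x ∈ p.support := by
  intro L
  induction L with
  | zero =>
    intro u v p hlen _ hu _
    cases p with
    | nil => exact ⟨Walk.nil, by simpa using (Ne.symm hu), by simp⟩
    | cons h q => simp [Walk.length_cons] at hlen
  | succ L ih =>
    intro u v p hlen hz hu hv
    cases p with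
    | nil => exact ⟨Walk.nil, by simpa using (Ne.symm hu), by simp⟩
    | @cons _ w _ h q =>
      by_cases hw : w = z
      · subst hw
        cases q with
        | nil => exact absurd rfl hv
        | @cons _ w2 _ h2 q2 =>
          have hw2 : w2 ≠ w := fun hh => G.irrefl (hh ▸ h2)
          have hlen2 : q2.length ≤ L := by
            simp only [Walk.length_cons] at hlen; omega
          by_cases hu2 : u = w2
          · subst hu2
            obtain ⟨q', hq1, hq2⟩ := ih q2 hlen2
              (fun a b ha hb => hz a b (by simp [Walk.support_cons, ha])
                (by simp [Walk.support_cons, hb])) hu hv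
            exact ⟨q', hq1, fun x hx => by simp [Walk.support_cons, hq2 x hx]⟩
          · have hadj : G.Adj u w2 := by
              refine hz u w2 (by simp [Walk.support_cons]) (by simp [Walk.support_cons]) h.symm h2 hu2
            obtain ⟨q', hq1, hq2⟩ := ih q2 hlen2
              (fun a b ha hb => hz a b (by simp [Walk.support_cons, ha])
                (by simp [Walk.support_cons, hb])) hw2 hv
            refine ⟨Walk.cons hadj q', ?_, ?_⟩
            · simp only [Walk.support_cons, List.mem_cons, not_or]
              exact ⟨Ne.symm hu, hq1⟩
            · intro x hx
              simp only [Walk.support_cons, List.mem_cons] at hx ⊢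
              rcases hx with rfl | hx
              · left; rfl
              · right; right; exact hq2 x hx
      · have hlen1 : q.length ≤ L := by simp only [Walk.length_cons] at hlen; omega
        obtain ⟨q', hq1, hq2⟩ := ih q hlen1
          (fun a b ha hb => hz a b (by simp [Walk.support_cons, ha])
            (by simp [Walk.support_cons, hb])) hw hv
        refine ⟨Walk.cons h q', ?_, ?_⟩
        · simp only [Walk.support_cons, List.mem_cons, not_or]
          exact ⟨Ne.symm hu, hq1⟩
        · intro x hx
          simp only [Walk.support_cons, List.mem_cons] at hx ⊢
          rcases hx with rfl | hx
          · left; rfl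
          · right; exact hq2 x hx

lemma eq_of_length_zero {u v : V} (p : G.Walk u v) (h : p.length = 0) : u = v := by
  cases p with
  | nil => rfl
  | cons _ _ => simp [Walk.length_cons] at h

lemma edge_of_length_one {u v : V} (p : G.Walk u v) (h : p.length = 1) : s(u, v) ∈ p.edges := by
  cases p with
  | nil => simp at h
  | cons hadj q =>
    have h0 : q.length = 0 := by simp only [Walk.length_cons] at h; omega
    have := eq_of_length_zero q h0
    subst this
    simp


section MinWalk

variable {D : Set V} {x y : V}

lemma exists_shorter {p : G.Walk x y} {a b : V} (ha : a ∈ p.support) (hb : b ∈ p.support)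
    (hab : G.Adj a b) (hne : s(a, b) ∉ p.edges) :
    ∃ q : G.Walk x y, (∀ v ∈ q.support, v ∈ p.support) ∧ q.length < p.length := by
  have hne' : a ≠ b := hab.ne
  have hspec : (p.takeUntil a ha).append (p.dropUntil a ha) = p := p.take_spec ha
  have hlenp : (p.takeUntil a ha).length + (p.dropUntil a ha).length = p.length := by
    conv_rhs => rw [← hspec]
    rw [Walk.length_append]
  have hbmem : b ∈ (p.takeUntil a ha).support ∨ b ∈ (p.dropUntil a ha).support := by
    conv at hb => rw [← hspec]
    exact (Walk.mem_support_append_iff _ _).1 hb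
  rcases hbmem with hbt | hbd
  · set t1 := p.takeUntil a ha with ht1def
    set r := t1.dropUntil b hbt with hrdef
    have hrlen : (t1.takeUntil b hbt).length + r.length = t1.length := by
      conv_rhs => rw [← t1.take_spec hbt]
      rw [Walk.length_append]
    have hr0 : r.length ≠ 0 := fun h0 => hne' (eq_of_length_zero r h0).symm
    have hr1 : r.length ≠ 1 := by
      intro h1
      have : s(b, a) ∈ r.edges := edge_of_length_one r h1
      have : s(b, a) ∈ t1.edges := t1.edges_dropUntil_subset hbt this
      have : s(b, a) ∈ p.edges := p.edges_takeUntil_subset ha this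
      rw [Sym2.eq_swap] at this
      exact hne this
    refine ⟨(t1.takeUntil b hbt).append (Walk.cons hab.symm (p.dropUntil a ha)), ?_, ?_⟩
    · intro v hv
      rcases (Walk.mem_support_append_iff _ _).1 hv with h | h
      · exact p.support_takeUntil_subset ha (t1.support_takeUntil_subset hbt h)
      · simp only [Walk.support_cons, List.mem_cons] at h
        rcases h with rfl | h
        · exact hb
        · exact p.support_dropUntil_subset ha h
    · rw [Walk.length_append, Walk.length_cons]
      omega
  · set d1 := p.dropUntil a ha with hd1def
    set r := d1.takeUntil b hbd with hrdef
    have hrlen : r.length + (d1.dropUntil b hbd).length = d1.length := by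
      conv_rhs => rw [← d1.take_spec hbd]
      rw [Walk.length_append]
    have hr0 : r.length ≠ 0 := fun h0 => hne' (eq_of_length_zero r h0)
    have hr1 : r.length ≠ 1 := by
      intro h1
      have : s(a, b) ∈ r.edges := edge_of_length_one r h1
      have : s(a, b) ∈ d1.edges := d1.edges_takeUntil_subset hbd this
      exact hne (p.edges_dropUntil_subset ha this)
    refine ⟨(p.takeUntil a ha).append (Walk.cons hab (d1.dropUntil b hbd)), ?_, ?_⟩
    · intro v hv
      rcases (Walk.mem_support_append_iff _ _).1 hv with h | h
      · exact p.support_takeUntil_subset ha h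
      · simp only [Walk.support_cons, List.mem_cons] at h
        rcases h with rfl | h
        · exact ha
        · exact p.support_dropUntil_subset ha (d1.support_dropUntil_subset hbd h)
    · rw [Walk.length_append, Walk.length_cons]
      omega

/-- existence of a minimal (hence induced) path within a vertex set `D`. -/
lemma exists_min_walk (hD : ∃ p : G.Walk x y, ∀ v ∈ p.support, v ∈ D) :
    ∃ p : G.Walk x y, (∀ v ∈ p.support, v ∈ D) ∧ p.IsPath ∧
      (∀ a b, a ∈ p.support → b ∈ p.support → G.Adj a b → s(a, b) ∈ p.edges) ∧
      (∀ q : G.Walk x y, (∀ v ∈ q.support, v ∈ D) → p.length ≤ q.length) := by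
  classical
  set L : Set ℕ := {n : ℕ | ∃ p : G.Walk x y, (∀ v ∈ p.support, v ∈ D) ∧ p.length = n} with hLdef
  have hLne : L.Nonempty := by
    obtain ⟨p, hp⟩ := hD
    exact ⟨p.length, p, hp, rfl⟩
  obtain ⟨p₀, hp₀D, hp₀len⟩ := Nat.sInf_mem hLne
  have hmin : ∀ q : G.Walk x y, (∀ v ∈ q.support, v ∈ D) → sInf L ≤ q.length := by
    intro q hq
    exact Nat.sInf_le ⟨q, hq, rfl⟩
  set p := p₀.bypass with hpdef
  have hpD : ∀ v ∈ p.support, v ∈ D := fun v hv => hp₀D v (p₀.support_bypass_subset hv)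
  have hplen : p.length = sInf L := by
    have h1 : p.length ≤ p₀.length := p₀.length_bypass_le
    have h2 : sInf L ≤ p.length := hmin p hpD
    omega
  refine ⟨p, hpD, p₀.bypass_isPath, ?_, fun q hq => by rw [hplen]; exact hmin q hq⟩
  intro a b hap hbp hab
  by_contra hne
  obtain ⟨q, hq1, hq2⟩ := exists_shorter hap hbp hab hne
  have := hmin q (fun v hv => hpD v (hq1 v hv))
  omega

end MinWalk
section Sep

open Paper

variable [Fintype V]

/-- separation property. -/
def Sep (G : SimpleGraph V) (a b : V) (T : Finset V) : Prop :=
  ∀ p : G.Walk a b, ∃ x ∈ p.support, x ∈ T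

lemma not_RA_of_sep {a b : V} {T : Finset V} (h : Sep G a b T) : ¬ RA G T a b := by
  rintro ⟨p, hp⟩
  obtain ⟨x, hx, hxT⟩ := h p
  exact hp x hx hxT

lemma RA_of_not_sep {a b : V} {T : Finset V} (h : ¬ Sep G a b T) : RA G T a b := by
  rw [Sep] at h
  push_neg at h
  obtain ⟨p, hp⟩ := h
  exact ⟨p, fun x hx hxT => hp x hx hxT⟩

/-- a minimal separator inside a given separator. -/
lemma sep_min_subset {a b : V} (S₀ : Finset V) (hsep : Sep G a b S₀) :
    ∃ T ⊆ S₀, Sep G a b T ∧ ∀ t ∈ T, ¬ Sep G a b (T.erase t) := by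
  classical
  set F := S₀.powerset.filter (fun T => Sep G a b T) with hF
  have hne : F.Nonempty := ⟨S₀, by simp [hF, hsep]⟩
  obtain ⟨T, hTF, hTmin⟩ := F.exists_min_image Finset.card hne
  simp only [hF, Finset.mem_filter, Finset.mem_powerset] at hTF
  refine ⟨T, hTF.1, hTF.2, ?_⟩
  intro t ht hsep'
  have hmem : T.erase t ∈ F := by
    simp only [hF, Finset.mem_filter, Finset.mem_powerset]
    exact ⟨(Finset.erase_subset t T).trans hTF.1, hsep'⟩
  have := hTmin _ hmem
  have hlt : (T.erase t).card < T.card := Finset.card_erase_lt_of_mem ht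
  omega

lemma sep_full_side {a b : V} {T : Finset V} (hsep : Sep G a b T)
    (hmin : ∀ t ∈ T, ¬ Sep G a b (T.erase t)) (ha : a ∉ T) (hb : b ∉ T) :
    ∀ t ∈ T, ∃ c, G.Adj c t ∧ RA G T a c := by
  intro t ht
  obtain ⟨p, hp⟩ := RA_of_not_sep (hmin t ht)
  have htp : t ∈ p.support := by
    obtain ⟨x, hx, hxT⟩ := hsep p
    have : x = t := by
      by_contra hne
      exact hp x hx (Finset.mem_erase.2 ⟨hne, hxT⟩)
    exact this ▸ hx
  exact firstHit p ha hp htp (fun h => ha (h ▸ ht))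

lemma loop_path_length {v : V} (q : G.Walk v v) (h : q.IsPath) : q.length = 0 := by
  cases q with
  | nil => rfl
  | cons hadj q' =>
    exfalso
    rw [Walk.isPath_def, Walk.support_cons] at h
    exact (List.nodup_cons.1 h).1 q'.end_mem_support

lemma path_ends_ne {u v : V} {p : G.Walk u v} (hpath : p.IsPath) (h1 : 1 ≤ p.length) : u ≠ v := by
  intro h
  subst h
  rw [loop_path_length p hpath] at h1
  omega

lemma not_adj_ends {u v : V} {p : G.Walk u v} (hpath : p.IsPath) (h2 : 2 ≤ p.length)
    (hchord : ∀ a c, a ∈ p.support → c ∈ p.support → G.Adj a c → s(a, c) ∈ p.edges) :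
    ¬ G.Adj u v := by
  intro hadj
  have hmem := hchord u v p.start_mem_support p.end_mem_support hadj
  cases p with
  | nil => simp at h2
  | cons h q =>
    rename_i w
    rw [Walk.edges_cons, List.mem_cons] at hmem
    have hnodup := (Walk.isPath_def _).1 hpath
    rw [Walk.support_cons, List.nodup_cons] at hnodup
    rcases hmem with heq | hmemq
    · rcases Sym2.eq_iff.1 heq with ⟨-, rfl⟩ | ⟨rfl, rfl⟩
      · have := loop_path_length q (hpath.of_cons)
        rw [Walk.length_cons] at h2
        omega
      · exact G.irrefl h
    · exact hnodup.1 (q.fst_mem_support_of_mem_edges hmemq)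

lemma pen_dropUntil {x y d : V} {p : G.Walk x y} (hd : d ∈ p.support)
    (h1 : 1 ≤ (p.dropUntil d hd).length) :
    (p.dropUntil d hd).getVert ((p.dropUntil d hd).length - 1) = p.getVert (p.length - 1) := by
  have hspec := p.take_spec hd
  have hlen : (p.takeUntil d hd).length + (p.dropUntil d hd).length = p.length := by
    conv_rhs => rw [← hspec]
    rw [Walk.length_append]
  conv_rhs => rw [← hspec]
  rw [Walk.getVert_append, Walk.length_append]
  have hnl : ¬ ((p.takeUntil d hd).length + (p.dropUntil d hd).length - 1 < (p.takeUntil d hd).length) := by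
    omega
  rw [if_neg hnl]
  congr 1
  omega

lemma chord_inherit {x y d : V} {p : G.Walk x y} (hpath : p.IsPath) (hd : d ∈ p.support)
    (hchord : ∀ a c, a ∈ p.support → c ∈ p.support → G.Adj a c → s(a, c) ∈ p.edges) :
    ∀ a c, a ∈ (p.dropUntil d hd).support → c ∈ (p.dropUntil d hd).support → G.Adj a c →
      s(a, c) ∈ (p.dropUntil d hd).edges := by
  intro a c hax hcx hac
  have hspec := p.take_spec hd
  have hmem : s(a, c) ∈ p.edges :=
    hchord a c (p.support_dropUntil_subset hd hax) (p.support_dropUntil_subset hd hcx) hac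
  have hedges : p.edges = (p.takeUntil d hd).edges ++ (p.dropUntil d hd).edges := by
    conv_lhs => rw [← hspec]
    rw [Walk.edges_append]
  rw [hedges, List.mem_append] at hmem
  rcases hmem with hmem | hmem
  · exfalso
    -- a and c are both in the take part and the drop part; since p is a path this forces a = c = d
    have hnodup : ((p.takeUntil d hd).support ++ (p.dropUntil d hd).support.tail).Nodup := by
      have := (Walk.isPath_def _).1 hpath
      conv at this => rw [← hspec]
      rwa [Walk.support_append] at this
    have key : ∀ e, e ∈ (p.dropUntil d hd).support → e ∈ (p.takeUntil d hd).support → e = d := by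
      intro e he1 he2
      have hsupp : (p.dropUntil d hd).support = d :: (p.dropUntil d hd).support.tail := by
        cases hq : (p.dropUntil d hd) with
        | nil => simp
        | cons hh qq => simp [Walk.support_cons]
      rw [hsupp, List.mem_cons] at he1
      rcases he1 with rfl | he1
      · rfl
      · exact absurd he2 (fun hc => (List.nodup_append.1 hnodup).2.2 e hc e he1 rfl)
    have ha' : a = d := key a hax (Walk.fst_mem_support_of_mem_edges (p.takeUntil d hd) hmem)
    have hc' : c = d := key c hcx (Walk.snd_mem_support_of_mem_edges (p.takeUntil d hd) hmem)
    rw [ha', hc'] at hac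
    exact G.irrefl hac
  · exact hmem

end Sep

section Clique

open Paper

variable [Fintype V]

lemma Sep.symm' {a b : V} {T : Finset V} (h : Sep G a b T) : Sep G b a T := by
  intro p
  obtain ⟨x, hx, hxT⟩ := h p.reverse
  rw [Walk.support_reverse, List.mem_reverse] at hx
  exact ⟨x, hx, hxT⟩

lemma minsep_clique (hch : IsChordal G) {a b : V} {T : Finset V}
    (hsep : Sep G a b T) (hmin : ∀ t ∈ T, ¬ Sep G a b (T.erase t)) (ha : a ∉ T) (hb : b ∉ T) :
    ∀ x ∈ T, ∀ y ∈ T, x ≠ y → G.Adj x y := by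
  intro x hx y hy hxy
  by_contra hnadj
  obtain ⟨cx, hcx_adj, hcx⟩ := sep_full_side hsep hmin ha hb x hx
  obtain ⟨cy, hcy_adj, hcy⟩ := sep_full_side hsep hmin ha hb y hy
  have hminb : ∀ t ∈ T, ¬ Sep G b a (T.erase t) := fun t ht hs => hmin t ht hs.symm'
  obtain ⟨dy, hdy_adj, hdy⟩ := sep_full_side hsep.symm' hminb hb ha y hy
  obtain ⟨dx, hdx_adj, hdx⟩ := sep_full_side hsep.symm' hminb hb ha x hx
  have hC_disj : ∀ v, RA G T a v → RA G T b v → False :=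
    fun v h1 h2 => not_RA_of_sep hsep (h1.trans h2.symm)
  -- a-side walk family
  have hfam_a : ∃ p : G.Walk x y, ∀ v ∈ p.support,
      v ∈ (insert x (insert y {v | RA G T a v}) : Set V) := by
    obtain ⟨q, hq⟩ := hcx.symm.trans hcy
    refine ⟨Walk.cons hcx_adj.symm (q.append (Walk.cons hcy_adj Walk.nil)), ?_⟩
    intro v hv
    rw [Walk.support_cons, List.mem_cons] at hv
    rcases hv with rfl | hv
    · exact Set.mem_insert _ _
    rcases (Walk.mem_support_append_iff _ _).1 hv with hv | hv
    · exact Set.mem_insert_iff.2 (Or.inr (Set.mem_insert_iff.2 (Or.inr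
        (RA.support_mem q hcx hq v hv))))
    · simp only [Walk.support_cons, Walk.support_nil, List.mem_cons, List.mem_singleton] at hv
      rcases hv with rfl | rfl | h
      · exact Set.mem_insert_iff.2 (Or.inr (Set.mem_insert_iff.2 (Or.inr hcy)))
      · exact Set.mem_insert_iff.2 (Or.inr (Set.mem_insert _ _))
      · cases h
  have hfam_b : ∃ p : G.Walk y x, ∀ v ∈ p.support,
      v ∈ (insert y (insert x {v | RA G T b v}) : Set V) := by
    obtain ⟨q, hq⟩ := hdy.symm.trans hdx
    refine ⟨Walk.cons hdy_adj.symm (q.append (Walk.cons hdx_adj Walk.nil)), ?_⟩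
    intro v hv
    rw [Walk.support_cons, List.mem_cons] at hv
    rcases hv with rfl | hv
    · exact Set.mem_insert _ _
    rcases (Walk.mem_support_append_iff _ _).1 hv with hv | hv
    · exact Set.mem_insert_iff.2 (Or.inr (Set.mem_insert_iff.2 (Or.inr
        (RA.support_mem q hdy hq v hv))))
    · simp only [Walk.support_cons, Walk.support_nil, List.mem_cons, List.mem_singleton] at hv
      rcases hv with rfl | rfl | h
      · exact Set.mem_insert_iff.2 (Or.inr (Set.mem_insert_iff.2 (Or.inr hdx)))
      · exact Set.mem_insert_iff.2 (Or.inr (Set.mem_insert _ _))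
      · cases h
  obtain ⟨Pa, hPaD, hPaPath, hPaChord, -⟩ := exists_min_walk hfam_a
  obtain ⟨Pb, hPbD, hPbPath, hPbChord, -⟩ := exists_min_walk hfam_b
  have hPaD' : ∀ v ∈ Pa.support, v = x ∨ v = y ∨ RA G T a v := by
    intro v hv
    have := hPaD v hv
    simpa [Set.mem_insert_iff] using this
  have hPbD' : ∀ v ∈ Pb.support, v = x ∨ v = y ∨ RA G T b v := by
    intro v hv
    have := hPbD v hv
    rw [Set.mem_insert_iff, Set.mem_insert_iff] at this
    tauto
  have hPa2 : 2 ≤ Pa.length := by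
    rcases Nat.lt_or_ge Pa.length 2 with h | h
    · interval_cases h' : Pa.length
      · exact absurd (eq_of_length_zero Pa h') hxy
      · exact absurd (Walk.adj_of_mem_edges Pa (edge_of_length_one Pa h')) hnadj
    · exact h
  have hPb2 : 2 ≤ Pb.length := by
    rcases Nat.lt_or_ge Pb.length 2 with h | h
    · interval_cases h' : Pb.length
      · exact absurd (eq_of_length_zero Pb h').symm hxy
      · exact absurd (Walk.adj_of_mem_edges Pb (edge_of_length_one Pb h')).symm hnadj
    · exact h
  -- destructure Pa
  cases Pa with
  | nil => simp at hPa2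
  | @cons _ c1 _ h1 Pa' =>
    rw [Walk.isPath_def, Walk.support_cons, List.nodup_cons] at hPaPath
    obtain ⟨hxPa', hPa'nodup⟩ := hPaPath
    -- the cycle
    set w : G.Walk x x := Walk.cons h1 (Pa'.append Pb) with hwdef
    have hcyc : w.IsCycle := by
      rw [hwdef, Walk.cons_isCycle_iff]
      constructor
      · rw [Walk.isPath_def, Walk.support_append, List.nodup_append]
        refine ⟨hPa'nodup, ((Walk.isPath_def Pb).1 hPbPath).sublist (List.tail_sublist _), ?_⟩
        intro v hv1 v' hv2 hvv; subst hvv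
        have hv2' : v ∈ Pb.support := List.mem_of_mem_tail hv2
        have hvPa : v ∈ (Walk.cons h1 Pa').support := by
          rw [Walk.support_cons]; exact List.mem_cons_of_mem _ hv1
        rcases hPaD' v hvPa with rfl | rfl | hra
        · exact hxPa' hv1
        · have := (Walk.isPath_def Pb).1 hPbPath
          rw [Pb.support_eq_cons, List.nodup_cons] at this
          exact this.1 hv2
        · rcases hPbD' v hv2' with rfl | rfl | hrb
          · exact hxPa' hv1
          · have := (Walk.isPath_def Pb).1 hPbPath
            rw [Pb.support_eq_cons, List.nodup_cons] at this
            exact this.1 hv2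
          · exact hC_disj v hra hrb
      · intro hmem
        rw [Walk.edges_append, List.mem_append] at hmem
        rcases hmem with hmem | hmem
        · exact hxPa' (Walk.fst_mem_support_of_mem_edges Pa' hmem)
        · have hc1Pb : c1 ∈ Pb.support := Walk.snd_mem_support_of_mem_edges Pb hmem
          have hc1Pa : c1 ∈ (Walk.cons h1 Pa').support := by
            rw [Walk.support_cons]; exact List.mem_cons_of_mem _ Pa'.start_mem_support
          rcases hPaD' c1 hc1Pa with rfl | rfl | hra
          · exact G.irrefl h1
          · exact hnadj (Walk.adj_of_mem_edges Pb hmem)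
          · rcases hPbD' c1 hc1Pb with rfl | rfl | hrb
            · exact G.irrefl h1
            · exact hnadj (Walk.adj_of_mem_edges Pb hmem)
            · exact hC_disj c1 hra hrb
    have hlen4 : 4 ≤ w.length := by
      rw [hwdef, Walk.length_cons, Walk.length_append]
      rw [Walk.length_cons] at hPa2
      omega
    obtain ⟨c, d, hc, hd, hcd, hce⟩ := hch x w hcyc hlen4
    -- support and edges of w
    have hsupp : ∀ v ∈ w.support, v ∈ (Walk.cons h1 Pa').support ∨ v ∈ Pb.support := by
      intro v hv
      rw [hwdef, Walk.support_cons, List.mem_cons] at hv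
      rcases hv with rfl | hv
      · exact Or.inl (Walk.start_mem_support _)
      rcases (Walk.mem_support_append_iff _ _).1 hv with hv | hv
      · exact Or.inl (by rw [Walk.support_cons]; exact List.mem_cons_of_mem _ hv)
      · exact Or.inr hv
    have hedgesPa : (Walk.cons h1 Pa').edges ⊆ w.edges := by
      rw [hwdef, Walk.edges_cons, Walk.edges_cons, Walk.edges_append]
      intro e he
      rw [List.mem_cons] at he ⊢
      rcases he with rfl | he
      · exact Or.inl rfl
      · exact Or.inr (List.mem_append.2 (Or.inl he))
    have hedgesPb : Pb.edges ⊆ w.edges := by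
      rw [hwdef, Walk.edges_cons, Walk.edges_append]
      intro e he
      exact List.mem_cons_of_mem _ (List.mem_append.2 (Or.inr he))
    have bothPa : c ∈ (Walk.cons h1 Pa').support → d ∈ (Walk.cons h1 Pa').support → False :=
      fun h1' h2' => hce (hedgesPa (hPaChord c d h1' h2' hcd))
    have bothPb : c ∈ Pb.support → d ∈ Pb.support → False :=
      fun h1' h2' => hce (hedgesPb (hPbChord c d h1' h2' hcd))
    have cross : ∀ c' d', c' ∈ (Walk.cons h1 Pa').support → d' ∈ Pb.support →
        G.Adj c' d' → (c' ∈ Pb.support → d' ∈ Pb.support → False) →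
        (c' ∈ (Walk.cons h1 Pa').support → d' ∈ (Walk.cons h1 Pa').support → False) → False := by
      intro c' d' hc' hd' hcd' hbPb hbPa
      have hc2 : RA G T a c' := by
        rcases hPaD' c' hc' with rfl | rfl | h
        · exact absurd (fun hh dd => hbPb hh dd) (by
            intro hcon
            exact hcon Pb.end_mem_support hd')
        · exact absurd (fun hh dd => hbPb hh dd) (by
            intro hcon
            exact hcon Pb.start_mem_support hd')
        · exact h
      have hd2 : RA G T b d' := by
        rcases hPbD' d' hd' with rfl | rfl | h
        · exact absurd (fun hh dd => hbPa hh dd) (by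
            intro hcon
            exact hcon hc' (Walk.start_mem_support _))
        · exact absurd (fun hh dd => hbPa hh dd) (by
            intro hcon
            exact hcon hc' (Walk.end_mem_support _))
        · exact h
      have hd2T : d' ∉ T := hd2.notMem_right
      exact hC_disj d' (hc2.adj_right hcd' hd2T) hd2
    rcases hsupp c hc with hcPa | hcPb <;> rcases hsupp d hd with hdPa | hdPb
    · exact bothPa hcPa hdPa
    · exact cross c d hcPa hdPb hcd bothPb bothPa
    · exact cross d c hdPa hcPb hcd.symm (fun h1' h2' => bothPb h2' h1')
        (fun h1' h2' => bothPa h2' h1')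
    · exact bothPb hcPb hdPb

end Clique

section FactF

open Paper

variable [Fintype V]

/-- key induction for Fact F: in a chordal graph, if `P` is an induced path from `x'` to `t`
through the component `C`, and `t'` is adjacent to `t` and to `x'`, then `t'` is adjacent to
the penultimate vertex of `P`. -/
lemma penult_adj (hch : IsChordal G) {T : Finset V} {w0 t t' : V}
    (ht' : t' ∈ T) (hadj_tt' : G.Adj t t') :
    ∀ (L : ℕ) {x' : V} (P : G.Walk x' t), P.length ≤ L → 1 ≤ P.length → P.IsPath →
      (∀ a c, a ∈ P.support → c ∈ P.support → G.Adj a c → s(a, c) ∈ P.edges) →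
      (∀ v ∈ P.support, v = t ∨ RA G T w0 v) →
      G.Adj t' x' →
      G.Adj t' (P.getVert (P.length - 1)) := by
  intro L
  induction L with
  | zero =>
    intro x' P hL h1 _ _ _ _
    omega
  | succ L ih =>
    intro x' P hL h1 hpath hchord hD hadjx'
    rcases Nat.lt_or_ge P.length 2 with h2 | h2
    · -- length 1 : penultimate is x'
      have : P.length - 1 = 0 := by omega
      rw [this, Walk.getVert_zero]
      exact hadjx'
    · -- length ≥ 2
      have hx't : x' ≠ t := path_ends_ne hpath h1
      have hnadj : ¬ G.Adj x' t := not_adj_ends hpath h2 hchord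
      have ht'T : t' ∉ T → False := fun h => h ht'
      have ht'supp : t' ∉ P.support := by
        intro hmem
        rcases hD t' hmem with heq | hra
        · exact G.irrefl (heq ▸ hadj_tt')
        · exact hra.notMem_right ht'
      -- build the cycle t' - x' - P - t - t'
      have hx'ne : x' ≠ t' := fun h => ht'supp (h ▸ P.start_mem_support)
      set P2 : G.Walk x' t' := P.append (Walk.cons hadj_tt' Walk.nil) with hP2def
      have hP2supp : P2.support = P.support ++ [t'] := by
        rw [hP2def, Walk.support_append, Walk.support_cons, Walk.support_nil]
        rfl
      have hP2path : P2.IsPath := by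
        rw [Walk.isPath_def, hP2supp, List.nodup_append]
        exact ⟨(Walk.isPath_def P).1 hpath, List.nodup_singleton _,
          fun v hv v' hv' hvv => ht'supp (by rw [List.mem_singleton] at hv'; rw [← hv', ← hvv]; exact hv)⟩
      have hP2edges : P2.edges = P.edges ++ [s(t, t')] := by
        rw [hP2def, Walk.edges_append, Walk.edges_cons, Walk.edges_nil]
      set w : G.Walk t' t' := Walk.cons hadjx' P2 with hwdef
      have hcyc : w.IsCycle := by
        rw [hwdef, Walk.cons_isCycle_iff]
        refine ⟨hP2path, ?_⟩
        rw [hP2edges, List.mem_append, List.mem_singleton]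
        rintro (hmem | hmem)
        · exact ht'supp (Walk.fst_mem_support_of_mem_edges P hmem)
        · rcases Sym2.eq_iff.1 hmem with ⟨h1', h2'⟩ | ⟨h1', h2'⟩
          · exact G.irrefl (h1' ▸ hadj_tt')
          · exact hx't h2'
      have hlen4 : 4 ≤ w.length := by
        rw [hwdef, Walk.length_cons, hP2def, Walk.length_append, Walk.length_cons,
          Walk.length_nil]
        omega
      obtain ⟨c, d, hc, hd, hcd, hce⟩ := hch t' w hcyc hlen4
      have hwsupp : ∀ v ∈ w.support, v = t' ∨ v ∈ P.support := by
        intro v hv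
        rw [hwdef, Walk.support_cons, List.mem_cons, hP2supp, List.mem_append,
          List.mem_singleton] at hv
        tauto
      have hwedges : ∀ e, e ∈ P.edges → e ∈ w.edges := by
        intro e he
        rw [hwdef, Walk.edges_cons, hP2edges]
        exact List.mem_cons_of_mem _ (List.mem_append.2 (Or.inl he))
      have hxedge : s(t', x') ∈ w.edges := by
        rw [hwdef, Walk.edges_cons]
        exact List.mem_cons_self
      have htedge : s(t, t') ∈ w.edges := by
        rw [hwdef, Walk.edges_cons, hP2edges]
        exact List.mem_cons_of_mem _ (List.mem_append.2 (Or.inr (List.mem_singleton.2 rfl)))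
      -- the chord must be t'-d with d in the interior of P
      have main : ∀ c' d', c' = t' → d' ∈ P.support → G.Adj c' d' → s(c', d') ∉ w.edges →
          G.Adj t' (P.getVert (P.length - 1)) := by
        rintro c' d' rfl hdP hcd' hce'
        have hd_ne_x : d' ≠ x' := by
          rintro rfl
          exact hce' hxedge
        have hd_ne_t : d' ≠ t := by
          rintro rfl
          rw [Sym2.eq_swap] at hce'
          exact hce' htedge
        -- drop the prefix before d'
        set P'' := P.dropUntil d' hdP with hP''def
        have hP''path : P''.IsPath := hpath.dropUntil hdP
        have hlt : P''.length < P.length := by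
          have hspec := P.take_spec hdP
          have : (P.takeUntil d' hdP).length + P''.length = P.length := by
            conv_rhs => rw [← hspec]
            rw [Walk.length_append]
          have h0 : (P.takeUntil d' hdP).length ≠ 0 := by
            intro h0
            exact hd_ne_x (eq_of_length_zero _ h0).symm
          omega
        have hP''1 : 1 ≤ P''.length := by
          by_contra h
          push_neg at h
          have h0 : P''.length = 0 := by omega
          exact hd_ne_t (eq_of_length_zero _ h0)
        have hP''chord := chord_inherit hpath hdP hchord
        have hP''D : ∀ v ∈ P''.support, v = t ∨ RA G T w0 v :=
          fun v hv => hD v (P.support_dropUntil_subset hdP hv)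
        have := ih P'' (by omega) hP''1 hP''path hP''chord hP''D hcd'
        rwa [pen_dropUntil hdP hP''1] at this
      rcases hwsupp c hc with rfl | hcP <;> rcases hwsupp d hd with rfl | hdP
      · exact absurd rfl hcd.ne
      · exact main c d rfl hdP hcd hce
      · refine main d c rfl hcP hcd.symm ?_
        rwa [Sym2.eq_swap]
      · exact absurd (hwedges _ (hchord c d hcP hdP hcd)) hce

/-- Fact F : some vertex of the component `C` of `w0` (in `G - T`) is adjacent to all of the
clique `T`. -/
lemma fact_F (hch : IsChordal G) (T : Finset V) (w0 : V) (hw0 : w0 ∉ T)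
    (hclique : ∀ x ∈ T, ∀ y ∈ T, x ≠ y → G.Adj x y)
    (hfull : ∀ t ∈ T, ∃ c, G.Adj c t ∧ RA G T w0 c) :
    ∃ x, RA G T w0 x ∧ ∀ t ∈ T, G.Adj x t := by
  classical
  set Cfin := Finset.univ.filter (fun v => RA G T w0 v) with hCdef
  have hCne : Cfin.Nonempty := ⟨w0, by simp [hCdef, RA.refl hw0]⟩
  obtain ⟨x, hxC, hxmax⟩ := Cfin.exists_max_image (fun v => (T.filter (fun t => G.Adj v t)).card) hCne
  have hxRA : RA G T w0 x := by
    rw [hCdef] at hxC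
    simpa using hxC
  refine ⟨x, hxRA, ?_⟩
  by_contra hcon
  push_neg at hcon
  obtain ⟨t, ht, hnadjxt⟩ := hcon
  have hxt : x ≠ t := fun h => hxRA.notMem_right (h ▸ ht)
  -- a walk from x to t through the component
  have hfam : ∃ p : G.Walk x t, ∀ v ∈ p.support, v ∈ (insert t {v | RA G T w0 v} : Set V) := by
    obtain ⟨ct, hct_adj, hct⟩ := hfull t ht
    obtain ⟨q, hq⟩ := hxRA.symm.trans hct
    refine ⟨q.append (Walk.cons hct_adj Walk.nil), ?_⟩
    intro v hv
    rcases (Walk.mem_support_append_iff _ _).1 hv with hv | hv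
    · exact Set.mem_insert_iff.2 (Or.inr (RA.support_mem q hxRA hq v hv))
    · simp only [Walk.support_cons, Walk.support_nil, List.mem_cons, List.mem_singleton] at hv
      rcases hv with rfl | rfl | h
      · exact Set.mem_insert_iff.2 (Or.inr hct)
      · exact Set.mem_insert _ _
      · cases h
  obtain ⟨P, hPD, hPpath, hPchord, -⟩ := exists_min_walk hfam
  have hPD' : ∀ v ∈ P.support, v = t ∨ RA G T w0 v := by
    intro v hv
    have := hPD v hv
    rw [Set.mem_insert_iff] at this
    tauto
  have hP1 : 1 ≤ P.length := by
    by_contra h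
    push_neg at h
    have h0 : P.length = 0 := by omega
    exact hxt (eq_of_length_zero _ h0)
  -- the penultimate vertex
  have hyadj : G.Adj (P.getVert (P.length - 1)) t := by
    have h := Walk.adj_getVert_succ P (i := P.length - 1) (by omega)
    have harith : P.length - 1 + 1 = P.length := by omega
    rw [harith, Walk.getVert_length] at h
    exact h
  set y := P.getVert (P.length - 1) with hydef
  have hymem : y ∈ P.support := by
    rw [Walk.mem_support_iff_exists_getVert]
    exact ⟨P.length - 1, rfl, by omega⟩
  have hyRA : RA G T w0 y := by
    rcases hPD' y hymem with heq | h
    · rw [heq] at hyadj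
      exact absurd hyadj G.irrefl
    · exact h
  -- y is adjacent to t and to everything x is adjacent to in T
  have hsub : insert t (T.filter (fun s => G.Adj x s)) ⊆ T.filter (fun s => G.Adj y s) := by
    intro s hs
    rw [Finset.mem_insert] at hs
    rcases hs with rfl | hs
    · exact Finset.mem_filter.2 ⟨ht, hyadj⟩
    · rw [Finset.mem_filter] at hs
      obtain ⟨hsT, hsadj⟩ := hs
      have hst : s ≠ t := fun h => hnadjxt (h ▸ hsadj)
      have htt' : G.Adj t s := hclique t ht s hsT (fun h => hst h.symm)
      have := penult_adj hch hsT htt' P.length P le_rfl hP1 hPpath hPchord hPD' hsadj.symm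
      exact Finset.mem_filter.2 ⟨hsT, this.symm⟩
  have hcard : (T.filter (fun s => G.Adj x s)).card + 1 ≤ (T.filter (fun s => G.Adj y s)).card := by
    have h1 : (insert t (T.filter (fun s => G.Adj x s))).card =
        (T.filter (fun s => G.Adj x s)).card + 1 := by
      rw [Finset.card_insert_of_notMem]
      intro hmem
      exact hnadjxt (Finset.mem_filter.1 hmem).2
    rw [← h1]
    exact Finset.card_le_card hsub
  have hyC : y ∈ Cfin := by
    rw [hCdef]
    simp [hyRA]
  have := hxmax y hyC
  omega

end FactF

section Dirac

open Paper

/-- a simplicial vertex: its neighbourhood is a clique. -/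
def Simplicial (G : SimpleGraph V) (z : V) : Prop :=
  ∀ a b, G.Adj z a → G.Adj z b → a ≠ b → G.Adj a b

/-- the embedding hom from an induced subgraph. -/
def inducedHom (G : SimpleGraph V) (P : V → Prop) :
    G.comap (Subtype.val : {x // P x} → V) →g G :=
  ⟨Subtype.val, fun h => h⟩

lemma induced_chordal (hch : IsChordal G) (P : V → Prop) :
    IsChordal (G.comap (Subtype.val : {x // P x} → V)) := by
  intro v w hcyc hlen
  have hinj : Function.Injective (inducedHom G P).toFun := Subtype.val_injective
  have hcyc' : (w.map (inducedHom G P)).IsCycle :=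
    (Walk.map_isCycle_iff_of_injective hinj).2 hcyc
  have hlen' : 4 ≤ (w.map (inducedHom G P)).length := by
    rwa [Walk.length_map]
  obtain ⟨a, b, ha, hb, hab, hnab⟩ := hch _ (w.map (inducedHom G P)) hcyc' hlen'
  rw [Walk.support_map, List.mem_map] at ha hb
  obtain ⟨a', ha', rfl⟩ := ha
  obtain ⟨b', hb', rfl⟩ := hb
  refine ⟨a', b', ha', hb', hab, ?_⟩
  intro hmem
  apply hnab
  rw [Walk.edges_map, List.mem_map]
  exact ⟨s(a', b'), hmem, rfl⟩

variable [Fintype V]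

lemma dirac_aux :
    ∀ (n : ℕ) (V : Type) [Fintype V] [DecidableEq V] (G : SimpleGraph V),
      Fintype.card V ≤ n → IsChordal G → ∀ a b : V, a ≠ b → ¬ G.Adj a b →
      ∃ z1 z2, z1 ≠ z2 ∧ ¬ G.Adj z1 z2 ∧ Simplicial G z1 ∧ Simplicial G z2 := by
  intro n
  induction n with
  | zero =>
    intro V _ _ G hcard _ a _ _ _
    have : 0 < Fintype.card V := Fintype.card_pos_iff.2 ⟨a⟩
    omega
  | succ n ih =>
    intro V _ _ G hcard hch a b hab hnadj
    classical
    -- a minimal separator between a and b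
    have hsep0 : Sep G a b (Finset.univ \ {a, b}) := by
      intro p
      cases p with
      | nil => exact absurd rfl hab
      | @cons _ d _ h q =>
        refine ⟨d, by simp [Walk.support_cons], ?_⟩
        simp only [Finset.mem_sdiff, Finset.mem_univ, Finset.mem_insert, Finset.mem_singleton,
          true_and]
        push_neg
        exact ⟨fun hd => G.irrefl (hd ▸ h), fun hd => hnadj (hd ▸ h)⟩
    obtain ⟨T, hTsub, hsepT, hminT⟩ := sep_min_subset _ hsep0
    have haT : a ∉ T := fun h => by simpa using (hTsub h)
    have hbT : b ∉ T := fun h => by simpa using (hTsub h)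
    have hclique := minsep_clique hch hsepT hminT haT hbT
    have hdisj : ∀ v, RA G T a v → RA G T b v → False :=
      fun v h1 h2 => not_RA_of_sep hsepT (h1.trans h2.symm)
    -- one simplicial vertex on each side
    have side : ∀ (c : V), c ∉ T → (∀ p : G.Walk c b, True) → RA G T c c → -- dummy
        True := fun _ _ _ _ => trivial
    have getside : ∀ (c : V), (c = a ∨ c = b) → c ∉ T →
        ∃ z, RA G T c z ∧ Simplicial G z := by
      intro c hc hcT
      set P : V → Prop := fun v => RA G T c v ∨ v ∈ T with hPdef
      letI : DecidablePred P := Classical.decPred P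
      set H := G.comap (Subtype.val : {x // P x} → V) with hHdef
      have hother : ∃ d : V, ¬ P d := by
        rcases hc with rfl | rfl
        · exact ⟨b, fun hPb => hPb.elim (fun h => hdisj b h (RA.refl hbT)) hbT⟩
        · exact ⟨a, fun hPa => hPa.elim (fun h => hdisj a (RA.refl haT) h) haT⟩
      obtain ⟨d, hd⟩ := hother
      have hcardH : Fintype.card {x // P x} ≤ n := by
        have := Fintype.card_subtype_lt (p := P) (x := d) hd
        omega
      have hchH : IsChordal H := induced_chordal hch P
      have hstep : ∃ z : {x // P x}, (z.val ∈ T → False) ∧ Simplicial H z := by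
        by_cases hcomp : ∀ u v : {x // P x}, u ≠ v → H.Adj u v
        · refine ⟨⟨c, Or.inl (RA.refl hcT)⟩, fun h => hcT h, ?_⟩
          intro u v _ _ huv
          exact hcomp u v huv
        · push_neg at hcomp
          obtain ⟨u, v, huv, hnuv⟩ := hcomp
          obtain ⟨z1, z2, hz12, hznadj, hs1, hs2⟩ := ih {x // P x} H hcardH hchH u v huv hnuv
          by_cases h1T : z1.val ∈ T
          · by_cases h2T : z2.val ∈ T
            · exfalso
              have : z1.val ≠ z2.val := fun h => hz12 (Subtype.ext h)
              exact hznadj (hclique z1.val h1T z2.val h2T this)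
            · exact ⟨z2, fun h => h2T h, hs2⟩
          · exact ⟨z1, fun h => h1T h, hs1⟩
      obtain ⟨z, hzT, hzsimp⟩ := hstep
      have hzRA : RA G T c z.val := z.prop.elim id (fun h => absurd h hzT)
      refine ⟨z.val, hzRA, ?_⟩
      intro x y hzx hzy hxy
      have hPx : P x := by
        by_cases hxT : x ∈ T
        · exact Or.inr hxT
        · exact Or.inl (hzRA.adj_right hzx hxT)
      have hPy : P y := by
        by_cases hyT : y ∈ T
        · exact Or.inr hyT
        · exact Or.inl (hzRA.adj_right hzy hyT)
      have := hzsimp ⟨x, hPx⟩ ⟨y, hPy⟩ hzx hzy (fun h => hxy (congrArg Subtype.val h))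
      exact this
    obtain ⟨za, hzaRA, hzasimp⟩ := getside a (Or.inl rfl) haT
    obtain ⟨zb, hzbRA, hzbsimp⟩ := getside b (Or.inr rfl) hbT
    refine ⟨za, zb, ?_, ?_, hzasimp, hzbsimp⟩
    · rintro rfl
      exact hdisj za hzaRA hzbRA
    · intro hadj
      have hzbT : zb ∉ T := hzbRA.notMem_right
      exact hdisj zb (hzaRA.adj_right hadj hzbT) hzbRA

lemma exists_simplicial (hch : IsChordal G) (hne : Nonempty V) : ∃ z, Simplicial G z := by
  classical
  by_cases hcomp : ∀ a b : V, a ≠ b → G.Adj a b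
  · exact ⟨hne.some, fun u v _ _ huv => hcomp u v huv⟩
  · push_neg at hcomp
    obtain ⟨a, b, hab, hnadj⟩ := hcomp
    obtain ⟨z, -, -, -, hz, -⟩ := dirac_aux (Fintype.card V) V G le_rfl hch a b hab hnadj
    exact ⟨z, hz⟩

end Dirac

section KTreeLemmas

open Paper

variable {k n : ℕ} {σ : Fin n ≃ V}

/-- adjacency within the initial clique. -/
lemma init_adj (hinit : ∀ i j : Fin n, (i : ℕ) < j → (j : ℕ) < k + 1 → G.Adj (σ i) (σ j))
    {i j : Fin n} (hne : i ≠ j) (hi : (i : ℕ) < k + 1) (hj : (j : ℕ) < k + 1) :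
    G.Adj (σ i) (σ j) := by
  rcases lt_or_gt_of_ne hne with h | h
  · exact hinit i j h hj
  · exact (hinit j i h hi).symm

/-- every clique of a k-tree extends to a (k+1)-clique. -/
lemma kt_clique_ext (hn : k + 1 ≤ n)
    (hinit : ∀ i j : Fin n, (i : ℕ) < j → (j : ℕ) < k + 1 → G.Adj (σ i) (σ j))
    (hatt : ∀ j : Fin n, k + 1 ≤ (j : ℕ) →
      ∃ s : Finset V, G.IsNClique k s ∧
        ∀ v : V, v ∈ s ↔ ∃ i : Fin n, (i : ℕ) < j ∧ v = σ i ∧ G.Adj (σ j) v)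
    (C : Finset V) (hC : G.IsClique (C : Set V)) :
    ∃ Q : Finset V, G.IsNClique (k + 1) Q ∧ C ⊆ Q := by
  classical
  set Q₀ : Finset V := Finset.univ.image (fun m : Fin (k+1) => σ (Fin.castLE hn m)) with hQ₀
  have hQ₀card : Q₀.card = k + 1 := by
    rw [hQ₀]
    rw [Finset.card_image_of_injective _
      (show Function.Injective (fun m : Fin (k+1) => σ (Fin.castLE hn m)) from
        fun a b h => Fin.castLE_injective hn (σ.injective h))]
    simp
  have hQ₀clique : G.IsClique (Q₀ : Set V) := by
    intro x hx y hy hxy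
    simp only [hQ₀, Finset.coe_image, Set.mem_image, Finset.mem_coe, Finset.mem_univ] at hx hy
    obtain ⟨mx, -, rfl⟩ := hx
    obtain ⟨my, -, rfl⟩ := hy
    refine init_adj hinit ?_ (by simp; omega) (by simp; omega)
    intro h
    exact hxy (by rw [h])
  have hQ₀N : G.IsNClique (k+1) Q₀ := ⟨hQ₀clique, hQ₀card⟩
  rcases C.eq_empty_or_nonempty with rfl | hCne
  · exact ⟨Q₀, hQ₀N, Finset.empty_subset _⟩
  · have himne : (C.image (fun v => σ.symm v)).Nonempty := hCne.image _
    set jmax := (C.image (fun v => σ.symm v)).max' himne with hjm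
    have hjmem : σ jmax ∈ C := by
      have := (C.image (fun v => σ.symm v)).max'_mem himne
      rw [← hjm, Finset.mem_image] at this
      obtain ⟨u, hu, hueq⟩ := this
      rw [← hueq, Equiv.apply_symm_apply]
      exact hu
    have hle : ∀ v ∈ C, σ.symm v ≤ jmax := by
      intro v hv
      exact Finset.le_max' _ _ (Finset.mem_image_of_mem _ hv)
    by_cases hcase : (jmax : ℕ) < k + 1
    · refine ⟨Q₀, hQ₀N, ?_⟩
      intro v hv
      have hvi : ((σ.symm v : Fin n) : ℕ) < k + 1 :=
        lt_of_le_of_lt (hle v hv) hcase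
      rw [hQ₀, Finset.mem_image]
      refine ⟨⟨(σ.symm v : Fin n), hvi⟩, Finset.mem_univ _, ?_⟩
      have : Fin.castLE hn ⟨(σ.symm v : Fin n), hvi⟩ = σ.symm v := by
        apply Fin.ext
        simp
      rw [this, Equiv.apply_symm_apply]
    · push_neg at hcase
      obtain ⟨s, hsNC, hsiff⟩ := hatt jmax hcase
      have hzs : σ jmax ∉ s := by
        intro hmem
        obtain ⟨i, hi, heq, -⟩ := (hsiff _).1 hmem
        have : jmax = i := σ.injective heq
        rw [this] at hi
        omega
      refine ⟨insert (σ jmax) s, ⟨?_, ?_⟩, ?_⟩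
      · rw [Finset.coe_insert, SimpleGraph.isClique_insert]
        refine ⟨hsNC.1, ?_⟩
        intro b hb _
        obtain ⟨i, hi, rfl, hadj⟩ := (hsiff b).1 hb
        exact hadj
      · rw [Finset.card_insert_of_notMem hzs, hsNC.2]
      · intro v hv
        rw [Finset.mem_insert]
        by_cases hveq : v = σ jmax
        · exact Or.inl hveq
        · refine Or.inr ((hsiff v).2 ⟨σ.symm v, ?_, (Equiv.apply_symm_apply σ v).symm, ?_⟩)
          · have h1 := hle v hv
            have h2 : σ.symm v ≠ jmax := by
              intro h
              exact hveq (by rw [← h, Equiv.apply_symm_apply])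
            have h3 : (σ.symm v : ℕ) ≠ (jmax : ℕ) := fun h => h2 (Fin.ext h)
            have h4 : (σ.symm v : ℕ) ≤ (jmax : ℕ) := h1
            omega
          · exact (hC (Finset.mem_coe.2 hv) (Finset.mem_coe.2 hjmem)
              (fun h => hveq h)).symm

/-- maximal cliques in a k-tree are exactly the (k+1)-cliques. -/
lemma kt_max_iff (hn : k + 1 ≤ n)
    (hinit : ∀ i j : Fin n, (i : ℕ) < j → (j : ℕ) < k + 1 → G.Adj (σ i) (σ j))
    (hatt : ∀ j : Fin n, k + 1 ≤ (j : ℕ) →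
      ∃ s : Finset V, G.IsNClique k s ∧
        ∀ v : V, v ∈ s ↔ ∃ i : Fin n, (i : ℕ) < j ∧ v = σ i ∧ G.Adj (σ j) v)
    (Q : Finset V) : IsMaxClique G Q ↔ G.IsNClique (k + 1) Q := by
  constructor
  · rintro ⟨hQc, hQm⟩
    obtain ⟨Q', hQ', hsub⟩ := kt_clique_ext hn hinit hatt Q hQc
    rw [hQm Q' hQ'.1 hsub]
    exact hQ'
  · rintro ⟨hQc, hQcard⟩
    refine ⟨hQc, ?_⟩
    intro R hR hsub
    obtain ⟨Q', hQ', hsub'⟩ := kt_clique_ext hn hinit hatt R hR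
    have : R.card ≤ k + 1 := by
      rw [← hQ'.2]
      exact Finset.card_le_card hsub'
    exact Finset.eq_of_subset_of_card_le hsub (by omega)

end KTreeLemmas

section KTreeSep

open Paper

variable {k n : ℕ} {σ : Fin n ≃ V}

lemma kt_sep (hn : k + 1 ≤ n)
    (hinit : ∀ i j : Fin n, (i : ℕ) < j → (j : ℕ) < k + 1 → G.Adj (σ i) (σ j))
    (hatt : ∀ j : Fin n, k + 1 ≤ (j : ℕ) →
      ∃ s : Finset V, G.IsNClique k s ∧
        ∀ v : V, v ∈ s ↔ ∃ i : Fin n, (i : ℕ) < j ∧ v = σ i ∧ G.Adj (σ j) v) :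
    ∀ (N : ℕ) (S : Finset V) (u v : V) (p : G.Walk u v),
      (∀ x ∈ p.support, (σ.symm x : ℕ) ≤ N) → (∀ x ∈ S, (σ.symm x : ℕ) ≤ N) →
      G.IsClique (S : Set V) → S.card = k → u ∉ S → v ∉ S → u ≠ v → ¬ G.Adj u v →
      (∀ x ∈ S, G.Adj u x) → (∀ x ∈ S, G.Adj v x) →
      ∃ x ∈ p.support, x ∈ S := by
  intro N
  induction N using Nat.strong_induction_on with
  | _ N ih =>
  intro S u v p hpN hSN hScl hScard huS hvS huv hnadj huA hvA
  by_cases hNk : N < k + 1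
  · exfalso
    apply hnadj
    have hu' := hpN u p.start_mem_support
    have hv' := hpN v p.end_mem_support
    have := init_adj (σ := σ) hinit (i := σ.symm u) (j := σ.symm v)
      (fun h => huv (by rw [← Equiv.apply_symm_apply σ u, h, Equiv.apply_symm_apply]))
      (by omega) (by omega)
    rwa [Equiv.apply_symm_apply, Equiv.apply_symm_apply] at this
  · push_neg at hNk
    by_cases hattain : ∃ x : V, (σ.symm x : ℕ) = N ∧ (x ∈ p.support ∨ x ∈ S)
    · obtain ⟨z, hzN, hzcase⟩ := hattain
      have hjk : k + 1 ≤ ((σ.symm z : Fin n) : ℕ) := by omega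
      obtain ⟨s, hsNC, hsiff⟩ := hatt (σ.symm z) hjk
      have hσz : σ (σ.symm z) = z := Equiv.apply_symm_apply σ z
      have key : ∀ w, G.Adj z w → (σ.symm w : ℕ) ≤ N → w ∈ s := by
        intro w hw hwN
        refine (hsiff w).2 ⟨σ.symm w, ?_, (Equiv.apply_symm_apply σ w).symm, by rwa [hσz]⟩
        have hne : σ.symm w ≠ σ.symm z := by
          intro h
          exact hw.ne' (by rw [← Equiv.apply_symm_apply σ w, h, hσz])
        have : (σ.symm w : ℕ) ≠ N := fun h => hne (Fin.ext (by rw [h, hzN]))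
        omega
      by_cases hzS : z ∈ S
      · -- z ∈ S : u and v are both in s, contradiction with u ≁ v
        have hus : u ∈ s := key u (huA z hzS).symm (hpN u p.start_mem_support)
        have hvs : v ∈ s := key v (hvA z hzS).symm (hpN v p.end_mem_support)
        exact absurd (hsNC.1 (Finset.mem_coe.2 hus) (Finset.mem_coe.2 hvs) huv) hnadj
      · have hzsupp : z ∈ p.support := by tauto
        have endcase : ∀ (u' v' : V) (p' : G.Walk u' v'),
            (∀ x ∈ p'.support, (σ.symm x : ℕ) ≤ N) → u' = z → u' ≠ v' →
            (∀ x ∈ S, G.Adj u' x) → ∃ x ∈ p'.support, x ∈ S := by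
          intro u' v' p' hp'N hu'z hu'v' hu'A
          subst hu'z
          have hSsub : S ⊆ s := by
            intro x hx
            exact key x (hu'A x hx) (hSN x hx)
          have hSeq : S = s := Finset.eq_of_subset_of_card_le hSsub
            (le_of_eq (by rw [hsNC.2, hScard]))
          cases p' with
          | nil => exact absurd rfl hu'v'
          | @cons _ d _ h q =>
            have hdmem : d ∈ (Walk.cons h q).support := by
              rw [Walk.support_cons]
              exact List.mem_cons_of_mem _ q.start_mem_support
            refine ⟨d, hdmem, ?_⟩
            rw [hSeq]
            exact key d h (hp'N d hdmem)
        by_cases hzu : z = u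
        · exact endcase u v p hpN hzu.symm huv huA
        · by_cases hzv : z = v
          · obtain ⟨x, hx, hxS⟩ := endcase v u p.reverse
              (fun x hx => hpN x (by rwa [Walk.support_reverse, List.mem_reverse] at hx))
              hzv.symm (Ne.symm huv) hvA
            rw [Walk.support_reverse, List.mem_reverse] at hx
            exact ⟨x, hx, hxS⟩
          · -- interior: shortcut around z and use the induction hypothesis
            obtain ⟨q, hqz, hqsub⟩ := shortcut p.length p le_rfl
              (fun a b ha hb hza hzb hab =>
                hsNC.1 (Finset.mem_coe.2 (key a hza (hpN a ha)))
                  (Finset.mem_coe.2 (key b hzb (hpN b hb))) hab)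
              (fun h => hzu h.symm) (fun h => hzv h.symm)
            have hidx : ∀ x : V, x ≠ z → (σ.symm x : ℕ) ≤ N → (σ.symm x : ℕ) ≤ N - 1 := by
              intro x hx hxN
              have : (σ.symm x : ℕ) ≠ N := by
                intro h
                exact hx (by rw [← Equiv.apply_symm_apply σ x, Fin.ext (h.trans hzN.symm), hσz])
              omega
            obtain ⟨x, hx, hxS⟩ := ih (N - 1) (by omega) S u v q
              (fun x hx => hidx x (fun h => hqz (h ▸ hx)) (hpN x (hqsub x hx)))
              (fun x hx => hidx x (fun h => hzS (h ▸ hx)) (hSN x hx))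
              hScl hScard huS hvS huv hnadj huA hvA
            exact ⟨x, hqsub x hx, hxS⟩
    · push_neg at hattain
      obtain ⟨x, hx, hxS⟩ := ih (N - 1) (by omega) S u v p
        (fun x hx => by
          have h1 := hpN x hx
          have h2 : (σ.symm x : ℕ) ≠ N := fun h => (hattain x h).1 hx
          omega)
        (fun x hx => by
          have h1 := hSN x hx
          have h2 : (σ.symm x : ℕ) ≠ N := fun h => (hattain x h).2 hx
          omega)
        hScl hScard huS hvS huv hnadj huA hvA
      exact ⟨x, hx, hxS⟩

end KTreeSep

section KTreeConn

open Paper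

variable {k n : ℕ} {σ : Fin n ≃ V}

lemma kt_conn (hn : k + 1 ≤ n)
    (hinit : ∀ i j : Fin n, (i : ℕ) < j → (j : ℕ) < k + 1 → G.Adj (σ i) (σ j))
    (hatt : ∀ j : Fin n, k + 1 ≤ (j : ℕ) →
      ∃ s : Finset V, G.IsNClique k s ∧
        ∀ v : V, v ∈ s ↔ ∃ i : Fin n, (i : ℕ) < j ∧ v = σ i ∧ G.Adj (σ j) v) :
    ∀ (N : ℕ) (A : Finset V) (u v : V), A.card < k → u ∉ A → v ∉ A →
      (σ.symm u : ℕ) ≤ N → (σ.symm v : ℕ) ≤ N →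
      ∃ p : G.Walk u v, ∀ x ∈ p.support, x ∉ A ∧ (σ.symm x : ℕ) ≤ N := by
  intro N
  induction N using Nat.strong_induction_on with
  | _ N ih =>
  intro A u v hA huA hvA huN hvN
  by_cases hNk : N < k + 1
  · by_cases huv : u = v
    · subst huv
      exact ⟨Walk.nil, by simp [huA, huN]⟩
    · have hadj : G.Adj u v := by
        have := init_adj (σ := σ) hinit (i := σ.symm u) (j := σ.symm v)
          (fun h => huv (by rw [← Equiv.apply_symm_apply σ u, h, Equiv.apply_symm_apply]))
          (by omega) (by omega)
        rwa [Equiv.apply_symm_apply, Equiv.apply_symm_apply] at this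
      refine ⟨Walk.cons hadj Walk.nil, ?_⟩
      intro x hx
      simp only [Walk.support_cons, Walk.support_nil, List.mem_cons, List.mem_singleton] at hx
      rcases hx with rfl | rfl | h
      · exact ⟨huA, huN⟩
      · exact ⟨hvA, hvN⟩
      · cases h
  · push_neg at hNk
    have endpoint : ∀ (u' v' : V), (σ.symm u' : ℕ) = N → (σ.symm v' : ℕ) ≤ N - 1 →
        u' ∉ A → v' ∉ A →
        ∃ p : G.Walk u' v', ∀ x ∈ p.support, x ∉ A ∧ (σ.symm x : ℕ) ≤ N := by
      intro u' v' hu'N hv'N hu'A hv'A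
      have hjk : k + 1 ≤ ((σ.symm u' : Fin n) : ℕ) := by omega
      obtain ⟨s, hsNC, hsiff⟩ := hatt (σ.symm u') hjk
      have hσu : σ (σ.symm u') = u' := Equiv.apply_symm_apply σ u'
      have hsub : ¬ s ⊆ A := by
        intro hsub
        have := Finset.card_le_card hsub
        rw [hsNC.2] at this
        omega
      obtain ⟨w, hws, hwA⟩ := Finset.not_subset.1 hsub
      obtain ⟨i, hi, hweq, hwadj⟩ := (hsiff w).1 hws
      have hwadj' : G.Adj u' w := by rwa [hσu] at hwadj
      have hwN : (σ.symm w : ℕ) ≤ N - 1 := by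
        rw [hweq, Equiv.symm_apply_apply]
        omega
      obtain ⟨q, hq⟩ := ih (N - 1) (by omega) A w v' hA hwA hv'A hwN hv'N
      refine ⟨Walk.cons hwadj' q, ?_⟩
      intro x hx
      rw [Walk.support_cons, List.mem_cons] at hx
      rcases hx with rfl | hx
      · exact ⟨hu'A, by omega⟩
      · obtain ⟨h1, h2⟩ := hq x hx
        exact ⟨h1, by omega⟩
    by_cases hu : (σ.symm u : ℕ) = N
    · by_cases hv : (σ.symm v : ℕ) = N
      · have : u = v := by
          rw [← Equiv.apply_symm_apply σ u, ← Equiv.apply_symm_apply σ v,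
            Fin.ext (hu.trans hv.symm)]
        subst this
        exact ⟨Walk.nil, by simp [huA, huN]⟩
      · exact endpoint u v hu (by omega) huA hvA
    · by_cases hv : (σ.symm v : ℕ) = N
      · obtain ⟨q, hq⟩ := endpoint v u hv (by omega) hvA huA
        refine ⟨q.reverse, ?_⟩
        intro x hx
        rw [Walk.support_reverse, List.mem_reverse] at hx
        exact hq x hx
      · obtain ⟨q, hq⟩ := ih (N - 1) (by omega) A u v hA huA hvA (by omega) (by omega)
        refine ⟨q, ?_⟩
        intro x hx
        obtain ⟨h1, h2⟩ := hq x hx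
        exact ⟨h1, by omega⟩

end KTreeConn

section Dir1

open Paper

variable [Fintype V]

theorem dir1 {k : ℕ} (G : SimpleGraph V) [DecidableEq V] (hconn : G.Connected)
    (hKT : IsKTree k G) :
    (∀ Q : Finset V, IsMaxClique G Q ↔ G.IsNClique (k + 1) Q) ∧
      ∀ Q Q' : Finset V, SeparatingPair G Q Q' ↔
        (G.IsNClique (k + 1) Q ∧ G.IsNClique (k + 1) Q' ∧ Q ≠ Q' ∧ (Q ∩ Q').card = k) := by
  obtain ⟨n, σ, hn, hinit, hatt⟩ := hKT
  have hmax := kt_max_iff (G := G) (σ := σ) hn hinit hatt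
  refine ⟨hmax, ?_⟩
  intro Q Q'
  constructor
  · rintro ⟨hQm, hQ'm, hne, hnon, hsep⟩
    have hQN := (hmax Q).1 hQm
    have hQ'N := (hmax Q').1 hQ'm
    refine ⟨hQN, hQ'N, hne, ?_⟩
    have hle : (Q ∩ Q').card ≤ k := by
      by_contra h
      push_neg at h
      have h1 : Q ∩ Q' = Q := Finset.eq_of_subset_of_card_le Finset.inter_subset_left
        (by rw [hQN.2]; omega)
      have h2 : Q ∩ Q' = Q' := Finset.eq_of_subset_of_card_le Finset.inter_subset_right
        (by rw [hQ'N.2]; omega)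
      exact hne (h1 ▸ h2)
    rcases eq_or_lt_of_le hle with heq | hlt
    · exact heq
    · exfalso
      have hQd : (Q \ Q').Nonempty := by
        rw [Finset.sdiff_nonempty]
        intro hsub
        exact hne (Finset.eq_of_subset_of_card_le hsub (by rw [hQN.2, hQ'N.2]))
      have hQ'd : (Q' \ Q).Nonempty := by
        rw [Finset.sdiff_nonempty]
        intro hsub
        exact hne (Finset.eq_of_subset_of_card_le hsub (by rw [hQN.2, hQ'N.2])).symm
      obtain ⟨u, hu⟩ := hQd
      obtain ⟨v, hv⟩ := hQ'd
      have huI : u ∉ Q ∩ Q' := fun h => (Finset.mem_sdiff.1 hu).2 (Finset.mem_inter.1 h).2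
      have hvI : v ∉ Q ∩ Q' := fun h => (Finset.mem_sdiff.1 hv).2 (Finset.mem_inter.1 h).1
      obtain ⟨p, hp⟩ := kt_conn (G := G) (σ := σ) hn hinit hatt n (Q ∩ Q') u v hlt huI hvI
        (le_of_lt (σ.symm u).isLt) (le_of_lt (σ.symm v).isLt)
      obtain ⟨x, hx, hxI⟩ := hsep u hu v hv p
      exact (hp x hx).1 hxI
  · rintro ⟨hQN, hQ'N, hne, hcard⟩
    refine ⟨(hmax Q).2 hQN, (hmax Q').2 hQ'N, hne, ?_, ?_⟩
    · rcases Nat.eq_zero_or_pos k with rfl | hk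
      · exfalso
        have hnoadj : ∀ a b : V, ¬ G.Adj a b := by
          intro a b hadj
          have hcl : G.IsClique (({a, b} : Finset V) : Set V) := by
            rw [Finset.coe_insert, Finset.coe_singleton]
            exact SimpleGraph.isClique_pair.2 (fun _ => hadj)
          obtain ⟨R, hRN, hsub⟩ := kt_clique_ext (G := G) (σ := σ) hn hinit hatt _ hcl
          have h2 : ({a, b} : Finset V).card = 2 := Finset.card_pair hadj.ne
          have h3 := Finset.card_le_card hsub
          rw [hRN.2, h2] at h3
          omega
        have hsing : ∀ a b : V, a = b := by
          intro a b
          obtain ⟨p⟩ := hconn.preconnected a b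
          cases p with
          | nil => rfl
          | cons h q => exact absurd h (hnoadj _ _)
        obtain ⟨a, rfl⟩ := Finset.card_eq_one.1 hQN.2
        obtain ⟨b, rfl⟩ := Finset.card_eq_one.1 hQ'N.2
        exact hne (by rw [hsing a b])
      · rw [← Finset.card_pos, hcard]
        exact hk
    · intro u hu v hv p
      rw [Finset.mem_sdiff] at hu hv
      have hScl : G.IsClique ((Q ∩ Q' : Finset V) : Set V) :=
        hQN.1.subset (by rw [Finset.coe_inter]; exact Set.inter_subset_left)
      have huS : u ∉ Q ∩ Q' := fun h => hu.2 (Finset.mem_inter.1 h).2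
      have hvS : v ∉ Q ∩ Q' := fun h => hv.2 (Finset.mem_inter.1 h).1
      have huv : u ≠ v := fun h => hu.2 (h ▸ hv.1)
      have huadj : ∀ x ∈ Q ∩ Q', G.Adj u x := by
        intro x hx
        exact hQN.1 (Finset.mem_coe.2 hu.1) (Finset.mem_coe.2 (Finset.mem_inter.1 hx).1)
          (fun h => hu.2 (h ▸ (Finset.mem_inter.1 hx).2))
      have hvadj : ∀ x ∈ Q ∩ Q', G.Adj v x := by
        intro x hx
        exact hQ'N.1 (Finset.mem_coe.2 hv.1) (Finset.mem_coe.2 (Finset.mem_inter.1 hx).2)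
          (fun h => hv.2 (h ▸ (Finset.mem_inter.1 hx).1))
      have hnadj : ¬ G.Adj u v := by
        intro hadj
        have hvnotin : v ∉ Q ∩ Q' := hvS
        have hunotin : u ∉ insert v (Q ∩ Q') := by
          rw [Finset.mem_insert]
          push_neg
          exact ⟨huv, huS⟩
        have hCcl : G.IsClique ((insert u (insert v (Q ∩ Q')) : Finset V) : Set V) := by
          rw [Finset.coe_insert, SimpleGraph.isClique_insert]
          constructor
          · rw [Finset.coe_insert, SimpleGraph.isClique_insert]
            exact ⟨hScl, fun b hb _ => hvadj b hb⟩
          · intro b hb _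
            rw [Finset.coe_insert, Set.mem_insert_iff] at hb
            rcases hb with rfl | hb
            · exact hadj
            · exact huadj b hb
        obtain ⟨R, hRN, hsub⟩ := kt_clique_ext (G := G) (σ := σ) hn hinit hatt _ hCcl
        have hc : (insert u (insert v (Q ∩ Q'))).card = k + 2 := by
          rw [Finset.card_insert_of_notMem hunotin, Finset.card_insert_of_notMem hvnotin,
            hcard]
        have h3 := Finset.card_le_card hsub
        rw [hRN.2, hc] at h3
        omega
      exact kt_sep (G := G) (σ := σ) hn hinit hatt n (Q ∩ Q') u v p
        (fun x _ => le_of_lt (σ.symm x).isLt) (fun x _ => le_of_lt (σ.symm x).isLt)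
        hScl hcard huS hvS huv hnadj huadj hvadj

end Dir1

section Dir2Helpers

open Paper

lemma walk_lift {P : V → Prop} :
    ∀ {u v : V} (p : G.Walk u v), (∀ x ∈ p.support, P x) → ∀ (hu : P u) (hv : P v),
    ∃ p' : (G.comap (Subtype.val : {x // P x} → V)).Walk ⟨u, hu⟩ ⟨v, hv⟩,
      p'.map (inducedHom G P) = p := by
  intro u v p
  induction p with
  | nil => intro _ hu hv; exact ⟨Walk.nil, rfl⟩
  | @cons a b c h q ih =>
    intro hp hu hv
    have hb : P b := hp b (by simp [Walk.support_cons])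
    obtain ⟨q', hq'⟩ := ih (fun x hx => hp x (by simp [Walk.support_cons, hx])) hb hv
    refine ⟨Walk.cons (by exact h) q', ?_⟩
    subst hq'; rfl

lemma image_clique {P : V → Prop} {Q' : Finset {x // P x}}
    (h : (G.comap (Subtype.val : {x // P x} → V)).IsClique (Q' : Set {x // P x})) :
    G.IsClique ((Q'.image Subtype.val : Finset V) : Set V) := by
  intro x hx y hy hxy
  simp only [Finset.coe_image, Set.mem_image, Finset.mem_coe] at hx hy
  obtain ⟨x', hx', rfl⟩ := hx
  obtain ⟨y', hy', rfl⟩ := hy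
  exact h hx' hy' (fun hc => hxy (congrArg Subtype.val hc))

lemma pull_clique {P : V → Prop} {Q' : Finset {x // P x}}
    (h : G.IsClique ((Q'.image Subtype.val : Finset V) : Set V)) :
    (G.comap (Subtype.val : {x // P x} → V)).IsClique (Q' : Set {x // P x}) := by
  intro x hx y hy hxy
  exact h (by simp only [Finset.coe_image, Set.mem_image]; exact ⟨x, hx, rfl⟩)
    (by simp only [Finset.coe_image, Set.mem_image]; exact ⟨y, hy, rfl⟩)
    (fun hc => hxy (Subtype.ext hc))

lemma lift_finset {P : V → Prop} [DecidablePred P] (Q : Finset V) (hQ : ∀ x ∈ Q, P x) :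
    (Q.subtype P).image Subtype.val = Q := by
  ext x
  simp only [Finset.mem_image, Finset.mem_subtype]
  constructor
  · rintro ⟨⟨y, hy⟩, hmem, rfl⟩
    exact hmem
  · intro hx
    exact ⟨⟨x, hQ x hx⟩, hx, rfl⟩

variable [Fintype V]

lemma exists_maxclique_superset (C : Finset V) (hC : G.IsClique (C : Set V)) :
    ∃ Q, IsMaxClique G Q ∧ C ⊆ Q := by
  classical
  set F := (Finset.univ : Finset (Finset V)).filter
    (fun R : Finset V => G.IsClique (↑R : Set V) ∧ C ⊆ R) with hF
  have hne : F.Nonempty := ⟨C, by simp [hF, hC]⟩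
  obtain ⟨Q, hQF, hQmax⟩ := F.exists_max_image Finset.card hne
  simp only [hF, Finset.mem_filter, Finset.mem_univ, true_and] at hQF
  refine ⟨Q, ⟨hQF.1, ?_⟩, hQF.2⟩
  intro R hR hsub
  have hRF : R ∈ F := by
    simp only [hF, Finset.mem_filter, Finset.mem_univ, true_and]
    exact ⟨hR, hQF.2.trans hsub⟩
  exact Finset.eq_of_subset_of_card_le hsub (hQmax R hRF)

/-- the closed neighbourhood of a simplicial vertex is a maximal clique. -/
lemma simplicial_nbhd_max [DecidableRel G.Adj] {z : V} (hz : Simplicial G z) :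
    IsMaxClique G (insert z (Finset.univ.filter (fun v => G.Adj z v))) := by
  constructor
  · rw [Finset.coe_insert, SimpleGraph.isClique_insert]
    constructor
    · intro x hx y hy hxy
      simp only [Finset.mem_coe, Finset.mem_filter] at hx hy
      exact hz x y hx.2 hy.2 hxy
    · intro b hb _
      simp only [Finset.mem_coe, Finset.mem_filter] at hb
      exact hb.2
  · intro R hR hsub
    refine Finset.Subset.antisymm hsub ?_
    intro r hr
    rw [Finset.mem_insert]
    by_cases hrz : r = z
    · exact Or.inl hrz
    · refine Or.inr (Finset.mem_filter.2 ⟨Finset.mem_univ _, ?_⟩)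
      exact hR (Finset.mem_coe.2 (hsub (Finset.mem_insert_self _ _))) (Finset.mem_coe.2 hr)
        (fun h => hrz h.symm)

/-- Subgoal B: the neighbourhood of a simplicial vertex has a second common neighbour. -/
lemma second_neighbor {k : ℕ} (hconn : G.Connected) (hch : IsChordal G)
    (Hmax : ∀ Q : Finset V, IsMaxClique G Q ↔ G.IsNClique (k + 1) Q)
    (Hsep : ∀ Q Q' : Finset V, SeparatingPair G Q Q' ↔
      (G.IsNClique (k + 1) Q ∧ G.IsNClique (k + 1) Q' ∧ Q ≠ Q' ∧ (Q ∩ Q').card = k))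
    {z : V} (hz : Simplicial G z) (hbig : k + 2 ≤ Fintype.card V) :
    ∃ w, w ≠ z ∧ ∀ x, G.Adj z x → G.Adj w x := by
  classical
  set S := Finset.univ.filter (fun v => G.Adj z v) with hSdef
  have hzS : z ∉ S := by simp [hSdef]
  have hQ0max : IsMaxClique G (insert z S) := simplicial_nbhd_max hz
  have hQ0N := (Hmax _).1 hQ0max
  have hScard : S.card = k := by
    have := hQ0N.2
    rw [Finset.card_insert_of_notMem hzS] at this
    omega
  have hSadj : ∀ x ∈ S, G.Adj z x := by
    intro x hx
    simp only [hSdef, Finset.mem_filter] at hx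
    exact hx.2
  -- a vertex outside the closed neighbourhood
  have hout : ∃ w0, w0 ∉ insert z S := by
    by_contra h
    push_neg at h
    have hsub : (Finset.univ : Finset V) ⊆ insert z S := fun x _ => h x
    have := Finset.card_le_card hsub
    rw [Finset.card_univ, hQ0N.2] at this
    omega
  obtain ⟨w0, hw0⟩ := hout
  have hw0z : w0 ≠ z := fun h => hw0 (h ▸ Finset.mem_insert_self _ _)
  have hw0S : w0 ∉ S := fun h => hw0 (Finset.mem_insert_of_mem h)
  -- S separates z from w0
  have hsep0 : Sep G z w0 S := by
    intro p
    cases p with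
    | nil => exact absurd rfl hw0z.symm
    | @cons _ d _ h q =>
      refine ⟨d, by simp [Walk.support_cons], ?_⟩
      simp only [hSdef, Finset.mem_filter, Finset.mem_univ, true_and]
      exact h
  obtain ⟨T, hTsub, hsepT, hminT⟩ := sep_min_subset S hsep0
  have hzT : z ∉ T := fun h => hzS (hTsub h)
  have hw0T : w0 ∉ T := fun h => hw0S (hTsub h)
  have hTne : T.Nonempty := by
    obtain ⟨p⟩ := hconn.preconnected z w0
    obtain ⟨x, -, hxT⟩ := hsepT p
    exact ⟨x, hxT⟩
  have hfull : ∀ t ∈ T, ∃ c, G.Adj c t ∧ RA G T w0 c :=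
    sep_full_side hsepT.symm' (fun t ht hs => hminT t ht hs.symm') hw0T hzT
  have hTclique : ∀ x ∈ T, ∀ y ∈ T, x ≠ y → G.Adj x y :=
    fun x hx y hy hxy => hz x y (hSadj x (hTsub hx)) (hSadj y (hTsub hy)) hxy
  obtain ⟨x0, hx0RA, hx0adj⟩ := fact_F hch T w0 hw0T hTclique hfull
  have hx0T : x0 ∉ T := hx0RA.notMem_right
  -- no neighbour of z is RA-reachable from w0
  have hNC : ∀ v, G.Adj z v → ¬ RA G T w0 v := by
    intro v hv hRA
    exact not_RA_of_sep hsepT ((hRA.adj_right hv.symm hzT).symm)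
  have hzRA : ¬ RA G T w0 z := by
    intro hRA
    exact not_RA_of_sep hsepT hRA.symm
  -- the second maximal clique
  have hQ1cl : G.IsClique ((insert x0 T : Finset V) : Set V) := by
    rw [Finset.coe_insert, SimpleGraph.isClique_insert]
    refine ⟨fun x hx y hy hxy => hTclique x hx y hy hxy, fun b hb _ => hx0adj b hb⟩
  obtain ⟨Q1, hQ1max, hsub1⟩ := exists_maxclique_superset _ hQ1cl
  have hQ1N := (Hmax _).1 hQ1max
  have hx0Q1 : x0 ∈ Q1 := hsub1 (Finset.mem_insert_self _ _)
  have hTQ1 : T ⊆ Q1 := fun t ht => hsub1 (Finset.mem_insert_of_mem ht)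
  have hQ1sub : ∀ q ∈ Q1, q ∈ T ∨ RA G T w0 q := by
    intro q hq
    by_cases hqT : q ∈ T
    · exact Or.inl hqT
    · by_cases hqx0 : q = x0
      · exact Or.inr (hqx0 ▸ hx0RA)
      · have hadj : G.Adj x0 q :=
          hQ1N.1 (Finset.mem_coe.2 hx0Q1) (Finset.mem_coe.2 hq) (fun h => hqx0 h.symm)
        exact Or.inr (hx0RA.adj_right hadj hqT)
  have hzQ1 : z ∉ Q1 := by
    intro h
    rcases hQ1sub z h with h' | h'
    · exact hzT h'
    · exact hzRA h'
  have hx0z : x0 ≠ z := fun h => hzRA (h ▸ hx0RA)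
  have hx0S : x0 ∉ S := fun h => hNC x0 (hSadj x0 h) hx0RA
  have hx0Q0 : x0 ∉ insert z S := by
    rw [Finset.mem_insert]
    push_neg
    exact ⟨hx0z, hx0S⟩
  have hQint : (insert z S) ∩ Q1 = T := by
    apply Finset.Subset.antisymm
    · intro q hq
      rw [Finset.mem_inter] at hq
      rcases hQ1sub q hq.2 with h | h
      · exact h
      · exfalso
        rcases Finset.mem_insert.1 hq.1 with rfl | hqS
        · exact hzRA h
        · exact hNC q (hSadj q hqS) h
    · intro t ht
      exact Finset.mem_inter.2 ⟨Finset.mem_insert_of_mem (hTsub ht), hTQ1 ht⟩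
  have hQne : insert z S ≠ Q1 := fun h => hx0Q0 (h ▸ hx0Q1)
  have hSP : SeparatingPair G (insert z S) Q1 := by
    refine ⟨hQ0max, hQ1max, hQne, ?_, ?_⟩
    · rw [hQint]
      exact hTne
    · intro u hu v hv p
      by_contra hno
      push_neg at hno
      rw [Finset.mem_sdiff] at hu hv
      have huT : u ∉ T := fun h => hu.2 (hTQ1 h)
      have hvT : v ∉ T := fun h => hv.2 (Finset.mem_insert_of_mem (hTsub h))
      have hvRA : RA G T w0 v := by
        rcases hQ1sub v hv.1 with h | h
        · exact absurd h hvT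
        · exact h
      have huRA : ¬ RA G T w0 u := by
        rcases Finset.mem_insert.1 hu.1 with rfl | huS
        · exact hzRA
        · exact hNC u (hSadj u huS)
      have havoid : ∀ x ∈ p.reverse.support, x ∉ T := by
        intro x hx
        rw [Walk.support_reverse, List.mem_reverse] at hx
        intro hxT
        exact hno x hx (by
          exact Finset.mem_inter.2 ⟨Finset.mem_insert_of_mem (hTsub hxT), hTQ1 hxT⟩)
      exact huRA (RA.support_mem p.reverse hvRA havoid u p.reverse.end_mem_support)
  have hcardT : T.card = k := by
    have := ((Hsep _ _).1 hSP).2.2.2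
    rwa [hQint] at this
  have hTS : T = S := Finset.eq_of_subset_of_card_le hTsub (by omega)
  have hSQ1 : S ⊆ Q1 := hTS ▸ hTQ1
  have hdiff : (Q1 \ S).Nonempty := by
    rw [← Finset.card_pos, Finset.card_sdiff_of_subset hSQ1, hQ1N.2, hScard]
    omega
  obtain ⟨w, hw⟩ := hdiff
  rw [Finset.mem_sdiff] at hw
  refine ⟨w, fun h => hzQ1 (h ▸ hw.1), ?_⟩
  intro x hx
  have hxS : x ∈ S := by simp [hSdef, hx]
  exact hQ1N.1 (Finset.mem_coe.2 hw.1) (Finset.mem_coe.2 (hSQ1 hxS))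
    (fun h => hw.2 (h ▸ hxS))

end Dir2Helpers

section Dir2

open Paper

lemma val_mem_image {P : V → Prop} {Q' : Finset {x // P x}} {x' : {x // P x}} :
    x'.val ∈ Q'.image Subtype.val ↔ x' ∈ Q' := by
  rw [Finset.mem_image]
  constructor
  · rintro ⟨y', hy', heq⟩
    rwa [Subtype.val_injective heq] at hy'
  · intro h
    exact ⟨x', h, rfl⟩

lemma image_val_injective {P : V → Prop} {Q' R' : Finset {x // P x}}
    (h : Q'.image Subtype.val = R'.image Subtype.val) : Q' = R' := by
  ext x'
  rw [← val_mem_image (Q' := Q'), h, val_mem_image]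

theorem dir2 : ∀ (N : ℕ) (V : Type) [Fintype V] [DecidableEq V] (G : SimpleGraph V) (k : ℕ),
    Fintype.card V ≤ N → G.Connected → IsChordal G →
    (∀ Q : Finset V, IsMaxClique G Q ↔ G.IsNClique (k + 1) Q) →
    (∀ Q Q' : Finset V, SeparatingPair G Q Q' ↔
      (G.IsNClique (k + 1) Q ∧ G.IsNClique (k + 1) Q' ∧ Q ≠ Q' ∧ (Q ∩ Q').card = k)) →
    IsKTree k G := by
  intro N
  induction N with
  | zero =>
    intro V _ _ G k hcard hconn _ _ _
    exfalso
    have : 0 < Fintype.card V := Fintype.card_pos_iff.2 hconn.nonempty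
    omega
  | succ N ih =>
    intro V _ _ G k hcard hconn hch Hmax Hsep
    classical
    obtain ⟨v0⟩ := hconn.nonempty
    have hv0cl : G.IsClique (({v0} : Finset V) : Set V) := by simp
    obtain ⟨Q0, hQ0max, -⟩ := exists_maxclique_superset _ hv0cl
    have hQ0N := (Hmax _).1 hQ0max
    have hk1 : k + 1 ≤ Fintype.card V := by
      rw [← hQ0N.2]
      exact Finset.card_le_univ Q0
    by_cases hbase : Fintype.card V = k + 1
    · -- base case : complete graph
      have hQ0univ : Q0 = Finset.univ := Finset.eq_univ_of_card _ (by rw [hQ0N.2, hbase])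
      have hcomp : ∀ a b : V, a ≠ b → G.Adj a b := by
        intro a b hab
        exact hQ0N.1 (by rw [hQ0univ]; simp) (by rw [hQ0univ]; simp) hab
      refine ⟨Fintype.card V, (Fintype.equivFin V).symm, by omega, ?_, ?_⟩
      · intro i j hij _
        refine hcomp _ _ (fun h => ?_)
        have := (Fintype.equivFin V).symm.injective h
        omega
      · intro j hj
        exfalso
        have := j.isLt
        omega
    · have hbig : k + 2 ≤ Fintype.card V := by omega
      have hk : 1 ≤ k := by
        by_contra hk0
        have hk0' : k = 0 := by omega
        subst hk0'
        have hnoadj : ∀ a b : V, ¬ G.Adj a b := by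
          intro a b hadj
          have hcl : G.IsClique (({a, b} : Finset V) : Set V) := by
            rw [Finset.coe_insert, Finset.coe_singleton]
            exact SimpleGraph.isClique_pair.2 (fun _ => hadj)
          obtain ⟨R, hRmax, hsub⟩ := exists_maxclique_superset _ hcl
          have hRN := (Hmax _).1 hRmax
          have h2 : ({a, b} : Finset V).card = 2 := Finset.card_pair hadj.ne
          have h3 := Finset.card_le_card hsub
          rw [hRN.2, h2] at h3
          omega
        obtain ⟨a, b, hab⟩ := Fintype.exists_pair_of_one_lt_card (α := V) (by omega)
        obtain ⟨p⟩ := hconn.preconnected a b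
        cases p with
        | nil => exact hab rfl
        | cons h q => exact hnoadj _ _ h
      -- simplicial vertex and its second neighbour
      obtain ⟨z, hzsimp⟩ := exists_simplicial hch hconn.nonempty
      obtain ⟨w, hwz, hwadj⟩ := second_neighbor hconn hch Hmax Hsep hzsimp hbig
      set S := Finset.univ.filter (fun v => G.Adj z v) with hSdef
      have hzS : z ∉ S := by simp [hSdef]
      have hSadj : ∀ x ∈ S, G.Adj z x := by
        intro x hx
        simp only [hSdef, Finset.mem_filter] at hx
        exact hx.2
      have hadjS : ∀ x, G.Adj z x → x ∈ S := by
        intro x hx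
        simp [hSdef, hx]
      have hQzmax : IsMaxClique G (insert z S) := simplicial_nbhd_max hzsimp
      have hQzN := (Hmax _).1 hQzmax
      have hScard : S.card = k := by
        have := hQzN.2
        rw [Finset.card_insert_of_notMem hzS] at this
        omega
      have hSclique : G.IsClique (S : Set V) :=
        fun x hx y hy hxy => hzsimp x y (hSadj x hx) (hSadj y hy) hxy
      have hwS : w ∉ S := fun h => G.irrefl (hwadj w (hSadj w h))
      have hwadjS : ∀ x ∈ S, G.Adj w x := fun x hx => hwadj x (hSadj x hx)
      -- the induced graph on V \ {z}
      set P : V → Prop := fun x => x ≠ z with hPdef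
      set G' := G.comap (Subtype.val : {x // P x} → V) with hG'def
      have hPz : ¬ P z := by simp [hPdef]
      have hcard' : Fintype.card {x // P x} ≤ N := by
        have hlt : Fintype.card {x // P x} < Fintype.card V :=
          Fintype.card_subtype_lt (p := P) (x := z) hPz
        omega
      -- connectivity of G'
      have hG'conn : G'.Connected := by
        rw [SimpleGraph.connected_iff]
        constructor
        · intro u' v'
          obtain ⟨p⟩ := hconn.preconnected u'.val v'.val
          obtain ⟨q, hqz, -⟩ := shortcut p.length p le_rfl
            (fun a b _ _ hza hzb hab => hzsimp a b hza hzb hab) u'.prop v'.prop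
          obtain ⟨q', -⟩ := walk_lift q (fun x hx => by intro hxz; exact hqz (hxz ▸ hx)) u'.prop v'.prop
          exact ⟨q'⟩
        · obtain ⟨a, b, hab⟩ := Fintype.exists_pair_of_one_lt_card (α := V) (by omega)
          by_cases haz : a = z
          · exact ⟨⟨b, fun h => hab (haz.trans h.symm)⟩⟩
          · exact ⟨⟨a, haz⟩⟩
      have hG'ch : IsChordal G' := induced_chordal hch P
      -- max cliques of G'
      have himgN : ∀ (m : ℕ) (Q' : Finset {x // P x}),
          G'.IsNClique m Q' ↔ G.IsNClique m (Q'.image Subtype.val) := by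
        intro m Q'
        constructor
        · intro h
          exact ⟨image_clique h.1, by
            rw [Finset.card_image_of_injective _ Subtype.val_injective, h.2]⟩
        · intro h
          refine ⟨pull_clique h.1, ?_⟩
          have := h.2
          rwa [Finset.card_image_of_injective _ Subtype.val_injective] at this
      have Hmax' : ∀ Q' : Finset {x // P x}, IsMaxClique G' Q' ↔ G'.IsNClique (k + 1) Q' := by
        intro Q'
        constructor
        · rintro ⟨hQ'cl, hQ'max⟩
          have hAcl : G.IsClique ((Q'.image Subtype.val : Finset V) : Set V) :=
            image_clique hQ'cl
          obtain ⟨Qh, hQhmax, hQhsub⟩ := exists_maxclique_superset _ hAcl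
          have hQhN := (Hmax _).1 hQhmax
          by_cases hzQh : z ∈ Qh
          · -- image Q' ⊆ S ; use B := insert w S
            have hAS : Q'.image Subtype.val ⊆ S := by
              intro x hx
              have hxQh := hQhsub hx
              obtain ⟨x', -, rfl⟩ := Finset.mem_image.1 hx
              exact hadjS _ (hQhN.1 (Finset.mem_coe.2 hzQh) (Finset.mem_coe.2 hxQh)
                (fun h => x'.prop h.symm))
            have hzB : ∀ x ∈ insert w S, P x := by
              intro x hx
              rcases Finset.mem_insert.1 hx with rfl | hx
              · exact hwz
              · exact fun h => hzS (h ▸ hx)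
            have hBcl : G.IsClique ((insert w S : Finset V) : Set V) := by
              rw [Finset.coe_insert, SimpleGraph.isClique_insert]
              exact ⟨hSclique, fun b hb _ => hwadjS b hb⟩
            have hBcard : (insert w S).card = k + 1 := by
              rw [Finset.card_insert_of_notMem hwS, hScard]
            have hlift : ((insert w S).subtype P).image Subtype.val = insert w S :=
              lift_finset _ hzB
            have hQ'B : Q' ⊆ (insert w S).subtype P := by
              intro x' hx'
              rw [Finset.mem_subtype]
              exact Finset.mem_insert_of_mem (hAS (val_mem_image.2 hx'))
            have hB'cl : G'.IsClique (((insert w S).subtype P : Finset {x // P x}) :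
                Set {x // P x}) := pull_clique (by rw [hlift]; exact hBcl)
            have heq := hQ'max _ hB'cl hQ'B
            rw [heq]
            refine (himgN _ _).2 ?_
            rw [hlift]
            exact ⟨hBcl, hBcard⟩
          · have hzQh' : ∀ x ∈ Qh, P x := fun x hx h => hzQh (h ▸ hx)
            have hlift : (Qh.subtype P).image Subtype.val = Qh := lift_finset _ hzQh'
            have hQ'Qh : Q' ⊆ Qh.subtype P := by
              intro x' hx'
              rw [Finset.mem_subtype]
              exact hQhsub (val_mem_image.2 hx')
            have hQh'cl : G'.IsClique ((Qh.subtype P : Finset {x // P x}) :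
                Set {x // P x}) := pull_clique (by rw [hlift]; exact hQhN.1)
            have heq := hQ'max _ hQh'cl hQ'Qh
            rw [heq]
            refine (himgN _ _).2 ?_
            rw [hlift]
            exact hQhN
        · intro hQ'N
          refine ⟨hQ'N.1, ?_⟩
          intro R' hR' hsub
          have hAN : G.IsNClique (k + 1) (Q'.image Subtype.val) := (himgN _ _).1 hQ'N
          have hAmax := (Hmax _).2 hAN
          have himgsub : Q'.image Subtype.val ⊆ R'.image Subtype.val :=
            Finset.image_subset_image hsub
          have heq := hAmax.2 _ (image_clique hR') himgsub
          have hcardeq : Q'.card = R'.card := by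
            have h1 : (Q'.image Subtype.val).card = Q'.card :=
              Finset.card_image_of_injective _ Subtype.val_injective
            have h2 : (R'.image Subtype.val).card = R'.card :=
              Finset.card_image_of_injective _ Subtype.val_injective
            rw [← h1, ← h2, heq]
          exact Finset.eq_of_subset_of_card_le hsub (le_of_eq hcardeq.symm)
      -- separating pairs of G'
      have Hsep' : ∀ Q' R' : Finset {x // P x}, SeparatingPair G' Q' R' ↔
          (G'.IsNClique (k + 1) Q' ∧ G'.IsNClique (k + 1) R' ∧ Q' ≠ R' ∧
            (Q' ∩ R').card = k) := by
        intro Q' R'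
        have hintimg : (Q'.image Subtype.val) ∩ (R'.image Subtype.val) =
            (Q' ∩ R').image Subtype.val :=
          (Finset.image_inter _ _ Subtype.val_injective).symm
        have hcardint : ((Q' ∩ R').image Subtype.val).card = (Q' ∩ R').card :=
          Finset.card_image_of_injective _ Subtype.val_injective
        constructor
        · rintro ⟨hQ'max, hR'max, hne', hnon', hsep'⟩
          have hQ'N := (Hmax' _).1 hQ'max
          have hR'N := (Hmax' _).1 hR'max
          have hQN := (himgN _ _).1 hQ'N
          have hRN := (himgN _ _).1 hR'N
          have hABne : Q'.image Subtype.val ≠ R'.image Subtype.val :=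
            fun h => hne' (image_val_injective h)
          have hSP : SeparatingPair G (Q'.image Subtype.val) (R'.image Subtype.val) := by
            refine ⟨(Hmax _).2 hQN, (Hmax _).2 hRN, hABne, ?_, ?_⟩
            · obtain ⟨x', hx'⟩ := hnon'
              exact ⟨x'.val, by rw [hintimg]; exact Finset.mem_image_of_mem _ hx'⟩
            · intro u hu v hv p
              rw [Finset.mem_sdiff] at hu hv
              obtain ⟨u', hu'Q, rfl⟩ := Finset.mem_image.1 hu.1
              obtain ⟨v', hv'R, rfl⟩ := Finset.mem_image.1 hv.1
              obtain ⟨q, hqz, hqsub⟩ := shortcut p.length p le_rfl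
                (fun a b _ _ hza hzb hab => hzsimp a b hza hzb hab) u'.prop v'.prop
              obtain ⟨q', hq'⟩ := walk_lift q (fun x hx => by
                intro hxz
                exact hqz (hxz ▸ hx)) u'.prop v'.prop
              obtain ⟨x', hx'supp, hx'I⟩ := hsep' u'
                (Finset.mem_sdiff.2 ⟨hu'Q, fun h => hu.2 (Finset.mem_image_of_mem _ h)⟩) v'
                (Finset.mem_sdiff.2 ⟨hv'R, fun h => hv.2 (Finset.mem_image_of_mem _ h)⟩) q'
              refine ⟨x'.val, ?_, ?_⟩
              · apply hqsub
                rw [← hq']; erw [Walk.support_map, List.mem_map]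
                exact ⟨x', hx'supp, rfl⟩
              · rw [hintimg]
                exact Finset.mem_image_of_mem _ hx'I
          have := ((Hsep _ _).1 hSP).2.2.2
          rw [hintimg, hcardint] at this
          exact ⟨hQ'N, hR'N, hne', this⟩
        · rintro ⟨hQ'N, hR'N, hne', hcard'⟩
          have hQN := (himgN _ _).1 hQ'N
          have hRN := (himgN _ _).1 hR'N
          have hABne : Q'.image Subtype.val ≠ R'.image Subtype.val :=
            fun h => hne' (image_val_injective h)
          have hcardAB : ((Q'.image Subtype.val) ∩ (R'.image Subtype.val)).card = k := by
            rw [hintimg, hcardint]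
            exact hcard'
          have hSP := (Hsep _ _).2 ⟨hQN, hRN, hABne, hcardAB⟩
          obtain ⟨-, -, -, -, hsepAB⟩ := hSP
          refine ⟨(Hmax' _).2 hQ'N, (Hmax' _).2 hR'N, hne', ?_, ?_⟩
          · rw [← Finset.card_pos, hcard']
            omega
          · intro u' hu' v' hv' p'
            rw [Finset.mem_sdiff] at hu' hv'
            have hu : u'.val ∈ (Q'.image Subtype.val) \ (R'.image Subtype.val) := by
              rw [Finset.mem_sdiff]
              exact ⟨Finset.mem_image_of_mem _ hu'.1, fun h => hu'.2 (val_mem_image.1 h)⟩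
            have hv : v'.val ∈ (R'.image Subtype.val) \ (Q'.image Subtype.val) := by
              rw [Finset.mem_sdiff]
              exact ⟨Finset.mem_image_of_mem _ hv'.1, fun h => hv'.2 (val_mem_image.1 h)⟩
            obtain ⟨x, hxsupp, hxI⟩ := hsepAB u'.val hu v'.val hv
              (p'.map (inducedHom G P))
            erw [Walk.support_map, List.mem_map] at hxsupp
            obtain ⟨x', hx'supp, rfl⟩ := hxsupp
            refine ⟨x', hx'supp, ?_⟩
            rw [hintimg] at hxI
            exact val_mem_image.1 hxI
      -- apply the induction hypothesis
      obtain ⟨n', σ', hn', hinit', hatt'⟩ :=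
        ih {x // P x} G' k hcard' hG'conn hG'ch Hmax' Hsep'
      -- build the new construction ordering
      refine ⟨n' + 1, ⟨fun i => if h : (i : ℕ) < n' then (σ' ⟨i, h⟩ : {x // P x}).val else z,
        fun v => if h : P v then (σ'.symm ⟨v, h⟩).castSucc else Fin.last n',
        ?_, ?_⟩, by omega, ?_, ?_⟩
      · intro i
        dsimp only
        by_cases h : (i : ℕ) < n'
        · rw [dif_pos h, dif_pos (σ' ⟨i, h⟩).prop]
          have heq : σ'.symm ⟨(σ' ⟨(i : ℕ), h⟩).val, (σ' ⟨(i : ℕ), h⟩).prop⟩ = ⟨(i : ℕ), h⟩ := by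
            rw [show (⟨(σ' ⟨(i : ℕ), h⟩).val, (σ' ⟨(i : ℕ), h⟩).prop⟩ : {x // P x}) =
              σ' ⟨(i : ℕ), h⟩ from rfl, Equiv.symm_apply_apply]
          rw [heq]
          exact Fin.ext (by simp)
        · rw [dif_neg h, dif_neg hPz]
          have hi := i.isLt
          exact Fin.ext (by simp; omega)
      · intro v
        dsimp only
        by_cases h : P v
        · rw [dif_pos h]
          have hlt : ((σ'.symm ⟨v, h⟩).castSucc : ℕ) < n' := by
            rw [Fin.coe_castSucc]
            exact (σ'.symm ⟨v, h⟩).isLt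
          rw [dif_pos hlt]
          have heq : (⟨((σ'.symm ⟨v, h⟩).castSucc : ℕ), hlt⟩ : Fin n') = σ'.symm ⟨v, h⟩ :=
            Fin.ext (by rw [Fin.coe_castSucc])
          rw [heq, Equiv.apply_symm_apply]
        · rw [dif_neg h]
          have hnl : ¬ ((Fin.last n' : Fin (n' + 1)) : ℕ) < n' := by simp
          rw [dif_neg hnl]
          simp only [hPdef, ne_eq, not_not] at h
          exact h.symm
      · -- initial clique
        intro i j hij hjk
        simp only [Equiv.coe_fn_mk]
        have hjn : (j : ℕ) < n' := by omega
        have hin : (i : ℕ) < n' := by omega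
        rw [dif_pos hin, dif_pos hjn]
        exact hinit' ⟨i, hin⟩ ⟨j, hjn⟩ hij hjk
      · -- attachment cliques
        intro j hj
        simp only [Equiv.coe_fn_mk]
        by_cases hjn : (j : ℕ) < n'
        · obtain ⟨s', hs'N, hs'iff⟩ := hatt' ⟨j, hjn⟩ hj
          refine ⟨s'.image Subtype.val, (himgN _ _).1 hs'N, ?_⟩
          intro v
          constructor
          · intro hv
            obtain ⟨v', hv', rfl⟩ := Finset.mem_image.1 hv
            obtain ⟨i', hi', hveq, hadj⟩ := (hs'iff v').1 hv'
            have hlt : ((i'.castSucc : Fin (n' + 1)) : ℕ) < n' := by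
              rw [Fin.coe_castSucc]
              exact i'.isLt
            refine ⟨i'.castSucc, ?_, ?_, ?_⟩
            · rw [Fin.coe_castSucc]
              exact hi'
            · rw [dif_pos hlt]
              have heq : (⟨((i'.castSucc : Fin (n' + 1)) : ℕ), hlt⟩ : Fin n') = i' :=
                Fin.ext (by rw [Fin.coe_castSucc])
              rw [heq, ← hveq]
            · rw [dif_pos hjn]
              exact hadj
          · rintro ⟨i, hij', hveq, hadj⟩
            have hin : (i : ℕ) < n' := by omega
            rw [dif_pos hin] at hveq
            subst hveq
            rw [dif_pos hjn] at hadj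
            rw [val_mem_image]
            exact (hs'iff _).2 ⟨⟨i, hin⟩, hij', rfl, hadj⟩
        · -- j is the last index : the new vertex z
          refine ⟨S, ⟨hSclique, hScard⟩, ?_⟩
          intro v
          constructor
          · intro hv
            have hvz : P v := fun h => hzS (h ▸ hv)
            have hlt : (((σ'.symm ⟨v, hvz⟩).castSucc : Fin (n' + 1)) : ℕ) < n' := by
              rw [Fin.coe_castSucc]
              exact (σ'.symm ⟨v, hvz⟩).isLt
            refine ⟨(σ'.symm ⟨v, hvz⟩).castSucc, by omega, ?_, ?_⟩
            · rw [dif_pos hlt]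
              have heq : (⟨(((σ'.symm ⟨v, hvz⟩).castSucc : Fin (n' + 1)) : ℕ), hlt⟩ : Fin n')
                  = σ'.symm ⟨v, hvz⟩ := Fin.ext (by rw [Fin.coe_castSucc])
              rw [heq, Equiv.apply_symm_apply]
            · rw [dif_neg hjn]
              exact hSadj v hv
          · rintro ⟨i, -, -, hadj⟩
            rw [dif_neg hjn] at hadj
            exact hadjS v hadj

end Dir2

end KTAux

open Paper in
theorem stmt6 {V : Type} [Fintype V] [DecidableEq V] (k : ℕ) (G : SimpleGraph V)
    (hconn : G.Connected) (hch : IsChordal G) :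
    IsKTree k G ↔
      ((∀ Q : Finset V, IsMaxClique G Q ↔ G.IsNClique (k + 1) Q) ∧
        ∀ Q Q' : Finset V, SeparatingPair G Q Q' ↔
          (G.IsNClique (k + 1) Q ∧ G.IsNClique (k + 1) Q' ∧ Q ≠ Q' ∧ (Q ∩ Q').card = k)) := by
  constructor
  · intro hKT
    exact KTAux.dir1 G hconn hKT
  · rintro ⟨Hmax, Hsep⟩
    exact KTAux.dir2 (Fintype.card V) V G k le_rfl hconn hch Hmax Hsep
end
end
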